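/- arXiv:1602.03367 — 10 statements merged into one kernel-verified Lean document; each statement's English description precedes it below -/
import Mathlib

section
/- Let Y be a locally convex Hausdorff topological vector space and K a closed pointed convex cone with nonempty interior. If M ⊂ −K and 0_Y ∈ M, then M − int K = −int K, and consequently WSup M = cl(−int K) \ (−int K) = WSup(−K). -/
open Set Pointwise Topology

theorem stmt2 {Y : Type*} [AddCommGroup Y] [Module ℝ Y] [TopologicalSpace Y] [IsTopologicalAddGroup Y]
    [ContinuousSMul ℝ Y] [T2Space Y] [LocallyConvexSpace ℝ Y]
    (K : Set Y) (hKcl : IsClosed K) (hKconv : Convex ℝ K)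
    (hKcone : ∀ c : ℝ, 0 < c → c • K ⊆ K) (hK0 : (0:Y) ∈ K)
    (hKpointed : K ∩ (-K) ⊆ {0}) (hKint : (interior K).Nonempty)
    (M : Set Y) (hM : M ⊆ -K) (h0 : (0:Y) ∈ M) :
    M - interior K = -(interior K) ∧
    closure (M - interior K) \ (M - interior K) =
      closure ((-K) - interior K) \ ((-K) - interior K) := by
  -- K + K ⊆ K
  have hKadd : ∀ a ∈ K, ∀ b ∈ K, a + b ∈ K := by
    intro a ha b hb
    have h2 : a + b = (2:ℝ) • ((1/2 : ℝ) • a + (1/2 : ℝ) • b) := by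
      rw [smul_add, smul_smul, smul_smul]; norm_num
    rw [h2]
    exact hKcone 2 (by norm_num) ⟨_, hKconv ha hb (by norm_num) (by norm_num) (by norm_num), rfl⟩
  -- a ∈ K, k ∈ interior K ⇒ a + k ∈ interior K
  have haux : ∀ a ∈ K, ∀ k ∈ interior K, a + k ∈ interior K := by
    intro a ha k hk
    have hopen : IsOpen ((fun x => a + x) '' interior K) :=
      (isOpenMap_add_left a) _ isOpen_interior
    have hsub : (fun x => a + x) '' interior K ⊆ K := by
      rintro _ ⟨y, hy, rfl⟩
      exact hKadd a ha y (interior_subset hy)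
    exact interior_maximal hsub hopen ⟨k, hk, rfl⟩
  -- main lemma
  have key : ∀ N : Set Y, N ⊆ -K → (0:Y) ∈ N → N - interior K = -(interior K) := by
    intro N hN h0N
    ext x
    constructor
    · rintro ⟨m, hm, k, hk, rfl⟩
      have hmK : -m ∈ K := hN hm
      have : -m + k ∈ interior K := haux _ hmK _ hk
      rw [Set.mem_neg]
      simpa [neg_sub, sub_eq_neg_add] using this
    · intro hx
      rw [Set.mem_neg] at hx
      exact ⟨0, h0N, -x, hx, by simp⟩
  have h1 : M - interior K = -(interior K) := key M hM h0
  have h2 : (-K) - interior K = -(interior K) :=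
    key (-K) (subset_refl _) (by simpa using hK0)
  exact ⟨h1, by rw [h1, h2]⟩
end

section
/- Let Y be a locally convex Hausdorff topological vector space, K a closed pointed convex cone with nonempty interior, and M ⊂ Y nonempty with WSup M ⊂ Y. If there exists v₀ ∈ Y \ (−K) such that λv₀ ∈ M for all λ > 0, then WSup M has no strongly maximal element, i.e., there is no v̄ ∈ WSup M with WSup M ⊂ v̄ − K. -/
open Set Pointwise Topology Filter

theorem stmt3 {Y : Type*} [AddCommGroup Y] [Module ℝ Y] [TopologicalSpace Y] [IsTopologicalAddGroup Y]
    [ContinuousSMul ℝ Y] [T2Space Y] [LocallyConvexSpace ℝ Y]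
    (K : Set Y) (hKcl : IsClosed K) (hKconv : Convex ℝ K)
    (hKcone : ∀ c : ℝ, 0 < c → c • K ⊆ K) (hK0 : (0:Y) ∈ K)
    (hKpointed : K ∩ (-K) ⊆ {0}) (hKint : (interior K).Nonempty)
    (M : Set Y) (hM : M.Nonempty)
    (hWY : ∃ w : Y, ∀ v ∈ M, w - v ∉ -(interior K))
    (v₀ : Y) (hv₀ : v₀ ∉ -K) (hray : ∀ l : ℝ, 0 < l → l • v₀ ∈ M) :
    ¬ ∃ v' ∈ closure (M - interior K) \ (M - interior K),
        closure (M - interior K) \ (M - interior K) ⊆ {v'} - K := by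
  rintro ⟨v', ⟨hv'cl, hv'A⟩, hmax⟩
  set A := M - interior K with hAdef
  obtain ⟨e₀, he₀⟩ := hKint
  -- K is closed under addition
  have hKadd : ∀ x ∈ K, ∀ y ∈ K, x + y ∈ K := by
    intro x hx y hy
    have h2 : ((1:ℝ)/2) • x + ((1:ℝ)/2) • y ∈ K :=
      hKconv hx hy (by norm_num) (by norm_num) (by norm_num)
    have h3 : (2:ℝ) • (((1:ℝ)/2) • x + ((1:ℝ)/2) • y) ∈ K :=
      hKcone 2 (by norm_num) (smul_mem_smul_set h2)
    have heq : (2:ℝ) • (((1:ℝ)/2) • x + ((1:ℝ)/2) • y) = x + y := by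
      rw [smul_add, smul_smul, smul_smul]; norm_num
    rwa [heq] at h3
  -- K + interior K ⊆ interior K
  have hKintadd : ∀ x ∈ K, ∀ y ∈ interior K, x + y ∈ interior K := by
    intro x hx y hy
    have hsub : (x + ·) '' interior K ⊆ K := by
      rintro _ ⟨z, hz, rfl⟩; exact hKadd x hx z (interior_subset hz)
    have hopen : IsOpen ((x + ·) '' interior K) :=
      (isOpenMap_add_left x) _ isOpen_interior
    exact interior_maximal hsub hopen ⟨y, hy, rfl⟩
  -- positive scaling preserves interior K
  have hsmulint : ∀ t : ℝ, 0 < t → ∀ x ∈ interior K, t • x ∈ interior K := by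
    intro t ht x hx
    have h1 : t • x ∈ t • interior K := smul_mem_smul_set hx
    rw [← interior_smul₀ (ne_of_gt ht)] at h1
    exact interior_mono (hKcone t ht) h1
  -- nonnegative scaling lands in K
  have hsmulK : ∀ t : ℝ, 0 ≤ t → ∀ x ∈ interior K, t • x ∈ K := by
    intro t ht x hx
    rcases eq_or_lt_of_le ht with h | h
    · simp [← h, hK0]
    · exact interior_subset (hsmulint t h x hx)
  -- A is open
  have hAopen : IsOpen A := IsOpen.sub_left isOpen_interior
  -- A - interior K ⊆ A
  have hAsub : ∀ a ∈ A, ∀ x ∈ interior K, a - x ∈ A := by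
    rintro a ⟨m, hm, k, hk, rfl⟩ x hx
    have : m - (k + x) ∈ A := sub_mem_sub hm (hKintadd k (interior_subset hk) x hx)
    · rwa [show m - k - x = m - (k + x) by abel]
  -- membership in {v'} - K
  have hmem_vK : ∀ x : Y, x ∈ ({v'} : Set Y) - K → v' - x ∈ K := by
    rintro x ⟨a, ha, k, hk, rfl⟩
    rcases ha with rfl
    simpa using hk
  -- main step: for every m ∈ M and x ∈ interior K, v' - (m - x) ∈ K
  have hstep : ∀ m ∈ M, ∀ x ∈ interior K, v' - (m - x) ∈ K := by
    intro m hm x hx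
    set S : Set ℝ := {t | m + t • x ∈ A} with hSdef
    have hSm1 : (-1 : ℝ) ∈ S := by
      show m + (-1 : ℝ) • x ∈ A
      have : m - x ∈ A := sub_mem_sub hm hx
      rwa [show m + (-1 : ℝ) • x = m - x by rw [neg_one_smul]; abel]
    have hSne : S.Nonempty := ⟨-1, hSm1⟩
    -- a large t₀ with (m - v') + t • x ∈ interior K for t ≥ t₀
    have hlarge : ∃ t₀ : ℝ, 0 < t₀ ∧ ∀ t : ℝ, t₀ ≤ t → (m - v') + t • x ∈ interior K := by
      have htend : Tendsto (fun t : ℝ => t⁻¹ • (m - v') + x) atTop (𝓝 x) := by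
        have h0 : Tendsto (fun t : ℝ => t⁻¹ • (m - v')) atTop (𝓝 ((0:ℝ) • (m - v'))) :=
          tendsto_inv_atTop_zero.smul_const _
        simpa using h0.add (tendsto_const_nhds : Tendsto (fun _ : ℝ => x) atTop (𝓝 x))
      have hev : ∀ᶠ t in atTop, t⁻¹ • (m - v') + x ∈ interior K :=
        htend (isOpen_interior.mem_nhds hx)
      obtain ⟨t₀, ht₀int, ht₀pos⟩ := (hev.and (eventually_gt_atTop 0)).exists
      refine ⟨t₀, ht₀pos, fun t ht => ?_⟩
      have h1 : (m - v') + t₀ • x ∈ interior K := by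
        have := hsmulint t₀ ht₀pos _ ht₀int
        rwa [smul_add, smul_smul, mul_inv_cancel₀ (ne_of_gt ht₀pos), one_smul] at this
      have h2 : (t - t₀) • x ∈ K := hsmulK _ (by linarith) _ hx
      have h3 := hKadd _ h2 _ (interior_subset h1)
      have h3' : (t - t₀) • x + ((m - v') + t₀ • x) ∈ interior K := by
        have := hKintadd _ h2 _ h1
        exact this
      rwa [show (t - t₀) • x + ((m - v') + t₀ • x) = (m - v') + t • x by
        rw [sub_smul]; abel] at h3'
    obtain ⟨t₀, ht₀pos, ht₀⟩ := hlarge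
    have hBdd : BddAbove S := by
      refine ⟨t₀, fun t ht => ?_⟩
      by_contra hlt
      push_neg at hlt
      apply hv'A
      have h1 : (m - v') + t • x ∈ interior K := ht₀ t hlt.le
      have h2 : (m + t • x) - ((m - v') + t • x) ∈ A := hAsub _ ht _ h1
      rwa [show (m + t • x) - ((m - v') + t • x) = v' by abel] at h2
    set T : ℝ := sSup S with hTdef
    have hTm1 : -1 ≤ T := le_csSup hBdd hSm1
    have hcont : Continuous fun t : ℝ => m + t • x :=
      continuous_const.add (continuous_id.smul continuous_const)
    have hTcl : m + T • x ∈ closure A :=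
      map_mem_closure (f := fun t : ℝ => m + t • x) hcont (csSup_mem_closure hSne hBdd) (fun t ht => ht)
    have hTA : m + T • x ∉ A := by
      intro hTA
      have hopen : IsOpen ((fun t : ℝ => m + t • x) ⁻¹' A) := hAopen.preimage hcont
      obtain ⟨ε, hε, hball⟩ := Metric.isOpen_iff.mp hopen T hTA
      have hmem : T + ε / 2 ∈ S := by
        apply hball
        rw [Metric.mem_ball, Real.dist_eq]
        rw [show T + ε / 2 - T = ε / 2 by ring, abs_of_pos (by linarith)]
        linarith
      have := le_csSup hBdd hmem
      linarith
    have hWS : m + T • x ∈ closure A \ A := ⟨hTcl, hTA⟩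
    have h1 : v' - (m + T • x) ∈ K := hmem_vK _ (hmax hWS)
    have h2 : (T + 1) • x ∈ K := hsmulK _ (by linarith) _ hx
    have h3 := hKadd _ h1 _ h2
    rwa [show v' - (m + T • x) + (T + 1) • x = v' - (m - x) by rw [add_smul, one_smul]; abel] at h3
  -- hence M ⊆ v' - K
  have hMle : ∀ m ∈ M, v' - m ∈ K := by
    intro m hm
    have htend : Tendsto (fun t : ℝ => v' - m + t • e₀) (𝓝[>] (0:ℝ)) (𝓝 (v' - m)) := by
      have hc : Continuous fun t : ℝ => v' - m + t • e₀ :=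
        continuous_const.add (continuous_id.smul continuous_const)
      have h := (hc.tendsto 0).mono_left (nhdsWithin_le_nhds (s := Set.Ioi (0:ℝ)))
      simpa using h
    have hev : ∀ᶠ t in 𝓝[>] (0:ℝ), v' - m + t • e₀ ∈ K := by
      filter_upwards [self_mem_nhdsWithin] with t ht
      have := hstep m hm _ (hsmulint t ht _ he₀)
      rwa [show v' - (m - t • e₀) = v' - m + t • e₀ by abel] at this
    exact hKcl.mem_of_tendsto htend hev
  -- scale the ray and take the limit
  have hray' : ∀ l : ℝ, 0 < l → l⁻¹ • v' - v₀ ∈ K := by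
    intro l hl
    have h1 := hMle _ (hray l hl)
    have h2 := hKcone l⁻¹ (by positivity) (smul_mem_smul_set h1)
    rwa [smul_sub, smul_smul, inv_mul_cancel₀ (ne_of_gt hl), one_smul] at h2
  have hlim : Tendsto (fun l : ℝ => l⁻¹ • v' - v₀) atTop (𝓝 (-v₀)) := by
    have h : Tendsto (fun l : ℝ => l⁻¹ • v' - v₀) atTop (𝓝 ((0:ℝ) • v' - v₀)) :=
      (tendsto_inv_atTop_zero.smul_const v').sub_const v₀
    simpa using h
  have hfin : -v₀ ∈ K :=
    hKcl.mem_of_tendsto hlim (eventually_atTop.2 ⟨1, fun l hl => hray' l (by linarith)⟩)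
  exact hv₀ (by simpa using hfin)
end

section
/- Let Z, Y be locally convex Hausdorff TVS, S ⊂ Z a nonempty closed convex cone, K ⊂ Y a closed pointed convex cone with nonempty interior. Then a continuous linear map T : Z → Y satisfies WSup T(−S) ≠ {+∞_Y} if and only if T(S) ∩ (−int K) = ∅. In other words, the domain of the conjugate map of the indicator I_{−S} equals L₊^w(S,K) := {T ∈ L(Z,Y) : T(S) ∩ (−int K) = ∅}. -/
open Set Pointwise Topology

theorem stmt4 {Y Z : Type*} [AddCommGroup Y] [Module ℝ Y] [TopologicalSpace Y] [IsTopologicalAddGroup Y]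
    [ContinuousSMul ℝ Y] [T2Space Y] [LocallyConvexSpace ℝ Y]
    [AddCommGroup Z] [Module ℝ Z] [TopologicalSpace Z] [IsTopologicalAddGroup Z]
    [ContinuousSMul ℝ Z] [T2Space Z] [LocallyConvexSpace ℝ Z]
    (K : Set Y) (hKcl : IsClosed K) (hKconv : Convex ℝ K)
    (hKcone : ∀ c : ℝ, 0 < c → c • K ⊆ K) (hK0 : (0:Y) ∈ K)
    (hKpointed : K ∩ (-K) ⊆ {0}) (hKint : (interior K).Nonempty)
    (S : Set Z) (hScl : IsClosed S) (hSconv : Convex ℝ S)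
    (hScone : ∀ c : ℝ, 0 < c → c • S ⊆ S) (hS0 : (0:Z) ∈ S)
    (T : Z →L[ℝ] Y) :
    (∃ w : Y, ∀ v ∈ ⇑T '' (-S), w - v ∉ -(interior K)) ↔
      (⇑T '' S) ∩ (-(interior K)) = ∅ := by
  have hintK : ∀ c : ℝ, 0 < c → c • interior K ⊆ interior K := by
    intro c hc
    rw [← interior_smul₀ hc.ne' K]
    exact interior_mono (hKcone c hc)
  constructor
  · rintro ⟨w, hw⟩
    by_contra h
    rw [← Ne, ← nonempty_iff_ne_empty] at h
    obtain ⟨y, ⟨s, hs, rfl⟩, hy⟩ := h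
    have hopen : IsOpen (-(interior K)) := isOpen_interior.neg
    have hcont : Continuous (fun t : ℝ => T s + t • w) := by continuity
    have h0 : (fun t : ℝ => T s + t • w) 0 ∈ -(interior K) := by simpa using hy
    have hev : ∀ᶠ t in 𝓝 (0:ℝ), T s + t • w ∈ -(interior K) :=
      (hcont.tendsto 0).eventually_mem (hopen.mem_nhds h0)
    have hev' : ∀ᶠ t in 𝓝[>] (0:ℝ), T s + t • w ∈ -(interior K) :=
      hev.filter_mono nhdsWithin_le_nhds
    obtain ⟨t, htmem, htpos⟩ := (hev'.and (eventually_mem_nhdsWithin)).exists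
    have htpos : (0:ℝ) < t := htpos
    set c : ℝ := t⁻¹ with hcdef
    have hcpos : 0 < c := inv_pos.mpr htpos
    have hcs : c • s ∈ S := hScone c hcpos ⟨s, hs, rfl⟩
    have hmem : -(c • s) ∈ (-S) := by simpa using hcs
    have := hw (T (-(c • s))) ⟨-(c • s), hmem, rfl⟩
    apply this
    have h1 : -(T s + t • w) ∈ interior K := by
      simpa [Set.mem_neg] using htmem
    have h2 : c • (-(T s + t • w)) ∈ interior K := hintK c hcpos ⟨_, h1, rfl⟩
    have heq : c • (-(T s + t • w)) = -(c • T s + w) := by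
      have : c * t = 1 := inv_mul_cancel₀ htpos.ne'
      rw [smul_neg, smul_add, smul_smul, this, one_smul]
    rw [heq] at h2
    have : w - T (-(c • s)) = c • T s + w := by
      simp [map_neg, map_smul]
      abel
    rw [this, Set.mem_neg]
    simpa using h2
  · intro h
    refine ⟨0, ?_⟩
    rintro v ⟨z, hz, rfl⟩ hv
    have hz' : -z ∈ S := by simpa [Set.mem_neg] using hz
    have : T (-z) ∈ (⇑T '' S) ∩ (-(interior K)) := by
      refine ⟨⟨-z, hz', rfl⟩, ?_⟩
      simpa [map_neg] using hv
    rw [h] at this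
    exact this
end

section
/- Let X, Y be locally convex Hausdorff TVS, K ⊂ Y a closed pointed convex cone with nonempty interior, and F : X → Y ∪ {+∞_Y}. For L ∈ L(X,Y) and y ∈ Y, the pair (L, y) belongs to epi_K F* if and only if y − L(x) + F(x) ∉ −int K for all x ∈ X (with the convention that the condition holds automatically when F(x) = +∞_Y). -/
open Set Pointwise Topology

def wSupElems {Y : Type*} [AddCommGroup Y] [TopologicalSpace Y] (K M : Set Y) : Set Y :=
  {w | (∀ v ∈ M, w - v ∉ -(interior K)) ∧
       ∀ u : Y, u - w ∈ -(interior K) → ∃ v ∈ M, u - v ∈ -(interior K)}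

def epiConj {X Y : Type*} [AddCommGroup X] [Module ℝ X] [TopologicalSpace X]
    [AddCommGroup Y] [Module ℝ Y] [TopologicalSpace Y]
    (K : Set Y) (H : X → Y) (domH : Set X) : Set ((X →L[ℝ] Y) × Y) :=
  {p | ∃ w ∈ wSupElems K ((fun x => p.1 x - H x) '' domH), p.2 - w ∈ K}

section Aux

variable {Y : Type*} [AddCommGroup Y] [Module ℝ Y] [TopologicalSpace Y]
  [IsTopologicalAddGroup Y] [ContinuousSMul ℝ Y]

lemma aux_addK {K : Set Y} (hKconv : Convex ℝ K)
    (hKcone : ∀ c : ℝ, 0 < c → c • K ⊆ K) {a b : Y} (ha : a ∈ K) (hb : b ∈ K) :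
    a + b ∈ K := by
  have h2 : (1/2 : ℝ) • a + (1/2 : ℝ) • b ∈ K :=
    hKconv ha hb (by norm_num) (by norm_num) (by norm_num)
  have := hKcone 2 (by norm_num) (smul_mem_smul_set h2)
  have he : (2:ℝ) • ((1/2 : ℝ) • a + (1/2 : ℝ) • b) = a + b := by
    rw [smul_add, smul_smul, smul_smul]; norm_num
  rwa [he] at this

lemma aux_intAdd {K : Set Y} (hKconv : Convex ℝ K)
    (hKcone : ∀ c : ℝ, 0 < c → c • K ⊆ K) {a b : Y}
    (ha : a ∈ interior K) (hb : b ∈ K) : a + b ∈ interior K := by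
  refine mem_interior.2 ⟨(fun z => z - b) ⁻¹' interior K, ?_, ?_, ?_⟩
  · intro z hz
    have : z - b ∈ K := interior_subset hz
    have := aux_addK hKconv hKcone this hb
    rwa [sub_add_cancel] at this
  · exact isOpen_interior.preimage (continuous_id.sub continuous_const)
  · simp [ha]

lemma aux_smulInt {K : Set Y} (hKcone : ∀ c : ℝ, 0 < c → c • K ⊆ K) {t : ℝ}
    (ht : 0 < t) {e : Y} (he : e ∈ interior K) : t • e ∈ interior K := by
  refine mem_interior.2 ⟨(fun z => t⁻¹ • z) ⁻¹' interior K, ?_, ?_, ?_⟩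
  · intro z hz
    have : t⁻¹ • z ∈ K := interior_subset hz
    have := hKcone t ht (smul_mem_smul_set this)
    rwa [smul_inv_smul₀ ht.ne'] at this
  · exact isOpen_interior.preimage (continuous_const_smul _)
  · simp [inv_smul_smul₀ ht.ne', he]

end Aux

theorem stmt6 {X Y : Type*}
    [AddCommGroup X] [Module ℝ X] [TopologicalSpace X]
    [AddCommGroup Y] [Module ℝ Y] [TopologicalSpace Y] [IsTopologicalAddGroup Y]
    [ContinuousSMul ℝ Y] [T2Space Y] [LocallyConvexSpace ℝ Y]
    (K : Set Y) (hKcl : IsClosed K) (hKconv : Convex ℝ K)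
    (hKcone : ∀ c : ℝ, 0 < c → c • K ⊆ K) (hK0 : (0:Y) ∈ K)
    (hKpointed : K ∩ (-K) ⊆ {0}) (hKint : (interior K).Nonempty)
    (F : X → Y) (domF : Set X) (hFprop : domF.Nonempty)
    (L : X →L[ℝ] Y) (y : Y) :
    (L, y) ∈ epiConj K F domF ↔ ∀ x ∈ domF, y - L x + F x ∉ -(interior K) := by
  obtain ⟨e, he⟩ := hKint
  set M : Set Y := (fun x => L x - F x) '' domF with hM
  constructor
  · rintro ⟨w, ⟨hw1, _⟩, hyw⟩ x hx hcon
    have hv : L x - F x ∈ M := ⟨x, hx, rfl⟩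
    have h1 : -(y - (L x - F x)) ∈ interior K := by
      have : y - L x + F x ∈ -(interior K) := hcon
      rw [Set.mem_neg] at this
      convert this using 2
      abel
    -- v - w = -(y - v) + (y - w) ∈ int K + K ⊆ int K
    have h2 : (L x - F x) - w ∈ interior K := by
      have := aux_intAdd hKconv hKcone h1 hyw
      have heq : -(y - (L x - F x)) + (y - w) = (L x - F x) - w := by abel
      rwa [heq] at this
    exact hw1 _ hv (by rw [Set.mem_neg]; rwa [neg_sub])
  · intro hall
    obtain ⟨x₀, hx₀⟩ := hFprop
    set A : Set Y := {y' | ∀ v ∈ M, y' - v ∉ -(interior K)} with hA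
    have hAup : ∀ u ∈ A, ∀ k ∈ K, u + k ∈ A := by
      intro u hu k hk v hv hcon
      rw [Set.mem_neg] at hcon
      have h1 : v - u - k ∈ interior K := by
        have : -(u + k - v) = v - u - k := by abel
        rwa [this] at hcon
      have h2 := aux_intAdd hKconv hKcone h1 hk
      rw [sub_add_cancel] at h2
      exact hu v hv (by rw [Set.mem_neg, neg_sub]; exact h2)
    have hyA : y ∈ A := by
      rintro v ⟨x, hx, rfl⟩ hcon
      refine hall x hx ?_
      have : y - L x + F x = y - (L x - F x) := by abel
      rwa [this]
    have hAclosed : IsClosed A := by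
      have : A = ⋂ v ∈ M, ((fun y' => y' - v) ⁻¹' (-(interior K)))ᶜ := by
        ext z; simp [hA]
      rw [this]
      exact isClosed_biInter fun v _ =>
        (isOpen_interior.neg.preimage (continuous_id.sub continuous_const)).isClosed_compl
    set T : Set ℝ := {t : ℝ | 0 ≤ t ∧ y - t • e ∈ A} with hT
    have hT0 : (0:ℝ) ∈ T := ⟨le_refl 0, by simpa using hyA⟩
    have hTclosed : IsClosed T := by
      have : T = {t : ℝ | 0 ≤ t} ∩ (fun t : ℝ => y - t • e) ⁻¹' A := rfl
      rw [this]
      exact isClosed_Ici.inter (hAclosed.preimage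
        (continuous_const.sub (continuous_id.smul continuous_const)))
    -- T is bounded above
    have hbdd : BddAbove T := by
      -- find t₀ > 0 with t₀ • e - (y - (L x₀ - F x₀)) ∈ interior K
      set z : Y := y - (L x₀ - F x₀) with hz
      have hcont : Filter.Tendsto (fun s : ℝ => e - s • z) (𝓝 0) (𝓝 e) := by
        have : Filter.Tendsto (fun s : ℝ => e - s • z) (𝓝 0) (𝓝 (e - (0:ℝ) • z)) :=
          (tendsto_const_nhds.sub (Filter.tendsto_id.smul tendsto_const_nhds))
        simpa using this
      have hev : ∀ᶠ s : ℝ in 𝓝 0, e - s • z ∈ interior K :=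
        hcont.eventually (isOpen_interior.eventually_mem he)
      have hev' : ∀ᶠ s : ℝ in 𝓝[>] (0:ℝ), e - s • z ∈ interior K :=
        nhdsWithin_le_nhds hev
      obtain ⟨s, hs, hspos⟩ := (hev'.and (eventually_mem_nhdsWithin)).exists
      have hspos' : (0:ℝ) < s := hspos
      -- t₀ = 1/s works: y - t₀ • e ∉ A
      refine ⟨s⁻¹, fun t ht => ?_⟩
      by_contra hlt
      push_neg at hlt
      -- then s⁻¹ ∈ T since T is downward closed on [0, ∞)
      have hsinvT : s⁻¹ ∈ T := by
        have hd : y - s⁻¹ • e = (y - t • e) + (t - s⁻¹) • e := by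
          rw [sub_smul]; abel
        have hke : (t - s⁻¹) • e ∈ K := by
          rcases eq_or_lt_of_le (le_of_lt (by linarith : s⁻¹ < t)) with h | h
          · exact hKcone (t - s⁻¹) (by linarith) (smul_mem_smul_set (interior_subset he))
          · exact hKcone (t - s⁻¹) (by linarith) (smul_mem_smul_set (interior_subset he))
        refine ⟨le_of_lt (inv_pos.2 hspos'), ?_⟩
        rw [hd]
        exact hAup _ ht.2 _ hke
      -- but y - s⁻¹ • e ∉ A since below L x₀ - F x₀
      have : s⁻¹ • (e - s • z) ∈ interior K := aux_smulInt hKcone (inv_pos.2 hspos') hs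
      rw [smul_sub, smul_smul, inv_mul_cancel₀ hspos'.ne', one_smul] at this
      have hmem : y - s⁻¹ • e - (L x₀ - F x₀) ∈ -(interior K) := by
        rw [Set.mem_neg]
        have : -(y - s⁻¹ • e - (L x₀ - F x₀)) = s⁻¹ • e - z := by rw [hz]; abel
        rwa [this]
      exact hsinvT.2 _ ⟨x₀, hx₀, rfl⟩ hmem
    set t₀ : ℝ := sSup T with ht₀
    have htmem : t₀ ∈ T := hTclosed.csSup_mem ⟨0, hT0⟩ hbdd
    refine ⟨y - t₀ • e, ⟨?_, ?_⟩, ?_⟩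
    · intro v hv
      exact htmem.2 v hv
    · intro u hu
      by_contra hno
      push_neg at hno
      have huA : u ∈ A := fun v hv => hno v hv
      -- w - u ∈ interior K where w = y - t₀ • e
      have hwu : (y - t₀ • e) - u ∈ interior K := by
        rw [Set.mem_neg] at hu
        have : -(u - (y - t₀ • e)) = (y - t₀ • e) - u := by abel
        rwa [this] at hu
      -- find s > 0 with (w - u) - s • e ∈ interior K
      have hcont : Filter.Tendsto (fun s : ℝ => ((y - t₀ • e) - u) - s • e) (𝓝 0)
          (𝓝 ((y - t₀ • e) - u)) := by
        have : Filter.Tendsto (fun s : ℝ => ((y - t₀ • e) - u) - s • e) (𝓝 0)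
            (𝓝 (((y - t₀ • e) - u) - (0:ℝ) • e)) :=
          (tendsto_const_nhds.sub (Filter.tendsto_id.smul tendsto_const_nhds))
        simpa using this
      have hev : ∀ᶠ s : ℝ in 𝓝 0, ((y - t₀ • e) - u) - s • e ∈ interior K :=
        hcont.eventually (isOpen_interior.eventually_mem hwu)
      have hev' : ∀ᶠ s : ℝ in 𝓝[>] (0:ℝ), ((y - t₀ • e) - u) - s • e ∈ interior K :=
        nhdsWithin_le_nhds hev
      obtain ⟨s, hs, hspos⟩ := (hev'.and (eventually_mem_nhdsWithin)).exists
      have hspos' : (0:ℝ) < s := hspos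
      have hnew : y - (t₀ + s) • e ∈ A := by
        have hd : y - (t₀ + s) • e = u + (((y - t₀ • e) - u) - s • e) := by
          rw [add_smul]; abel
        rw [hd]
        exact hAup _ huA _ (interior_subset hs)
      have : t₀ + s ∈ T := ⟨by linarith [htmem.1], hnew⟩
      have := le_csSup hbdd this
      linarith
    · have : y - (y - t₀ • e) = t₀ • e := by abel
      rw [this]
      rcases eq_or_lt_of_le htmem.1 with h | h
      · rw [← h, zero_smul]; exact hK0
      · exact hKcone t₀ h (smul_mem_smul_set (interior_subset he))
end

section
/- (Asymptotic representation) Let X, Y, Z be locally convex Hausdorff TVS, K ⊂ Y a closed pointed convex cone with int K ≠ ∅, S ⊂ Z a closed convex cone, C ⊂ X a nonempty closed convex set, F : X → Y ∪ {+∞_Y} proper K-convex with y*∘F lsc for every y* ∈ Y*, and G : X → Z ∪ {+∞_Z} proper S-convex and S-epi closed. Let A := C ∩ G⁻¹(−S) and assume A ∩ dom F ≠ ∅. Then epi_K(F + I_A)* = cl[ ⋃_{T ∈ L₊(S,K)} epi_K(F + I_C + T∘G)* ]. -/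
open Set Pointwise Topology

theorem auxNonneg {u c a : ℝ} (h : ∀ t : ℝ, 0 ≤ t → u < c + a * t) : 0 ≤ a := by
  by_contra hneg
  push_neg at hneg
  have h0 := h 0 le_rfl
  have hpos : 0 ≤ (u - c) / a := div_nonneg_of_nonpos (by linarith) (by linarith)
  have h2 := h _ hpos
  have h3 : a * ((u - c) / a) = u - c := by
    rw [mul_div_assoc']; exact mul_div_cancel_left₀ _ (ne_of_lt hneg)
  linarith

theorem addMemK {Y : Type*} [AddCommGroup Y] [Module ℝ Y] {K : Set Y}
    (hKconv : Convex ℝ K) (hKcone : ∀ c : ℝ, 0 < c → c • K ⊆ K) :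
    ∀ a ∈ K, ∀ b ∈ K, a + b ∈ K := by
  intro a ha b hb
  have h2 : (1/2 : ℝ) • a + (1/2 : ℝ) • b ∈ K :=
    hKconv ha hb (by norm_num) (by norm_num) (by norm_num)
  have h3 := hKcone 2 (by norm_num) (Set.smul_mem_smul_set h2)
  have h4 : (2:ℝ) • ((1/2 : ℝ) • a + (1/2 : ℝ) • b) = a + b := by
    rw [smul_add, smul_smul, smul_smul]; norm_num
  rwa [h4] at h3

theorem smulMemK {Y : Type*} [AddCommGroup Y] [Module ℝ Y] {K : Set Y}
    (hKcone : ∀ c : ℝ, 0 < c → c • K ⊆ K) (hK0 : (0:Y) ∈ K) :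
    ∀ c : ℝ, 0 ≤ c → ∀ k ∈ K, c • k ∈ K := by
  intro c hc k hk
  rcases hc.lt_or_eq with h | h
  · exact hKcone c h (Set.smul_mem_smul_set hk)
  · rw [← h, zero_smul]; exact hK0

theorem intAddK {Y : Type*} [AddCommGroup Y] [Module ℝ Y] [TopologicalSpace Y]
    [IsTopologicalAddGroup Y] {K : Set Y}
    (hKconv : Convex ℝ K) (hKcone : ∀ c : ℝ, 0 < c → c • K ⊆ K) :
    ∀ a ∈ interior K, ∀ b ∈ K, a + b ∈ interior K := by
  intro a ha b hb
  have hopen : IsOpen (interior K + {b}) := isOpen_interior.add_right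
  have hsub : interior K + {b} ⊆ K := by
    rintro _ ⟨u, hu, v, hv, rfl⟩
    rcases hv with rfl
    exact addMemK hKconv hKcone u (interior_subset hu) v hb
  have hmem : a + b ∈ interior K + {b} := ⟨a, ha, b, rfl, rfl⟩
  exact interior_maximal hsub hopen hmem

theorem smulMemIntK {Y : Type*} [AddCommGroup Y] [Module ℝ Y] [TopologicalSpace Y]
    [IsTopologicalAddGroup Y] [ContinuousSMul ℝ Y] {K : Set Y}
    (hKcone : ∀ c : ℝ, 0 < c → c • K ⊆ K) :
    ∀ c : ℝ, 0 < c → ∀ k ∈ interior K, c • k ∈ interior K := by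
  intro c hc k hk
  have hopen : IsOpen (c • interior K) := isOpen_interior.smul₀ (ne_of_gt hc)
  have hsub : c • interior K ⊆ K := fun v hv => by
    obtain ⟨w, hw, rfl⟩ := hv
    exact hKcone c hc (Set.smul_mem_smul_set (interior_subset hw))
  exact interior_maximal hsub hopen (Set.smul_mem_smul_set hk)
theorem epiConjMemImp {X Y : Type*} [AddCommGroup X] [Module ℝ X] [TopologicalSpace X]
    [AddCommGroup Y] [Module ℝ Y] [TopologicalSpace Y] [IsTopologicalAddGroup Y]
    {K : Set Y} (hKconv : Convex ℝ K) (hKcone : ∀ c : ℝ, 0 < c → c • K ⊆ K)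
    {H : X → Y} {dom : Set X} {p : (X →L[ℝ] Y) × Y}
    (hp : p ∈ epiConj K H dom) : ∀ x ∈ dom, p.1 x - H x - p.2 ∉ interior K := by
  obtain ⟨w, ⟨hw1, _⟩, hw2⟩ := hp
  intro x hx hmem
  refine hw1 (p.1 x - H x) ⟨x, hx, rfl⟩ ?_
  rw [Set.mem_neg]
  have h1 : (p.1 x - H x - p.2) + (p.2 - w) ∈ interior K := intAddK hKconv hKcone _ hmem _ hw2
  have h2 : (p.1 x - H x - p.2) + (p.2 - w) = -(w - (p.1 x - H x)) := by abel
  rwa [h2] at h1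

theorem epiConjMemOf {X Y : Type*} [AddCommGroup X] [Module ℝ X] [TopologicalSpace X]
    [AddCommGroup Y] [Module ℝ Y] [TopologicalSpace Y] [IsTopologicalAddGroup Y]
    [ContinuousSMul ℝ Y]
    {K : Set Y} (hKconv : Convex ℝ K) (hKcone : ∀ c : ℝ, 0 < c → c • K ⊆ K)
    (hK0 : (0:Y) ∈ K) {k0 : Y} (hk0 : k0 ∈ interior K)
    {H : X → Y} {dom : Set X} {p : (X →L[ℝ] Y) × Y} (hne : dom.Nonempty)
    (h : ∀ x ∈ dom, p.1 x - H x - p.2 ∉ interior K) :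
    p ∈ epiConj K H dom := by
  classical
  set y := p.2 with hy
  set T : Set ℝ := {t | ∃ x ∈ dom, y - t • k0 - (p.1 x - H x) ∈ -(interior K)} with hT
  -- upward closed
  have hup : ∀ t ∈ T, ∀ t', t ≤ t' → t' ∈ T := by
    rintro t ⟨x, hx, hmem⟩ t' htt'
    refine ⟨x, hx, ?_⟩
    rw [Set.mem_neg] at hmem ⊢
    have h1 : -(y - t • k0 - (p.1 x - H x)) + (t' - t) • k0 ∈ interior K :=
      intAddK hKconv hKcone _ hmem _
        (smulMemK hKcone hK0 _ (by linarith) _ (interior_subset hk0))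
    have h2 : -(y - t • k0 - (p.1 x - H x)) + (t' - t) • k0
        = -(y - t' • k0 - (p.1 x - H x)) := by
      rw [sub_smul]; abel
    rwa [h2] at h1
  -- nonempty
  have hTne : T.Nonempty := by
    obtain ⟨x0, hx0⟩ := hne
    set v0 := p.1 x0 - H x0 with hv0
    have hcont : Continuous fun ε : ℝ => k0 - ε • (y - v0) :=
      continuous_const.sub (continuous_id.smul continuous_const)
    have hO : IsOpen ((fun ε : ℝ => k0 - ε • (y - v0)) ⁻¹' interior K) :=
      isOpen_interior.preimage hcont
    have h0 : (0:ℝ) ∈ (fun ε : ℝ => k0 - ε • (y - v0)) ⁻¹' interior K := by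
      simp [hk0]
    obtain ⟨ε, hεpos, hball⟩ := Metric.isOpen_iff.mp hO 0 h0
    have hε2 : (ε/2 : ℝ) ∈ Metric.ball (0:ℝ) ε := by
      rw [Metric.mem_ball, dist_zero_right, Real.norm_eq_abs, abs_of_pos (half_pos hεpos)]
      linarith
    have hmem := hball hε2
    simp only [Set.mem_preimage] at hmem
    refine ⟨(ε/2)⁻¹, x0, hx0, ?_⟩
    rw [Set.mem_neg]
    have heq : -(y - (ε/2)⁻¹ • k0 - v0) = (ε/2)⁻¹ • (k0 - (ε/2) • (y - v0)) := by
      rw [smul_sub, smul_smul, inv_mul_cancel₀ (ne_of_gt (half_pos hεpos)), one_smul]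
      abel
    rw [heq]
    exact smulMemIntK hKcone _ (by positivity) _ hmem
  -- T ⊆ Ici 0
  have h0T : (0:ℝ) ∉ T := by
    rintro ⟨x, hx, hmem⟩
    rw [Set.mem_neg] at hmem
    have h2 : -(y - (0:ℝ) • k0 - (p.1 x - H x)) = p.1 x - H x - p.2 := by
      rw [zero_smul]; abel
    rw [h2] at hmem
    exact h x hx hmem
  have hsub : T ⊆ Set.Ici (0:ℝ) := by
    intro t ht
    by_contra hlt
    exact h0T (hup t ht 0 (le_of_lt (lt_of_not_ge hlt)))
  have hbdd : BddBelow T := ⟨0, fun t ht => hsub ht⟩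
  set t0 := sInf T with ht0
  have ht0nonneg : 0 ≤ t0 := le_csInf hTne (fun t ht => hsub ht)
  -- T open
  have hTopen : IsOpen T := by
    have : T = ⋃ x ∈ dom, (fun t : ℝ => y - t • k0 - (p.1 x - H x)) ⁻¹' (-(interior K)) := by
      ext t; simp [hT]
    rw [this]
    apply isOpen_biUnion
    intro x _
    exact (isOpen_interior.neg).preimage
      ((continuous_const.sub (continuous_id.smul continuous_const)).sub continuous_const)
  have ht0notmem : t0 ∉ T := by
    intro hmem
    obtain ⟨ε, hεpos, hball⟩ := Metric.isOpen_iff.mp hTopen t0 hmem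
    have : t0 - ε/2 ∈ T := hball (by
      rw [Metric.mem_ball, Real.dist_eq, show t0 - ε/2 - t0 = -(ε/2) by ring, abs_neg,
        abs_of_pos (half_pos hεpos)]
      linarith)
    have := csInf_le hbdd this
    linarith
  set w := y - t0 • k0 with hw
  refine ⟨w, ⟨?_, ?_⟩, ?_⟩
  · rintro v ⟨x, hx, rfl⟩ hmem
    exact ht0notmem ⟨x, hx, hmem⟩
  · intro u hu
    rw [Set.mem_neg] at hu
    set k := w - u with hk
    have hkint : k ∈ interior K := by
      have : -(u - w) = k := by rw [hk]; abel
      rwa [this] at hu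
    -- find ε with k - ε • k0 ∈ interior K
    have hcont : Continuous fun ε : ℝ => k - ε • k0 :=
      continuous_const.sub (continuous_id.smul continuous_const)
    have hO : IsOpen ((fun ε : ℝ => k - ε • k0) ⁻¹' interior K) :=
      isOpen_interior.preimage hcont
    have h0 : (0:ℝ) ∈ (fun ε : ℝ => k - ε • k0) ⁻¹' interior K := by simp [hkint]
    obtain ⟨ε, hεpos, hball⟩ := Metric.isOpen_iff.mp hO 0 h0
    have hmemε : k - (ε/2) • k0 ∈ interior K := hball (by
      rw [Metric.mem_ball, dist_zero_right, Real.norm_eq_abs, abs_of_pos (half_pos hεpos)]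
      linarith)
    have hT2 : t0 + ε/2 ∈ T := by
      obtain ⟨t, ht, htlt⟩ := exists_lt_of_csInf_lt hTne (by linarith : sInf T < t0 + ε/2)
      exact hup t ht _ (le_of_lt htlt)
    obtain ⟨x, hx, hmem⟩ := hT2
    refine ⟨p.1 x - H x, ⟨x, hx, rfl⟩, ?_⟩
    rw [Set.mem_neg] at hmem ⊢
    have h1 : -(y - (t0 + ε/2) • k0 - (p.1 x - H x)) + (k - (ε/2) • k0) ∈ interior K :=
      intAddK hKconv hKcone _ hmem _ (interior_subset hmemε)
    have h2 : -(y - (t0 + ε/2) • k0 - (p.1 x - H x)) + (k - (ε/2) • k0)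
        = -(u - (p.1 x - H x)) := by
      rw [hk, hw, add_smul]; abel
    rwa [h2] at h1
  · have : p.2 - w = t0 • k0 := by rw [hw, hy]; abel
    rw [this]
    exact smulMemK hKcone hK0 _ ht0nonneg _ (interior_subset hk0)


theorem posOnInt {Y : Type*} [AddCommGroup Y] [Module ℝ Y] [TopologicalSpace Y]
    [IsTopologicalAddGroup Y] [ContinuousSMul ℝ Y] {K : Set Y} {φ : Y →L[ℝ] ℝ}
    (hφK : ∀ k ∈ K, 0 ≤ φ k) (hφne : φ ≠ 0) :
    ∀ v ∈ interior K, 0 < φ v := by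
  intro v hv
  rcases (hφK v (interior_subset hv)).lt_or_eq with h | h
  · exact h
  -- φ v = 0 : show φ = 0, contradiction
  exfalso
  apply hφne
  have hU : (fun w => v + w) ⁻¹' interior K ∈ 𝓝 (0:Y) := by
    apply ContinuousAt.preimage_mem_nhds (by fun_prop)
    simpa using isOpen_interior.mem_nhds hv
  have hzero : ∀ w ∈ ((fun w => v + w) ⁻¹' interior K) ∩ (-((fun w => v + w) ⁻¹' interior K)),
      φ w = 0 := by
    rintro w ⟨hw1, hw2⟩
    have h1 : 0 ≤ φ (v + w) := hφK _ (interior_subset hw1)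
    rw [Set.mem_neg, Set.mem_preimage] at hw2
    have h2 : 0 ≤ φ (v + -w) := hφK _ (interior_subset hw2)
    rw [map_add] at h1 h2
    rw [map_neg] at h2
    rw [← h] at h1 h2
    linarith
  have hUU : ((fun w => v + w) ⁻¹' interior K) ∩ (-((fun w => v + w) ⁻¹' interior K)) ∈ 𝓝 (0:Y) := by
    refine Filter.inter_mem hU ?_
    have heq : -((fun w => v + w) ⁻¹' interior K)
        = (fun w : Y => -w) ⁻¹' ((fun w => v + w) ⁻¹' interior K) := by
      ext w; simp [Set.mem_neg]
    rw [heq]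
    exact ContinuousAt.preimage_mem_nhds continuous_neg.continuousAt (by simpa using hU)
  ext z
  simp only [ContinuousLinearMap.zero_apply]
  -- c • z ∈ U for small c
  have hcont : Continuous fun c : ℝ => c • z := by fun_prop
  have hpre : (fun c : ℝ => c • z) ⁻¹' (((fun w => v + w) ⁻¹' interior K) ∩
      (-((fun w => v + w) ⁻¹' interior K))) ∈ 𝓝 (0:ℝ) := by
    apply ContinuousAt.preimage_mem_nhds hcont.continuousAt
    simpa using hUU
  obtain ⟨ε, hεpos, hball⟩ := Metric.mem_nhds_iff.mp hpre
  have hε2 : (ε/2 : ℝ) ∈ Metric.ball (0:ℝ) ε := by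
    rw [Metric.mem_ball, dist_zero_right, Real.norm_eq_abs, abs_of_pos (half_pos hεpos)]
    linarith
  have := hzero _ (hball hε2)
  rw [map_smul] at this
  have hne : (ε/2 : ℝ) ≠ 0 := ne_of_gt (half_pos hεpos)
  simpa [smul_eq_mul, hne] using this


theorem sepStruct {X Z : Type*}
    [AddCommGroup X] [Module ℝ X] [TopologicalSpace X] [IsTopologicalAddGroup X]
    [ContinuousSMul ℝ X] [LocallyConvexSpace ℝ X]
    [AddCommGroup Z] [Module ℝ Z] [TopologicalSpace Z] [IsTopologicalAddGroup Z]
    [ContinuousSMul ℝ Z] [LocallyConvexSpace ℝ Z]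
    {S : Set Z} (hS0 : (0:Z) ∈ S) (hScone : ∀ c : ℝ, 0 < c → c • S ⊆ S)
    {D : Set X} {G : X → Z} {f : X → ℝ}
    (hEcl : IsClosed {q : X × Z × ℝ | q.1 ∈ D ∧ q.2.1 - G q.1 ∈ S ∧ f q.1 ≤ q.2.2})
    (hEconv : Convex ℝ {q : X × Z × ℝ | q.1 ∈ D ∧ q.2.1 - G q.1 ∈ S ∧ f q.1 ≤ q.2.2})
    {xb : X} (hxbD : xb ∈ D)
    (q : X × Z × ℝ)
    (hq : q ∉ {q : X × Z × ℝ | q.1 ∈ D ∧ q.2.1 - G q.1 ∈ S ∧ f q.1 ≤ q.2.2}) :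
    ∃ (x3 : X →L[ℝ] ℝ) (z3 : Z →L[ℝ] ℝ) (a u3 : ℝ),
      0 ≤ a ∧ (∀ s ∈ S, 0 ≤ z3 s) ∧
      (∀ x ∈ D, ∀ z : Z, z - G x ∈ S → ∀ t : ℝ, f x ≤ t → u3 < x3 x + z3 z + a * t) ∧
      x3 q.1 + z3 q.2.1 + a * q.2.2 < u3 := by
  obtain ⟨φ, u, hφq, hφE⟩ := geometric_hahn_banach_point_closed hEconv hEcl hq
  set x3 : X →L[ℝ] ℝ := φ.comp (ContinuousLinearMap.inl ℝ X (Z × ℝ)) with hx3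
  set z3 : Z →L[ℝ] ℝ :=
    φ.comp ((ContinuousLinearMap.inr ℝ X (Z × ℝ)).comp (ContinuousLinearMap.inl ℝ Z ℝ)) with hz3
  set a : ℝ := φ (0, 0, 1) with ha
  have key : ∀ (x : X) (z : Z) (t : ℝ), φ (x, z, t) = x3 x + z3 z + a * t := by
    intro x z t
    have hdecomp : (x, z, t) = ((x, 0, 0) : X × Z × ℝ) + (0, z, 0) + (0, 0, t) := by
      simp
    have hsm : ((0, 0, t) : X × Z × ℝ) = t • ((0, 0, 1) : X × Z × ℝ) := by
      simp
    rw [hdecomp, map_add, map_add, hsm, map_smul]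
    have e1 : φ ((x, 0, 0) : X × Z × ℝ) = x3 x := rfl
    have e2 : φ ((0, z, 0) : X × Z × ℝ) = z3 z := rfl
    rw [e1, e2, smul_eq_mul]
    ring
  have hE : ∀ x ∈ D, ∀ z : Z, z - G x ∈ S → ∀ t : ℝ, f x ≤ t →
      u < x3 x + z3 z + a * t := by
    intro x hx z hz t ht
    have := hφE (x, z, t) ⟨hx, hz, ht⟩
    rwa [key] at this
  have hanneg : 0 ≤ a := by
    apply auxNonneg (u := u) (c := x3 xb + z3 (G xb) + a * f xb)
    intro t ht
    have := hE xb hxbD (G xb) (by rw [sub_self]; exact hS0) (f xb + t) (by linarith)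
    linarith [this]
  have hz3S : ∀ s ∈ S, 0 ≤ z3 s := by
    intro s hs
    apply auxNonneg (u := u) (c := x3 xb + z3 (G xb) + a * f xb)
    intro t ht
    have hmem : (G xb + t • s) - G xb ∈ S := by
      rw [add_sub_cancel_left]
      rcases ht.lt_or_eq with h | h
      · exact hScone t h (Set.smul_mem_smul_set hs)
      · rw [← h, zero_smul]; exact hS0
    have := hE xb hxbD (G xb + t • s) hmem (f xb) le_rfl
    rw [map_add, map_smul, smul_eq_mul] at this
    linarith
  refine ⟨x3, z3, a, u, hanneg, hz3S, hE, ?_⟩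
  have : φ q = x3 q.1 + z3 q.2.1 + a * q.2.2 := by
    have hq' : q = (q.1, q.2.1, q.2.2) := rfl
    rw [hq', key]
  rwa [this] at hφq


theorem normFromSep {X Z : Type*}
    [AddCommGroup X] [Module ℝ X] [TopologicalSpace X]
    [AddCommGroup Z] [Module ℝ Z] [TopologicalSpace Z]
    {S : Set Z} (hS0 : (0:Z) ∈ S)
    {D : Set X} {G : X → Z} {f : X → ℝ}
    (x3 : X →L[ℝ] ℝ) (z3 : Z →L[ℝ] ℝ) {a u3 : ℝ} (hapos : 0 < a)
    (hz3 : ∀ s ∈ S, 0 ≤ z3 s)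
    (hEfull : ∀ x ∈ D, ∀ z : Z, z - G x ∈ S → ∀ t : ℝ, f x ≤ t → u3 < x3 x + z3 z + a * t) :
    (∀ s ∈ S, 0 ≤ (a⁻¹ • z3) s) ∧
    (∀ x ∈ D, ((-(a⁻¹)) • x3) x - f x - (a⁻¹ • z3) (G x) ≤ -(u3/a)) := by
  have hane : a ≠ 0 := ne_of_gt hapos
  constructor
  · intro s hs
    simp only [ContinuousLinearMap.smul_apply, smul_eq_mul]
    exact mul_nonneg (le_of_lt (inv_pos.mpr hapos)) (hz3 s hs)
  · intro x hx
    have h1 := hEfull x hx (G x) (by rw [sub_self]; exact hS0) (f x) le_rfl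
    have h2 := mul_lt_mul_of_pos_left h1 (inv_pos.mpr hapos)
    have h3 : a⁻¹ * (x3 x + z3 (G x) + a * f x)
        = a⁻¹ * x3 x + a⁻¹ * z3 (G x) + f x := by
      rw [mul_add, mul_add, inv_mul_cancel_left₀ hane]
    rw [h3] at h2
    simp only [ContinuousLinearMap.smul_apply, smul_eq_mul]
    rw [div_eq_inv_mul]
    linarith

set_option maxHeartbeats 2000000 in
theorem scalarKey {X Z : Type*}
    [AddCommGroup X] [Module ℝ X] [TopologicalSpace X] [IsTopologicalAddGroup X]
    [ContinuousSMul ℝ X] [LocallyConvexSpace ℝ X]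
    [AddCommGroup Z] [Module ℝ Z] [TopologicalSpace Z] [IsTopologicalAddGroup Z]
    [ContinuousSMul ℝ Z] [LocallyConvexSpace ℝ Z]
    {S : Set Z} (hS0 : (0:Z) ∈ S) (hScone : ∀ c : ℝ, 0 < c → c • S ⊆ S)
    {D : Set X} {G : X → Z} {f : X → ℝ}
    (hEcl : IsClosed {q : X × Z × ℝ | q.1 ∈ D ∧ q.2.1 - G q.1 ∈ S ∧ f q.1 ≤ q.2.2})
    (hEconv : Convex ℝ {q : X × Z × ℝ | q.1 ∈ D ∧ q.2.1 - G q.1 ∈ S ∧ f q.1 ≤ q.2.2})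
    {xb : X} (hxbD : xb ∈ D) (hxbG : -G xb ∈ S)
    (x₀ : X →L[ℝ] ℝ) (r₀ : ℝ)
    (hiii : ∀ x ∈ D, -G x ∈ S → x₀ x - f x ≤ r₀)
    (I : Finset X) (δ : ℝ) (hδ : 0 < δ) :
    ∃ (zs : Z →L[ℝ] ℝ) (xs : X →L[ℝ] ℝ) (r : ℝ),
      (∀ s ∈ S, 0 ≤ zs s) ∧ (∀ i ∈ I, |xs i - x₀ i| < δ) ∧ |r - r₀| < δ ∧
      ∀ x ∈ D, xs x - f x - zs (G x) ≤ r := by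
  classical
  by_contra hcon
  -- minorant
  obtain ⟨xm, wm, cm, hwmS, hmin⟩ : ∃ (xm : X →L[ℝ] ℝ) (wm : Z →L[ℝ] ℝ) (cm : ℝ),
      (∀ s ∈ S, 0 ≤ wm s) ∧ ∀ x ∈ D, xm x - f x - wm (G x) ≤ cm := by
    have hq : ((xb, G xb, f xb - 1) : X × Z × ℝ)
        ∉ {q : X × Z × ℝ | q.1 ∈ D ∧ q.2.1 - G q.1 ∈ S ∧ f q.1 ≤ q.2.2} := by
      intro hmem
      have := hmem.2.2
      simp only at this
      linarith
    obtain ⟨x3, z3, a, u3, _, hz3, hEfull, hqlt⟩ :=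
      sepStruct hS0 hScone hEcl hEconv hxbD _ hq
    have hbase := hEfull xb hxbD (G xb) (by rw [sub_self]; exact hS0) (f xb) le_rfl
    simp only at hqlt
    have hapos : 0 < a := by nlinarith [hqlt, hbase]
    obtain ⟨h1, h2⟩ := normFromSep hS0 x3 z3 hapos hz3 hEfull
    exact ⟨(-(a⁻¹)) • x3, a⁻¹ • z3, -(u3/a), h1, h2⟩
  -- separation space
  have hBPdisj : Disjoint
      {q : ({x // x ∈ I} → ℝ) × ℝ |
        (∀ i : {x // x ∈ I}, q.1 i ∈ Set.Ioo (x₀ i.1 - δ) (x₀ i.1 + δ)) ∧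
        q.2 ∈ Set.Ioo (r₀ - δ) (r₀ + δ)}
      {q : ({x // x ∈ I} → ℝ) × ℝ | ∃ (zs : Z →L[ℝ] ℝ) (xs : X →L[ℝ] ℝ),
        (∀ s ∈ S, 0 ≤ zs s) ∧ (∀ i : {x // x ∈ I}, q.1 i = xs i.1) ∧
        ∀ x ∈ D, xs x - f x - zs (G x) ≤ q.2} := by
    rw [Set.disjoint_left]
    rintro q ⟨hB1, hB2⟩ ⟨zs, xs, hzsS, hcoord, hconstr⟩
    apply hcon
    refine ⟨zs, xs, q.2, hzsS, ?_, ?_, hconstr⟩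
    · intro i hi
      have := hB1 ⟨i, hi⟩
      rw [← hcoord ⟨i, hi⟩]
      rw [Set.mem_Ioo] at this
      rw [abs_lt]
      constructor <;> linarith [this.1, this.2]
    · rw [Set.mem_Ioo] at hB2
      rw [abs_lt]
      constructor <;> linarith [hB2.1, hB2.2]
  have hBopen : IsOpen {q : ({x // x ∈ I} → ℝ) × ℝ |
      (∀ i : {x // x ∈ I}, q.1 i ∈ Set.Ioo (x₀ i.1 - δ) (x₀ i.1 + δ)) ∧
      q.2 ∈ Set.Ioo (r₀ - δ) (r₀ + δ)} := by
    have heq : {q : ({x // x ∈ I} → ℝ) × ℝ |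
        (∀ i : {x // x ∈ I}, q.1 i ∈ Set.Ioo (x₀ i.1 - δ) (x₀ i.1 + δ)) ∧
        q.2 ∈ Set.Ioo (r₀ - δ) (r₀ + δ)} =
        (⋂ i : {x // x ∈ I}, (fun q : ({x // x ∈ I} → ℝ) × ℝ => q.1 i) ⁻¹'
          Set.Ioo (x₀ i.1 - δ) (x₀ i.1 + δ)) ∩
        ((fun q : ({x // x ∈ I} → ℝ) × ℝ => q.2) ⁻¹' Set.Ioo (r₀ - δ) (r₀ + δ)) := by
      ext q
      simp only [Set.mem_setOf_eq, Set.mem_inter_iff, Set.mem_iInter, Set.mem_preimage]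
    rw [heq]
    refine IsOpen.inter (isOpen_iInter_of_finite fun i => ?_) (isOpen_Ioo.preimage continuous_snd)
    exact isOpen_Ioo.preimage ((continuous_apply i).comp continuous_fst)
  have hBconv : Convex ℝ {q : ({x // x ∈ I} → ℝ) × ℝ |
      (∀ i : {x // x ∈ I}, q.1 i ∈ Set.Ioo (x₀ i.1 - δ) (x₀ i.1 + δ)) ∧
      q.2 ∈ Set.Ioo (r₀ - δ) (r₀ + δ)} := by
    rintro q1 ⟨h11, h12⟩ q2 ⟨h21, h22⟩ a b ha hb hab
    constructor
    · intro i
      have := (convex_Ioo (x₀ i.1 - δ) (x₀ i.1 + δ)) (h11 i) (h21 i) ha hb hab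
      simpa using this
    · have := (convex_Ioo (r₀ - δ) (r₀ + δ)) h12 h22 ha hb hab
      simpa using this
  have hPconv : Convex ℝ {q : ({x // x ∈ I} → ℝ) × ℝ | ∃ (zs : Z →L[ℝ] ℝ) (xs : X →L[ℝ] ℝ),
      (∀ s ∈ S, 0 ≤ zs s) ∧ (∀ i : {x // x ∈ I}, q.1 i = xs i.1) ∧
      ∀ x ∈ D, xs x - f x - zs (G x) ≤ q.2} := by
    rintro q1 ⟨zs1, xs1, hz1, hc1, hcon1⟩ q2 ⟨zs2, xs2, hz2, hc2, hcon2⟩ a b ha hb hab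
    refine ⟨a • zs1 + b • zs2, a • xs1 + b • xs2, ?_, ?_, ?_⟩
    · intro s hs
      simp only [ContinuousLinearMap.add_apply, ContinuousLinearMap.smul_apply, smul_eq_mul]
      have := hz1 s hs; have := hz2 s hs
      positivity
    · intro i
      simp only [ContinuousLinearMap.add_apply, ContinuousLinearMap.smul_apply, smul_eq_mul,
        Prod.fst_add, Prod.smul_fst, Pi.add_apply, Pi.smul_apply]
      rw [hc1 i, hc2 i]
    · intro x hx
      have e1 := hcon1 x hx
      have e2 := hcon2 x hx
      simp only [ContinuousLinearMap.add_apply, ContinuousLinearMap.smul_apply, smul_eq_mul,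
        Prod.snd_add, Prod.smul_snd]
      have : a * (xs1 x - f x - zs1 (G x)) + b * (xs2 x - f x - zs2 (G x))
          ≤ a * q1.2 + b * q2.2 := by
        apply add_le_add
        · exact mul_le_mul_of_nonneg_left e1 ha
        · exact mul_le_mul_of_nonneg_left e2 hb
      have hf : a * f x + b * f x = f x := by rw [← add_mul, hab, one_mul]
      linarith [this, hf]
  obtain ⟨φ, u, hφB, hφP⟩ := geometric_hahn_banach_open hBconv hBopen hPconv hBPdisj
  -- decompose φ
  set ψ : ({x // x ∈ I} → ℝ) →L[ℝ] ℝ :=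
    φ.comp (ContinuousLinearMap.inl ℝ ({x // x ∈ I} → ℝ) ℝ) with hψ
  set sφ : ℝ := φ (0, 1) with hsφ
  have keyφ : ∀ (v : {x // x ∈ I} → ℝ) (r : ℝ),
      φ (v, r) = ψ v + r * sφ := by
    intro v r
    have hd : ((v, r) : ({x // x ∈ I} → ℝ) × ℝ) = (v, 0) + r • ((0 : {x // x ∈ I} → ℝ), 1) := by
      apply Prod.ext <;> simp
    rw [hd, map_add, map_smul, smul_eq_mul]
    rfl
  set xx0 : X := ∑ i : {x // x ∈ I}, ψ (Pi.single i 1) • (i.1 : X) with hxx0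
  have evalkey : ∀ (xs : X →L[ℝ] ℝ) (r : ℝ),
      φ ((fun i => xs i.1), r) = xs xx0 + r * sφ := by
    intro xs r
    rw [keyφ]
    congr 1
    have hv : (fun i : {x // x ∈ I} => xs i.1)
        = ∑ i : {x // x ∈ I}, (xs i.1) • (Pi.single i 1 : {x // x ∈ I} → ℝ) := by
      rw [← Finset.univ_sum_single (fun i : {x // x ∈ I} => xs i.1)]
      apply Finset.sum_congr rfl
      intro i _
      rw [← Pi.single_smul, smul_eq_mul, mul_one]
    rw [hv, map_sum, hxx0, map_sum]
    apply Finset.sum_congr rfl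
    intro i _
    rw [map_smul, map_smul, smul_eq_mul, smul_eq_mul, mul_comm]
  have hPineq : ∀ (zs : Z →L[ℝ] ℝ) (xs : X →L[ℝ] ℝ) (r : ℝ),
      (∀ s ∈ S, 0 ≤ zs s) → (∀ x ∈ D, xs x - f x - zs (G x) ≤ r) →
      u ≤ xs xx0 + r * sφ := by
    intro zs xs r h1 h2
    have := hφP ((fun i => xs i.1), r) ⟨zs, xs, h1, fun i => rfl, h2⟩
    rwa [evalkey] at this
  have hs0 : 0 ≤ sφ := by
    apply auxNonneg (u := u - 1) (c := xm xx0 + cm * sφ)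
    intro t ht
    have h1 := hPineq wm xm (cm + t) hwmS (fun x hx => le_trans (hmin x hx) (by linarith))
    nlinarith [h1]
  have hstar : x₀ xx0 + r₀ * sφ + (δ/2) * sφ < u := by
    have hc : (((fun i => x₀ i.1) : {x // x ∈ I} → ℝ), r₀ + δ/2) ∈
        {q : ({x // x ∈ I} → ℝ) × ℝ |
          (∀ i : {x // x ∈ I}, q.1 i ∈ Set.Ioo (x₀ i.1 - δ) (x₀ i.1 + δ)) ∧
          q.2 ∈ Set.Ioo (r₀ - δ) (r₀ + δ)} := by
      constructor
      · intro i
        rw [Set.mem_Ioo]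
        constructor <;> simp only <;> linarith
      · rw [Set.mem_Ioo]
        constructor <;> linarith
    have := hφB _ hc
    rw [evalkey] at this
    nlinarith [this]
  rcases hs0.lt_or_eq with hspos | hszero
  · -- sφ > 0
    have hsne : sφ ≠ 0 := ne_of_gt hspos
    have hp0E : (((-(sφ⁻¹)) • xx0, 0, -(u/sφ)) : X × Z × ℝ)
        ∈ {q : X × Z × ℝ | q.1 ∈ D ∧ q.2.1 - G q.1 ∈ S ∧ f q.1 ≤ q.2.2} := by
      by_contra hq
      obtain ⟨x3, z3, a, u3, ha, hz3, hEfull, hqlt⟩ :=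
        sepStruct hS0 hScone hEcl hEconv hxbD _ hq
      simp only at hqlt
      rw [map_zero, map_smul, smul_eq_mul] at hqlt
      -- hqlt : -sφ⁻¹ * x3 xx0 + 0 + a * -(u/sφ) < u3
      rcases ha.lt_or_eq with hapos | haz
      · obtain ⟨h1, h2⟩ := normFromSep hS0 x3 z3 hapos hz3 hEfull
        have hPel := hPineq _ _ _ h1 h2
        rw [ContinuousLinearMap.smul_apply, smul_eq_mul] at hPel
        have hane : a ≠ 0 := ne_of_gt hapos
        have e1 : sφ * (-sφ⁻¹ * x3 xx0 + 0 + a * -(u/sφ)) = -(x3 xx0) - a * u := by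
          field_simp
          ring
        have hq2 : -(x3 xx0) - a * u < u3 * sφ := by
          calc -(x3 xx0) - a * u = sφ * (-sφ⁻¹ * x3 xx0 + 0 + a * -(u/sφ)) := e1.symm
            _ < sφ * u3 := (mul_lt_mul_iff_right₀ hspos).mpr hqlt
            _ = u3 * sφ := mul_comm _ _
        have e2 : a * (-a⁻¹ * x3 xx0 + -(u3/a) * sφ) = -(x3 xx0) - u3 * sφ := by
          field_simp
          ring
        have hP2 : a * u ≤ -(x3 xx0) - u3 * sφ := by
          calc a * u ≤ a * (-a⁻¹ * x3 xx0 + -(u3/a) * sφ) :=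
              mul_le_mul_of_nonneg_left hPel (le_of_lt hapos)
            _ = -(x3 xx0) - u3 * sφ := e2
        linarith
      · -- a = 0
        have hA : x3 xx0 + u3 * sφ ≤ 0 := by
          have h0 : 0 ≤ -(x3 xx0 + u3 * sφ) := by
            apply auxNonneg (u := u - 1) (c := xm xx0 + cm * sφ)
            intro τ hτ
            have hzsS : ∀ s ∈ S, 0 ≤ (wm + τ • z3) s := by
              intro s hs
              simp only [ContinuousLinearMap.add_apply, ContinuousLinearMap.smul_apply,
                smul_eq_mul]
              have := hwmS s hs; have := hz3 s hs
              positivity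
            have hconstr : ∀ x ∈ D,
                (xm - τ • x3) x - f x - (wm + τ • z3) (G x) ≤ cm - τ * u3 := by
              intro x hx
              have hE := hEfull x hx (G x) (by rw [sub_self]; exact hS0) (f x) le_rfl
              rw [← haz, zero_mul, add_zero] at hE
              have hm := hmin x hx
              simp only [ContinuousLinearMap.sub_apply, ContinuousLinearMap.add_apply,
                ContinuousLinearMap.smul_apply, smul_eq_mul]
              nlinarith [mul_le_mul_of_nonneg_left (le_of_lt hE) hτ]
            have hPel := hPineq _ _ _ hzsS hconstr
            rw [ContinuousLinearMap.sub_apply, ContinuousLinearMap.smul_apply,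
              smul_eq_mul] at hPel
            nlinarith [hPel]
          linarith
        rw [← haz, zero_mul, add_zero] at hqlt
        have := (mul_lt_mul_iff_right₀ hspos).mpr hqlt
        have e : sφ * (-sφ⁻¹ * x3 xx0 + 0) = -(x3 xx0) := by
          field_simp
          ring
        rw [e] at this
        nlinarith [this, hA]
    obtain ⟨hp0D, hp0S, hp0f⟩ := hp0E
    rw [zero_sub] at hp0S
    have h1 := hiii _ hp0D hp0S
    rw [map_smul, smul_eq_mul] at h1
    simp only at hp0f
    have h2 : -sφ⁻¹ * x₀ xx0 + u/sφ ≤ r₀ := by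
      have : -(sφ⁻¹) * x₀ xx0 - f ((-(sφ⁻¹)) • xx0) ≤ r₀ := h1
      have h4 : f ((-(sφ⁻¹)) • xx0) ≤ -(u/sφ) := hp0f
      linarith
    have e : sφ * (-sφ⁻¹ * x₀ xx0 + u/sφ) = -(x₀ xx0) + u := by
      field_simp
    have h3 : -(x₀ xx0) + u ≤ r₀ * sφ := by
      calc -(x₀ xx0) + u = sφ * (-sφ⁻¹ * x₀ xx0 + u/sφ) := e.symm
        _ ≤ sφ * r₀ := mul_le_mul_of_nonneg_left h2 (le_of_lt hspos)
        _ = r₀ * sφ := mul_comm _ _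
    nlinarith [hstar, mul_pos (half_pos hδ) hspos]
  · -- sφ = 0
    rw [← hszero, mul_zero, mul_zero, add_zero, add_zero] at hstar
    have hlt : x₀ xx0 < u := hstar
    have hPx : ∀ (zs : Z →L[ℝ] ℝ) (xs : X →L[ℝ] ℝ) (r : ℝ),
        (∀ s ∈ S, 0 ≤ zs s) → (∀ x ∈ D, xs x - f x - zs (G x) ≤ r) → u ≤ xs xx0 := by
      intro zs xs r h1 h2
      have := hPineq zs xs r h1 h2
      rw [← hszero, mul_zero, add_zero] at this
      exact this
    set Cst : ℝ := r₀ - x₀ xb + f xb + 1 with hCst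
    set d : ℝ := u - x₀ xx0 with hd
    have hdpos : 0 < d := by rw [hd]; linarith
    set t : ℝ := max 0 ((Cst + 1)/d) with ht
    have ht0 : 0 ≤ t := le_max_left _ _
    have hqtE : ((xb - t • xx0, 0, f xb - t * u + 1) : X × Z × ℝ)
        ∈ {q : X × Z × ℝ | q.1 ∈ D ∧ q.2.1 - G q.1 ∈ S ∧ f q.1 ≤ q.2.2} := by
      by_contra hq
      obtain ⟨x3, z3, a, u3, ha, hz3, hEfull, hqlt⟩ :=
        sepStruct hS0 hScone hEcl hEconv hxbD _ hq
      simp only at hqlt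
      rw [map_zero, map_sub, map_smul, smul_eq_mul] at hqlt
      have hbase := hEfull xb hxbD (G xb) (by rw [sub_self]; exact hS0) (f xb) le_rfl
      have hz3G : z3 (G xb) ≤ 0 := by
        have := hz3 _ hxbG; rw [map_neg] at this; linarith
      rcases ha.lt_or_eq with hapos | haz
      · obtain ⟨h1, h2⟩ := normFromSep hS0 x3 z3 hapos hz3 hEfull
        have hPel := hPx _ _ _ h1 h2
        rw [ContinuousLinearMap.smul_apply, smul_eq_mul] at hPel
        have hane : a ≠ 0 := ne_of_gt hapos
        have e2 : a * (-a⁻¹ * x3 xx0) = -(x3 xx0) := by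
          field_simp
        have hA : a * u ≤ -(x3 xx0) := by
          calc a * u ≤ a * (-a⁻¹ * x3 xx0) :=
              mul_le_mul_of_nonneg_left hPel (le_of_lt hapos)
            _ = -(x3 xx0) := e2
        have htA : t * x3 xx0 ≤ t * -(a*u) := mul_le_mul_of_nonneg_left (by linarith) ht0
        nlinarith [hqlt, hbase, hz3G, htA, hapos]
      · have hA : x3 xx0 ≤ 0 := by
          have h0 : 0 ≤ -(x3 xx0) := by
            apply auxNonneg (u := u - 1) (c := xm xx0)
            intro τ hτ
            have hzsS : ∀ s ∈ S, 0 ≤ (wm + τ • z3) s := by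
              intro s hs
              simp only [ContinuousLinearMap.add_apply, ContinuousLinearMap.smul_apply,
                smul_eq_mul]
              have := hwmS s hs; have := hz3 s hs
              positivity
            have hconstr : ∀ x ∈ D,
                (xm - τ • x3) x - f x - (wm + τ • z3) (G x) ≤ cm - τ * u3 := by
              intro x hx
              have hE := hEfull x hx (G x) (by rw [sub_self]; exact hS0) (f x) le_rfl
              rw [← haz, zero_mul, add_zero] at hE
              have hm := hmin x hx
              simp only [ContinuousLinearMap.sub_apply, ContinuousLinearMap.add_apply,
                ContinuousLinearMap.smul_apply, smul_eq_mul]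
              nlinarith [mul_le_mul_of_nonneg_left (le_of_lt hE) hτ]
            have hPel := hPx _ _ _ hzsS hconstr
            rw [ContinuousLinearMap.sub_apply, ContinuousLinearMap.smul_apply,
              smul_eq_mul] at hPel
            nlinarith [hPel]
          linarith
        rw [← haz, zero_mul, add_zero] at hbase
        rw [← haz, zero_mul, add_zero] at hqlt
        nlinarith [mul_nonneg ht0 (neg_nonneg.mpr hA), hbase, hz3G, hqlt]
    obtain ⟨hqtD, hqtS, hqtf⟩ := hqtE
    rw [zero_sub] at hqtS
    have h1 := hiii _ hqtD hqtS
    rw [map_sub, map_smul, smul_eq_mul] at h1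
    simp only at hqtf
    have htd : t * d ≤ Cst := by
      rw [hd, hCst]
      nlinarith [h1, hqtf]
    have hge : (Cst + 1)/d ≤ t := le_max_right _ _
    rw [div_le_iff₀ hdpos] at hge
    nlinarith [htd, hge]
set_option maxHeartbeats 2000000 in
theorem stmt10 {X Y Z : Type*}
    [AddCommGroup X] [Module ℝ X] [TopologicalSpace X] [IsTopologicalAddGroup X]
    [ContinuousSMul ℝ X] [T2Space X] [LocallyConvexSpace ℝ X]
    [AddCommGroup Y] [Module ℝ Y] [TopologicalSpace Y] [IsTopologicalAddGroup Y]
    [ContinuousSMul ℝ Y] [T2Space Y] [LocallyConvexSpace ℝ Y]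
    [AddCommGroup Z] [Module ℝ Z] [TopologicalSpace Z] [IsTopologicalAddGroup Z]
    [ContinuousSMul ℝ Z] [T2Space Z] [LocallyConvexSpace ℝ Z]
    (K : Set Y) (hKcl : IsClosed K) (hKconv : Convex ℝ K)
    (hKcone : ∀ c : ℝ, 0 < c → c • K ⊆ K) (hK0 : (0:Y) ∈ K)
    (hKpointed : K ∩ (-K) ⊆ {0}) (hKint : (interior K).Nonempty)
    (S : Set Z) (hScl : IsClosed S) (hSconv : Convex ℝ S)
    (hScone : ∀ c : ℝ, 0 < c → c • S ⊆ S) (hS0 : (0:Z) ∈ S)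
    (C : Set X) (hCne : C.Nonempty) (hCcl : IsClosed C) (hCconv : Convex ℝ C)
    (F : X → Y) (domF : Set X) (hFprop : domF.Nonempty)
    (hFconv : Convex ℝ {p : X × Y | p.1 ∈ domF ∧ p.2 - F p.1 ∈ K})
    (hFlsc : ∀ y' : Y →L[ℝ] ℝ,
      IsClosed {p : X × ℝ | p.1 ∈ domF ∧ y' (F p.1) ≤ p.2})
    (G : X → Z) (domG : Set X) (hGprop : domG.Nonempty)
    (hGconv : Convex ℝ {p : X × Z | p.1 ∈ domG ∧ p.2 - G p.1 ∈ S})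
    (hGcl : IsClosed {p : X × Z | p.1 ∈ domG ∧ p.2 - G p.1 ∈ S})
    (A : Set X) (hA : A = {x | x ∈ C ∧ x ∈ domG ∧ G x ∈ -S})
    (hAF : (A ∩ domF).Nonempty) :
    epiConj K F (A ∩ domF) =
      @closure ((X →L[ℝ] Y) × Y)
        (@instTopologicalSpaceProd (X →L[ℝ] Y) Y
      (TopologicalSpace.induced (fun L : X →L[ℝ] Y => (⇑L : X → Y)) Pi.topologicalSpace) _)
        (⋃ T ∈ {T : Z →L[ℝ] Y | ⇑T '' S ⊆ K},
          epiConj K (fun x => F x + T (G x)) (C ∩ domF ∩ domG)) := by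
  classical
  obtain ⟨k0, hk0⟩ := hKint
  obtain ⟨xbar, hxbar⟩ := hAF
  have hxbarC : xbar ∈ C := by
    have := hxbar.1; rw [hA] at this; exact this.1
  have hxbarG : xbar ∈ domG := by
    have := hxbar.1; rw [hA] at this; exact this.2.1
  have hxbarGS : -G xbar ∈ S := by
    have := hxbar.1; rw [hA] at this
    exact Set.mem_neg.mp this.2.2
  have hAFD : A ∩ domF ⊆ C ∩ domF ∩ domG := by
    intro x hx
    have hxA := hx.1; rw [hA] at hxA
    exact ⟨⟨hxA.1, hx.2⟩, hxA.2.1⟩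
  have hDne : (C ∩ domF ∩ domG).Nonempty := ⟨xbar, hAFD hxbar⟩
  -- topology conversion
  have htopeq : (@instTopologicalSpaceProd (X →L[ℝ] Y) Y
        (TopologicalSpace.induced (fun L : X →L[ℝ] Y => (⇑L : X → Y)) Pi.topologicalSpace)
        _)
      = TopologicalSpace.induced
          (fun p : (X →L[ℝ] Y) × Y => ((fun L : X →L[ℝ] Y => (⇑L : X → Y)) p.1, id p.2))
          instTopologicalSpaceProd := by
    have h1 := prod_induced_induced (fun L : X →L[ℝ] Y => (⇑L : X → Y)) (id : Y → Y)
    rwa [induced_id] at h1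
  rw [htopeq]
  ext p
  constructor
  · -- deep direction
    intro hp
    rw [closure_induced, mem_closure_iff]
    intro o ho hpo
    obtain ⟨o₁, o₂, ho₁, ho₂, hmem₁, hmem₂, hsub⟩ := isOpen_prod_iff.mp ho _ _ hpo
    obtain ⟨I, v, hIv, hIsub⟩ := isOpen_pi_iff.mp ho₁ _ hmem₁
    -- epsilons
    have hex : ∀ i ∈ I, ∃ ε > 0, ∀ c : ℝ, |c| < ε → p.1 i + c • k0 ∈ v i := by
      intro i hi
      have hcont : Continuous fun c : ℝ => p.1 i + c • k0 :=
        continuous_const.add (continuous_id.smul continuous_const)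
      have hO := (hIv i hi).1.preimage hcont
      have h0 : (0:ℝ) ∈ (fun c : ℝ => p.1 i + c • k0) ⁻¹' v i := by
        simp only [Set.mem_preimage, zero_smul, add_zero]
        exact (hIv i hi).2
      obtain ⟨ε, hε, hball⟩ := Metric.isOpen_iff.mp hO 0 h0
      exact ⟨ε, hε, fun c hc => hball (by
        rw [Metric.mem_ball, dist_zero_right, Real.norm_eq_abs]; exact hc)⟩
    choose εf hεf1 hεf2 using hex
    have hex0 : ∃ ε > 0, ∀ c : ℝ, |c| < ε → p.2 + c • k0 ∈ o₂ := by
      have hcont : Continuous fun c : ℝ => p.2 + c • k0 :=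
        continuous_const.add (continuous_id.smul continuous_const)
      have hO := ho₂.preimage hcont
      have h0 : (0:ℝ) ∈ (fun c : ℝ => p.2 + c • k0) ⁻¹' o₂ := by
        simp only [Set.mem_preimage, zero_smul, add_zero]
        exact hmem₂
      obtain ⟨ε, hε, hball⟩ := Metric.isOpen_iff.mp hO 0 h0
      exact ⟨ε, hε, fun c hc => hball (by
        rw [Metric.mem_ball, dist_zero_right, Real.norm_eq_abs]; exact hc)⟩
    obtain ⟨ε0, hε0, hb0⟩ := hex0
    set δ : ℝ := (insert ε0 (I.attach.image fun i => εf i.1 i.2)).min'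
      (Finset.insert_nonempty _ _) with hδdef
    have hδpos : 0 < δ := by
      have hmem := (insert ε0 (I.attach.image fun i => εf i.1 i.2)).min'_mem
        (Finset.insert_nonempty _ _)
      rw [← hδdef] at hmem
      rcases Finset.mem_insert.mp hmem with h | h
      · rw [h]; exact hε0
      · obtain ⟨i, _, hi⟩ := Finset.mem_image.mp h
        rw [← hi]; exact hεf1 i.1 i.2
    have hδle : ∀ i (hi : i ∈ I), δ ≤ εf i hi := by
      intro i hi
      apply Finset.min'_le
      exact Finset.mem_insert_of_mem (Finset.mem_image.mpr ⟨⟨i, hi⟩, Finset.mem_attach _ _, rfl⟩)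
    have hδ0 : δ ≤ ε0 := Finset.min'_le _ _ (Finset.mem_insert_self _ _)
    -- separation for ys
    have hpnot := epiConjMemImp hKconv hKcone hp
    obtain ⟨φy, u0, hφO, hφMK⟩ :
        ∃ (φy : Y →L[ℝ] ℝ) (u0 : ℝ),
          (∀ w ∈ {w : Y | ∃ k ∈ interior K, w = p.2 + k}, φy w < u0) ∧
          (∀ w ∈ {w : Y | ∃ x ∈ A ∩ domF, ∃ k ∈ K, w = p.1 x - F x - k}, u0 ≤ φy w) := by
      apply geometric_hahn_banach_open
      · -- convex O
        have heq : {w : Y | ∃ k ∈ interior K, w = p.2 + k} = (fun k => p.2 + k) '' interior K := by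
          ext w; constructor
          · rintro ⟨k, hk, rfl⟩; exact ⟨k, hk, rfl⟩
          · rintro ⟨k, hk, rfl⟩; exact ⟨k, hk, rfl⟩
        rw [heq]
        exact (hKconv.interior).translate p.2
      · -- open O
        have heq : {w : Y | ∃ k ∈ interior K, w = p.2 + k} = (fun k => p.2 + k) '' interior K := by
          ext w; constructor
          · rintro ⟨k, hk, rfl⟩; exact ⟨k, hk, rfl⟩
          · rintro ⟨k, hk, rfl⟩; exact ⟨k, hk, rfl⟩
        rw [heq]
        exact (Homeomorph.addLeft p.2).isOpenMap _ isOpen_interior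
      · -- convex MK
        rintro w1 ⟨x1, hx1, k1, hk1, rfl⟩ w2 ⟨x2, hx2, k2, hk2, rfl⟩ a b ha hb hab
        have hx1A := hx1.1; rw [hA] at hx1A
        have hx2A := hx2.1; rw [hA] at hx2A
        have hGmem : (a • x1 + b • x2) ∈ domG ∧ ((0:Z) - G (a • x1 + b • x2)) ∈ S := by
          have h1 : ((x1, (0:Z)) : X × Z) ∈ {p : X × Z | p.1 ∈ domG ∧ p.2 - G p.1 ∈ S} :=
            ⟨hx1A.2.1, by rw [zero_sub]; exact Set.mem_neg.mp hx1A.2.2⟩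
          have h2 : ((x2, (0:Z)) : X × Z) ∈ {p : X × Z | p.1 ∈ domG ∧ p.2 - G p.1 ∈ S} :=
            ⟨hx2A.2.1, by rw [zero_sub]; exact Set.mem_neg.mp hx2A.2.2⟩
          have := hGconv h1 h2 ha hb hab
          simpa using this
        have hFmem : (a • x1 + b • x2) ∈ domF ∧
            (a • F x1 + b • F x2) - F (a • x1 + b • x2) ∈ K := by
          have h1 : ((x1, F x1) : X × Y) ∈ {p : X × Y | p.1 ∈ domF ∧ p.2 - F p.1 ∈ K} :=
            ⟨hx1.2, by rw [sub_self]; exact hK0⟩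
          have h2 : ((x2, F x2) : X × Y) ∈ {p : X × Y | p.1 ∈ domF ∧ p.2 - F p.1 ∈ K} :=
            ⟨hx2.2, by rw [sub_self]; exact hK0⟩
          have := hFconv h1 h2 ha hb hab
          simpa using this
        refine ⟨a • x1 + b • x2, ⟨?_, hFmem.1⟩,
          ((a • F x1 + b • F x2) - F (a • x1 + b • x2)) + (a • k1 + b • k2), ?_, ?_⟩
        · rw [hA]
          refine ⟨hCconv hx1A.1 hx2A.1 ha hb hab, hGmem.1, ?_⟩
          rw [Set.mem_neg]
          have := hGmem.2; rwa [zero_sub] at this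
        · refine addMemK hKconv hKcone _ hFmem.2 _
            (addMemK hKconv hKcone _ (smulMemK hKcone hK0 a ha _ hk1) _
              (smulMemK hKcone hK0 b hb _ hk2))
        · rw [map_add, map_smul, map_smul]
          module
      · -- disjoint
        rw [Set.disjoint_left]
        rintro w ⟨k, hkI, rfl⟩ ⟨x, hx, k', hk', heq⟩
        apply hpnot x hx
        have h3 : p.1 x - F x = p.2 + k + k' := by
          have h4 : p.1 x - F x - k' = p.2 + k := heq.symm
          rw [sub_eq_iff_eq_add] at h4
          rw [h4]
        have h5 : p.1 x - F x - p.2 = k + k' := by rw [h3]; abel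
        rw [h5]
        exact intAddK hKconv hKcone _ hkI _ hk'
    -- properties of the separating functional
    have hm0 : ∀ k ∈ K, u0 ≤ φy (p.1 xbar - F xbar - k) := fun k hk =>
      hφMK _ ⟨xbar, hxbar, k, hk, rfl⟩
    have hφyK : ∀ k ∈ K, φy k ≤ 0 := by
      intro k hk
      by_contra hpos
      push_neg at hpos
      have hm00 := hm0 0 hK0
      rw [sub_zero] at hm00
      set t : ℝ := (φy (p.1 xbar - F xbar) - u0 + 1) / φy k with htdef
      have htpos : 0 < t := div_pos (by linarith) hpos
      have hineq := hm0 (t • k) (smulMemK hKcone hK0 t (le_of_lt htpos) k hk)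
      rw [map_sub, map_smul, smul_eq_mul] at hineq
      have he : t * φy k = φy (p.1 xbar - F xbar) - u0 + 1 := by
        rw [htdef]; field_simp
      rw [he] at hineq
      linarith
    have hφyk0 : φy k0 ≤ 0 := hφyK k0 (interior_subset hk0)
    have hφyp2 : φy p.2 ≤ u0 := by
      by_contra hgt
      push_neg at hgt
      rcases hφyk0.lt_or_eq with hneg | hzero
      · set t : ℝ := (φy p.2 - u0) / (-2 * φy k0) with htdef
        have htpos : 0 < t := div_pos (by linarith) (by linarith)
        have hmem := hφO _ ⟨t • k0, smulMemIntK hKcone t htpos k0 hk0, rfl⟩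
        rw [map_add, map_smul, smul_eq_mul] at hmem
        have hne0 : φy k0 ≠ 0 := ne_of_lt hneg
        have he : t * φy k0 = -(φy p.2 - u0)/2 := by
          rw [htdef]; field_simp
        rw [he] at hmem
        linarith
      · have hmem := hφO _ ⟨k0, hk0, rfl⟩
        rw [map_add, hzero] at hmem
        linarith
    have hφyne : φy ≠ 0 := by
      intro h
      have h1 := hφO _ ⟨k0, hk0, rfl⟩
      have h2 := hm0 0 hK0
      rw [h] at h1 h2
      simp only [ContinuousLinearMap.zero_apply] at h1 h2
      linarith
    set ys : Y →L[ℝ] ℝ := -φy with hysdef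
    have hysK : ∀ k ∈ K, 0 ≤ ys k := by
      intro k hk
      rw [hysdef]
      simp only [ContinuousLinearMap.neg_apply, neg_nonneg]
      exact hφyK k hk
    have hysne : ys ≠ 0 := by
      rw [hysdef]
      intro h
      exact hφyne (by rwa [neg_eq_zero] at h)
    have hysk0 : 0 < ys k0 := posOnInt hysK hysne k0 hk0
    have hysmain : ∀ x ∈ A ∩ domF, ys (p.1 x - F x) ≤ ys p.2 := by
      intro x hx
      have h1 : u0 ≤ φy (p.1 x - F x) := hφMK _ ⟨x, hx, 0, hK0, by rw [sub_zero]⟩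
      rw [hysdef]
      simp only [ContinuousLinearMap.neg_apply]
      linarith [hφyp2]
    set ty : Y →L[ℝ] ℝ := (ys k0)⁻¹ • ys with htydef
    have htyk0 : ty k0 = 1 := by
      rw [htydef]
      simp only [ContinuousLinearMap.smul_apply, smul_eq_mul]
      exact inv_mul_cancel₀ (ne_of_gt hysk0)
    have htyK : ∀ k ∈ K, 0 ≤ ty k := by
      intro k hk
      rw [htydef]
      simp only [ContinuousLinearMap.smul_apply, smul_eq_mul]
      exact mul_nonneg (le_of_lt (inv_pos.mpr hysk0)) (hysK k hk)
    have htyne : ty ≠ 0 := by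
      intro h
      rw [h] at htyk0
      simp at htyk0
    have htyint : ∀ w ∈ interior K, 0 < ty w := posOnInt htyK htyne
    -- scalar data
    set fsc : X → ℝ := fun x => ty (F x) with hfsc
    set x0s : X →L[ℝ] ℝ := ty.comp p.1 with hx0s
    set r0s : ℝ := ty p.2 with hr0s
    have hiii : ∀ x ∈ C ∩ domF ∩ domG, -G x ∈ S → x0s x - fsc x ≤ r0s := by
      intro x hxD hxS
      have hxAF : x ∈ A ∩ domF := by
        refine ⟨?_, hxD.1.2⟩
        rw [hA]
        exact ⟨hxD.1.1, hxD.2, Set.mem_neg.mpr hxS⟩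
      have h1 := hysmain x hxAF
      have h2 : x0s x - fsc x = (ys k0)⁻¹ * ys (p.1 x - F x) := by
        rw [hx0s, hfsc, htydef]
        simp only [ContinuousLinearMap.comp_apply, ContinuousLinearMap.smul_apply, smul_eq_mul]
        rw [map_sub]
        ring
      rw [h2, hr0s, htydef]
      simp only [ContinuousLinearMap.smul_apply, smul_eq_mul]
      exact mul_le_mul_of_nonneg_left h1 (le_of_lt (inv_pos.mpr hysk0))
    -- E closed
    have hEcl : IsClosed {q : X × Z × ℝ | q.1 ∈ C ∩ domF ∩ domG ∧ q.2.1 - G q.1 ∈ S ∧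
        fsc q.1 ≤ q.2.2} := by
      have heq : {q : X × Z × ℝ | q.1 ∈ C ∩ domF ∩ domG ∧ q.2.1 - G q.1 ∈ S ∧ fsc q.1 ≤ q.2.2}
          = ((fun q : X × Z × ℝ => q.1) ⁻¹' C) ∩
            ((fun q : X × Z × ℝ => (q.1, q.2.1)) ⁻¹'
              {pp : X × Z | pp.1 ∈ domG ∧ pp.2 - G pp.1 ∈ S}) ∩
            ((fun q : X × Z × ℝ => (q.1, q.2.2)) ⁻¹'
              {pp : X × ℝ | pp.1 ∈ domF ∧ ty (F pp.1) ≤ pp.2}) := by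
        ext q
        simp only [Set.mem_setOf_eq, Set.mem_inter_iff, Set.mem_preimage, hfsc]
        tauto
      rw [heq]
      refine IsClosed.inter (IsClosed.inter ?_ ?_) ?_
      · exact hCcl.preimage continuous_fst
      · exact hGcl.preimage (continuous_fst.prodMk (continuous_fst.comp continuous_snd))
      · exact (hFlsc ty).preimage (continuous_fst.prodMk (continuous_snd.comp continuous_snd))
    -- E convex
    have hEconv : Convex ℝ {q : X × Z × ℝ | q.1 ∈ C ∩ domF ∩ domG ∧ q.2.1 - G q.1 ∈ S ∧
        fsc q.1 ≤ q.2.2} := by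
      rintro ⟨x1, z1, t1⟩ ⟨hq1D', hq1S', hq1f'⟩ ⟨x2, z2, t2⟩ ⟨hq2D', hq2S', hq2f'⟩ a b ha hb hab
      have hq1D : x1 ∈ C ∩ domF ∩ domG := hq1D'
      have hq1S : z1 - G x1 ∈ S := hq1S'
      have hq1f : fsc x1 ≤ t1 := hq1f'
      have hq2D : x2 ∈ C ∩ domF ∩ domG := hq2D'
      have hq2S : z2 - G x2 ∈ S := hq2S'
      have hq2f : fsc x2 ≤ t2 := hq2f'
      have hGm : (a • x1 + b • x2) ∈ domG ∧ (a • z1 + b • z2) - G (a • x1 + b • x2) ∈ S := by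
        have h1 : ((x1, z1) : X × Z) ∈ {pp : X × Z | pp.1 ∈ domG ∧ pp.2 - G pp.1 ∈ S} :=
          ⟨hq1D.2, hq1S⟩
        have h2 : ((x2, z2) : X × Z) ∈ {pp : X × Z | pp.1 ∈ domG ∧ pp.2 - G pp.1 ∈ S} :=
          ⟨hq2D.2, hq2S⟩
        have := hGconv h1 h2 ha hb hab
        simpa using this
      have hFm : (a • x1 + b • x2) ∈ domF ∧
          (a • (F x1 + (t1 - fsc x1) • k0) + b • (F x2 + (t2 - fsc x2) • k0))
            - F (a • x1 + b • x2) ∈ K := by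
        have h1 : ((x1, F x1 + (t1 - fsc x1) • k0) : X × Y) ∈
            {pp : X × Y | pp.1 ∈ domF ∧ pp.2 - F pp.1 ∈ K} := by
          refine ⟨hq1D.1.2, ?_⟩
          rw [add_sub_cancel_left]
          exact smulMemK hKcone hK0 _ (by linarith [hq1f]) _ (interior_subset hk0)
        have h2 : ((x2, F x2 + (t2 - fsc x2) • k0) : X × Y) ∈
            {pp : X × Y | pp.1 ∈ domF ∧ pp.2 - F pp.1 ∈ K} := by
          refine ⟨hq2D.1.2, ?_⟩
          rw [add_sub_cancel_left]
          exact smulMemK hKcone hK0 _ (by linarith [hq2f]) _ (interior_subset hk0)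
        have := hFconv h1 h2 ha hb hab
        simpa using this
      refine ⟨⟨⟨hCconv hq1D.1.1 hq2D.1.1 ha hb hab, hFm.1⟩, hGm.1⟩, hGm.2, ?_⟩
      have hty0 := htyK _ hFm.2
      rw [map_sub] at hty0
      have he : ty (a • (F x1 + (t1 - fsc x1) • k0) + b • (F x2 + (t2 - fsc x2) • k0))
          = a * t1 + b * t2 := by
        rw [map_add, map_smul, map_smul, map_add, map_add, map_smul, map_smul, htyk0]
        simp only [smul_eq_mul, mul_one, hfsc]
        ring
      rw [he] at hty0
      show ty (F (a • x1 + b • x2)) ≤ a * t1 + b * t2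
      linarith [hty0]
    -- apply scalar key
    obtain ⟨zs, xs, r, hzsS, hxsclose, hrclose, hlast⟩ :=
      scalarKey hS0 hScone hEcl hEconv (hAFD hxbar) hxbarGS x0s r0s hiii I δ hδpos
    set T : Z →L[ℝ] Y := zs.smulRight k0 with hT
    have hTK : ⇑T '' S ⊆ K := by
      rintro _ ⟨s, hs, rfl⟩
      rw [hT]
      simp only [ContinuousLinearMap.smulRight_apply]
      exact smulMemK hKcone hK0 _ (hzsS s hs) _ (interior_subset hk0)
    set L' : X →L[ℝ] Y := p.1 + (xs - x0s).smulRight k0 with hL'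
    set y' : Y := p.2 + (r - r0s) • k0 with hy'
    have hL'app : ∀ x' : X, L' x' = p.1 x' + (xs x' - x0s x') • k0 := by
      intro x'
      rw [hL']
      simp [ContinuousLinearMap.smulRight_apply]
    have hmem' : (L', y') ∈ epiConj K (fun x => F x + T (G x)) (C ∩ domF ∩ domG) := by
      apply epiConjMemOf hKconv hKcone hK0 hk0 hDne
      intro x hxD hmem
      have hty0 := htyint _ hmem
      have he : ty ((L', y').1 x - (F x + T (G x)) - (L', y').2)
          = xs x - fsc x - zs (G x) - r := by
        show ty (L' x - (F x + T (G x)) - y') = _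
        rw [map_sub, map_sub, map_add, hL'app, map_add, map_smul, hy', map_add, map_smul]
        rw [hT]
        simp only [ContinuousLinearMap.smulRight_apply, map_smul]
        rw [smul_eq_mul, smul_eq_mul, smul_eq_mul, htyk0]
        rw [hx0s]
        simp only [ContinuousLinearMap.comp_apply]
        rw [hfsc, hr0s]
        ring
      rw [he] at hty0
      have := hlast x hxD
      linarith
    refine ⟨((⇑L' : X → Y), y'), hsub ⟨?_, ?_⟩, ⟨(L', y'), ?_, rfl⟩⟩
    · apply hIsub
      rw [Set.mem_pi]
      intro i hi
      show L' i ∈ v i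
      rw [hL'app]
      exact hεf2 i hi _ (lt_of_lt_of_le (hxsclose i hi) (hδle i hi))
    · show y' ∈ o₂
      rw [hy']
      exact hb0 _ (lt_of_lt_of_le hrclose hδ0)
    · simp only [Set.mem_iUnion]
      exact ⟨T, hTK, hmem'⟩

  · -- easy direction
    intro hp
    rw [closure_induced] at hp
    apply epiConjMemOf hKconv hKcone hK0 hk0 ⟨xbar, hxbar⟩
    intro x hx
    have hxA := hx.1; rw [hA] at hxA
    have hQsub : closure ((fun p : (X →L[ℝ] Y) × Y =>
          ((fun L : X →L[ℝ] Y => (⇑L : X → Y)) p.1, id p.2)) ''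
          (⋃ T ∈ {T : Z →L[ℝ] Y | ⇑T '' S ⊆ K},
            epiConj K (fun x => F x + T (G x)) (C ∩ domF ∩ domG)))
        ⊆ {q : (X → Y) × Y | q.1 x - F x - q.2 ∉ interior K} := by
      apply closure_minimal
      · rintro _ ⟨q, hqU, rfl⟩
        simp only [Set.mem_iUnion] at hqU
        obtain ⟨T, hT, hq⟩ := hqU
        have himp := epiConjMemImp hKconv hKcone hq x (hAFD hx)
        intro hmem
        apply himp
        have hTGx : -(T (G x)) ∈ K := by
          have hmGS : -G x ∈ S := Set.mem_neg.mp hxA.2.2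
          have := hT ⟨-G x, hmGS, rfl⟩
          rwa [map_neg] at this
        have heq : q.1 x - (F x + T (G x)) - q.2
            = (q.1 x - F x - q.2) + -(T (G x)) := by abel
        rw [heq]
        exact intAddK hKconv hKcone _ hmem _ hTGx
      · have heq : {q : (X → Y) × Y | q.1 x - F x - q.2 ∉ interior K}
            = ((fun q : (X → Y) × Y => q.1 x - F x - q.2) ⁻¹' interior K)ᶜ := rfl
        rw [heq]
        exact (isOpen_interior.preimage ((((continuous_apply x).comp continuous_fst).sub
          continuous_const).sub continuous_snd)).isClosed_compl
    exact hQsub hp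
end

section
/- (Non-asymptotic representation) Under the setting above, with C a nonempty convex subset of X, F proper K-convex, G proper S-convex, A := C ∩ G⁻¹(−S), A ∩ dom F ≠ ∅, and assuming the Slater condition: there exists x̄ ∈ C ∩ dom F with G(x̄) ∈ −int S; then epi_K(F + I_A)* = ⋃_{T ∈ L₊(S,K)} epi_K(F + I_C + T∘G)*, without closure. -/
open Set Pointwise Topology

open Filter
set_option linter.unusedSectionVars false
set_option linter.unusedSectionVars false

section ConeFacts
variable {Y : Type*} [AddCommGroup Y] [Module ℝ Y] [TopologicalSpace Y]
  [IsTopologicalAddGroup Y] [ContinuousSMul ℝ Y]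

lemma cone_add_subset {K : Set Y} (hconv : Convex ℝ K)
    (hcone : ∀ c : ℝ, 0 < c → c • K ⊆ K) : K + K ⊆ K := by
  rintro u ⟨a, ha, b, hb, rfl⟩
  have hmid : (1/2 : ℝ) • a + (1/2 : ℝ) • b ∈ K :=
    hconv ha hb (by norm_num) (by norm_num) (by norm_num)
  have h2 : (2:ℝ) • ((1/2 : ℝ) • a + (1/2 : ℝ) • b) ∈ K :=
    hcone 2 (by norm_num) (smul_mem_smul_set hmid)
  have h3 : (2:ℝ) • ((1/2 : ℝ) • a + (1/2 : ℝ) • b) = a + b := by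
    rw [smul_add, smul_smul, smul_smul]; norm_num
  rwa [h3] at h2

lemma interior_add_cone_subset {K : Set Y} (hconv : Convex ℝ K)
    (hcone : ∀ c : ℝ, 0 < c → c • K ⊆ K) : interior K + K ⊆ interior K := by
  refine interior_maximal ?_ (isOpen_interior.add_right)
  exact (Set.add_subset_add_right interior_subset).trans (cone_add_subset hconv hcone)

lemma smul_interior_cone_subset {K : Set Y} (hcone : ∀ c : ℝ, 0 < c → c • K ⊆ K)
    {c : ℝ} (hc : 0 < c) : c • interior K ⊆ interior K := by
  refine interior_maximal ((smul_set_mono interior_subset).trans (hcone c hc)) ?_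
  have := (isOpenMap_smul₀ (hc.ne')) (interior K) isOpen_interior
  rwa [Set.image_smul] at this

lemma eventually_smul_sub_mem {K : Set Y} (hcone : ∀ c : ℝ, 0 < c → c • K ⊆ K)
    {e : Y} (he : e ∈ interior K) (u : Y) :
    ∀ᶠ t : ℝ in atTop, t • e - u ∈ interior K := by
  have h0 : Tendsto (fun t : ℝ => t⁻¹ • u) atTop (𝓝 0) := by
    simpa using (tendsto_inv_atTop_zero : Tendsto (fun r : ℝ => r⁻¹) atTop (𝓝 0)).smul_const u
  have h1 : Tendsto (fun t : ℝ => e - t⁻¹ • u) atTop (𝓝 e) := by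
    simpa using (tendsto_const_nhds (x := e)).sub h0
  have h2 := h1.eventually (isOpen_interior.mem_nhds he)
  filter_upwards [h2, eventually_gt_atTop (0:ℝ)] with t ht htpos
  have h3 : t • (e - t⁻¹ • u) ∈ interior K :=
    smul_interior_cone_subset hcone htpos (smul_mem_smul_set ht)
  rwa [smul_sub, smul_smul, mul_inv_cancel₀ htpos.ne', one_smul] at h3

lemma interior_eq_univ_of_zero_mem {K : Set Y}
    (hcone : ∀ c : ℝ, 0 < c → c • K ⊆ K) (h0 : (0:Y) ∈ interior K) :
    interior K = Set.univ := by
  have hK : K = Set.univ := by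
    ext u; simp only [Set.mem_univ, iff_true]
    have hcontu : Continuous fun c : ℝ => c • u := continuous_id.smul continuous_const
    have h1 : ∀ᶠ c : ℝ in 𝓝 0, c • u ∈ interior K := by
      have ht : Tendsto (fun c : ℝ => c • u) (𝓝 0) (𝓝 0) := by
        simpa using hcontu.tendsto 0
      exact ht.eventually (isOpen_interior.mem_nhds h0)
    have h2 : ∀ᶠ c : ℝ in 𝓝[>] (0:ℝ), c • u ∈ interior K := h1.filter_mono nhdsWithin_le_nhds
    obtain ⟨c, hcK, hc⟩ := (h2.and self_mem_nhdsWithin).exists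
    have hcpos : (0:ℝ) < c := hc
    have h3 := hcone c⁻¹ (inv_pos.2 hcpos) (smul_mem_smul_set (interior_subset hcK))
    rwa [smul_smul, inv_mul_cancel₀ hcpos.ne', one_smul] at h3
  rw [hK, interior_univ]

end ConeFacts

section CharLemma
variable {X Y : Type*} [AddCommGroup X] [Module ℝ X] [TopologicalSpace X]
  [AddCommGroup Y] [Module ℝ Y] [TopologicalSpace Y] [IsTopologicalAddGroup Y]
  [ContinuousSMul ℝ Y]

lemma epiConj_mem_iff {K : Set Y} (hKconv : Convex ℝ K)
    (hKcone : ∀ c : ℝ, 0 < c → c • K ⊆ K) (hK0 : (0:Y) ∈ K)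
    {e : Y} (he : e ∈ interior K)
    (H : X → Y) (D : Set X) (hD : D.Nonempty) (p : (X →L[ℝ] Y) × Y) :
    p ∈ epiConj K H D ↔ ∀ x ∈ D, p.1 x - H x - p.2 ∉ interior K := by
  simp only [epiConj, wSupElems, Set.mem_setOf_eq]
  set M : Set Y := (fun x => p.1 x - H x) '' D with hM
  set O : Set Y := {u | ∃ v ∈ M, u - v ∈ -(interior K)} with hO
  have hOopen : IsOpen O := by
    have h1 : O = ⋃ v ∈ M, (fun u => u - v) ⁻¹' (-(interior K)) := by
      ext u; simp [hO]
    rw [h1]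
    exact isOpen_biUnion fun v _ =>
      (isOpen_interior.neg).preimage (continuous_id.sub continuous_const)
  have hOK : ∀ a ∈ O, ∀ k ∈ interior K, a - k ∈ O := by
    rintro a ⟨v, hv, hav⟩ k hk
    refine ⟨v, hv, ?_⟩
    rw [Set.mem_neg] at hav ⊢
    have h2 : -(a - k - v) = -(a - v) + k := by abel
    rw [h2]
    exact interior_add_cone_subset hKconv hKcone (Set.add_mem_add hav (interior_subset hk))
  constructor
  · rintro ⟨w, ⟨hw1, hw2⟩, hpw⟩ x hx hmem
    refine hw1 _ ⟨x, hx, rfl⟩ ?_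
    rw [Set.mem_neg]
    have h3 : -(w - (p.1 x - H x)) = (p.1 x - H x - p.2) + (p.2 - w) := by abel
    rw [h3]
    exact interior_add_cone_subset hKconv hKcone (Set.add_mem_add hmem hpw)
  · intro hcond
    have hp2 : p.2 ∉ O := by
      rintro ⟨v, ⟨x, hx, rfl⟩, hv⟩
      rw [Set.mem_neg] at hv
      exact hcond x hx (by simpa [neg_sub] using hv)
    obtain ⟨x₀, hx₀⟩ := hD
    set g : ℝ → Y := fun t => p.2 - t • e with hg
    have hgcont : Continuous g := continuous_const.sub (continuous_id.smul continuous_const)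
    set Tset : Set ℝ := {t | 0 ≤ t ∧ g t ∈ O} with hT
    have hTne : Tset.Nonempty := by
      obtain ⟨t, ht, htpos⟩ := ((eventually_smul_sub_mem hKcone he
        (p.2 - (p.1 x₀ - H x₀))).and (Filter.eventually_ge_atTop 0)).exists
      refine ⟨t, htpos, ⟨p.1 x₀ - H x₀, ⟨x₀, hx₀, rfl⟩, ?_⟩⟩
      rw [Set.mem_neg]
      convert ht using 1
      simp only [hg]; abel
    have hTbdd : BddBelow Tset := ⟨0, fun t ht => ht.1⟩
    set t₀ : ℝ := sInf Tset with ht₀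
    have ht₀0 : 0 ≤ t₀ := le_csInf hTne fun t ht => ht.1
    set w : Y := g t₀ with hw
    have hwne : w ∉ O := by
      intro hwO
      have hU : IsOpen (g ⁻¹' O) := hOopen.preimage hgcont
      rcases Metric.isOpen_iff.1 hU t₀ hwO with ⟨ε, hε, hball⟩
      rcases eq_or_lt_of_le ht₀0 with h0 | h0
      · apply hp2
        have hg0 : g 0 = p.2 := by simp [hg]
        rwa [hw, ← h0, hg0] at hwO
      · have ht₁0 : 0 ≤ max (t₀ - ε/2) (t₀/2) := le_max_of_le_right (by linarith)
        have ht₁lt : max (t₀ - ε/2) (t₀/2) < t₀ := max_lt (by linarith) (by linarith)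
        have hdist : dist (max (t₀ - ε/2) (t₀/2)) t₀ < ε := by
          rw [Real.dist_eq, abs_lt]
          constructor
          · linarith [le_max_left (t₀ - ε/2) (t₀/2)]
          · linarith
        have hmem : max (t₀ - ε/2) (t₀/2) ∈ Tset := ⟨ht₁0, hball hdist⟩
        exact absurd (csInf_le hTbdd hmem) (not_le.2 ht₁lt)
    have hwcl : ∀ U : Set Y, IsOpen U → w ∈ U → ∃ a ∈ O, a ∈ U := by
      intro U hUopen hwU
      have hU : IsOpen (g ⁻¹' U) := hUopen.preimage hgcont
      rcases Metric.isOpen_iff.1 hU t₀ hwU with ⟨ε, hε, hball⟩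
      obtain ⟨t, htT, htlt⟩ := exists_lt_of_csInf_lt hTne (lt_add_of_pos_right t₀ hε)
      have htge : t₀ ≤ t := csInf_le hTbdd htT
      have hd : dist t t₀ < ε := by rw [Real.dist_eq, abs_lt]; constructor <;> linarith
      exact ⟨g t, htT.2, hball hd⟩
    refine ⟨w, ⟨?_, ?_⟩, ?_⟩
    · intro v hv hneg
      exact hwne ⟨v, hv, hneg⟩
    · intro u hu
      rw [Set.mem_neg, neg_sub] at hu
      set U : Set Y := {a | a - w + (w - u) ∈ interior K} with hUdef
      have hUopen : IsOpen U :=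
        isOpen_interior.preimage ((continuous_id.sub continuous_const).add continuous_const)
      have hwU : w ∈ U := by
        simp only [hUdef, Set.mem_setOf_eq, sub_self, zero_add]; exact hu
      obtain ⟨a, haO, haU⟩ := hwcl U hUopen hwU
      have h4 : a - (a - w + (w - u)) ∈ O := hOK a haO _ haU
      have h5 : a - (a - w + (w - u)) = u := by abel
      rw [h5] at h4
      exact h4
    · have h6 : p.2 - w = t₀ • e := by simp only [hw, hg]; abel
      rw [h6]
      rcases eq_or_lt_of_le ht₀0 with h0 | h0
      · rw [← h0, zero_smul]; exact hK0
      · exact hKcone t₀ h0 (smul_mem_smul_set (interior_subset he))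

end CharLemma

section Phi
variable {Y : Type*} [AddCommGroup Y] [Module ℝ Y] [TopologicalSpace Y]
  [IsTopologicalAddGroup Y] [ContinuousSMul ℝ Y]

noncomputable def phiFun (K : Set Y) (e : Y) (v : Y) : ℝ :=
  sInf {t : ℝ | t • e - v ∈ interior K}

variable {K : Set Y} {e : Y}

lemma phi_set_nonempty (hKcone : ∀ c : ℝ, 0 < c → c • K ⊆ K) (he : e ∈ interior K) (v : Y) : {t : ℝ | t • e - v ∈ interior K}.Nonempty :=
  (eventually_smul_sub_mem hKcone he v).exists

lemma phi_bddBelow (hKcl : IsClosed K) (hKcone : ∀ c : ℝ, 0 < c → c • K ⊆ K)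
    (hKpointed : K ∩ (-K) ⊆ {0}) (he : e ∈ interior K) (h0ni : (0:Y) ∉ interior K) (v : Y) : BddBelow {t : ℝ | t • e - v ∈ interior K} := by
  by_contra hb
  rw [not_bddBelow_iff] at hb
  have hseq : ∀ n : ℕ, ∃ t : ℝ, (t • e - v ∈ interior K) ∧ t < -((n:ℝ)+1) := by
    intro n; obtain ⟨t, ht, hlt⟩ := hb (-((n:ℝ)+1)); exact ⟨t, ht, hlt⟩
  choose t ht hlt using hseq
  have hs : ∀ n : ℕ, (0:ℝ) < -(t n) := by
    intro n
    have h1 : (0:ℝ) < (n:ℝ) + 1 := by positivity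
    linarith [hlt n]
  have hmem : ∀ n : ℕ, -e - (-(t n))⁻¹ • v ∈ K := by
    intro n
    have h1 := hKcone (-(t n))⁻¹ (inv_pos.2 (hs n)) (smul_mem_smul_set (interior_subset (ht n)))
    have h2 : (-(t n))⁻¹ • (t n • e - v) = -e - (-(t n))⁻¹ • v := by
      rw [smul_sub, smul_smul]
      congr 1
      have hne : t n ≠ 0 := by have := hs n; intro h; rw [h] at this; simp at this
      have h3 : (-(t n))⁻¹ * t n = -1 := by
        rw [inv_neg, neg_mul, inv_mul_cancel₀ hne]
      rw [h3, neg_one_smul]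
    rwa [h2] at h1
  have h0' : Filter.Tendsto (fun n : ℕ => (-(t n))⁻¹) Filter.atTop (𝓝 0) := by
    apply squeeze_zero (fun n => (inv_pos.2 (hs n)).le) (fun n => ?_)
      tendsto_one_div_add_atTop_nhds_zero_nat
    rw [one_div]
    have h1 : (0:ℝ) < (n:ℝ) + 1 := by positivity
    have h2 : (n:ℝ) + 1 ≤ -(t n) := by linarith [hlt n]
    exact inv_anti₀ h1 h2
  have htend : Filter.Tendsto (fun n : ℕ => -e - (-(t n))⁻¹ • v) Filter.atTop (𝓝 (-e)) := by
    have h1 : Filter.Tendsto (fun n : ℕ => (-(t n))⁻¹ • v) Filter.atTop (𝓝 0) := by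
      simpa using h0'.smul_const v
    simpa using (tendsto_const_nhds (x := -e)).sub h1
  have hneg : -e ∈ K := hKcl.mem_of_tendsto htend (Filter.Eventually.of_forall hmem)
  have heK : e ∈ K := interior_subset he
  have he0 : e = 0 := Set.mem_singleton_iff.1 (hKpointed ⟨heK, Set.mem_neg.mpr hneg⟩)
  exact h0ni (he0 ▸ he)

lemma phi_nonneg (hKconv : Convex ℝ K) (hKcone : ∀ c : ℝ, 0 < c → c • K ⊆ K)
    (he : e ∈ interior K) {v : Y} (hv : v ∉ -(interior K)) : 0 ≤ phiFun K e v := by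
  by_contra hneg
  rw [not_le] at hneg
  obtain ⟨s, hs, hslt⟩ := exists_lt_of_csInf_lt (phi_set_nonempty hKcone he v) hneg
  apply hv
  rw [Set.mem_neg]
  have h2 : -v = (s • e - v) + (-s) • e := by rw [neg_smul]; abel
  rw [h2]
  exact interior_add_cone_subset hKconv hKcone
    (Set.add_mem_add hs (hKcone (-s) (by linarith) (smul_mem_smul_set (interior_subset he))))

lemma phi_neg_of_mem (hKcl : IsClosed K) (hKcone : ∀ c : ℝ, 0 < c → c • K ⊆ K)
    (hKpointed : K ∩ (-K) ⊆ {0}) (he : e ∈ interior K) (h0ni : (0:Y) ∉ interior K) {v : Y} (hv : v ∈ -(interior K)) : phiFun K e v < 0 := by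
  rw [Set.mem_neg] at hv
  have hcont : Filter.Tendsto (fun s : ℝ => s • e - v) (𝓝 0) (𝓝 (-v)) := by
    have h1 : Continuous fun s : ℝ => s • e - v :=
      (continuous_id.smul continuous_const).sub continuous_const
    have := h1.tendsto 0
    simpa using this
  have h1 : ∀ᶠ s : ℝ in 𝓝 0, s • e - v ∈ interior K :=
    hcont.eventually (isOpen_interior.mem_nhds hv)
  have h2 : ∀ᶠ s : ℝ in 𝓝[<] (0:ℝ), s • e - v ∈ interior K := h1.filter_mono nhdsWithin_le_nhds
  obtain ⟨s, hsK, hslt⟩ := (h2.and self_mem_nhdsWithin).exists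
  exact lt_of_le_of_lt (csInf_le (phi_bddBelow hKcl hKcone hKpointed he h0ni v) hsK) hslt

lemma phi_mono (hKcl : IsClosed K) (hKconv : Convex ℝ K)
    (hKcone : ∀ c : ℝ, 0 < c → c • K ⊆ K) (hKpointed : K ∩ (-K) ⊆ {0})
    (he : e ∈ interior K) (h0ni : (0:Y) ∉ interior K) {v v' : Y} (h : v' - v ∈ K) : phiFun K e v ≤ phiFun K e v' := by
  apply csInf_le_csInf (phi_bddBelow hKcl hKcone hKpointed he h0ni v)
    (phi_set_nonempty hKcone he v')
  intro s hs
  have h1 : s • e - v = (s • e - v') + (v' - v) := by abel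
  rw [Set.mem_setOf_eq, h1]
  exact interior_add_cone_subset hKconv hKcone (Set.add_mem_add hs h)

lemma phi_add_smul_le (hKcl : IsClosed K) (hKcone : ∀ c : ℝ, 0 < c → c • K ⊆ K)
    (hKpointed : K ∩ (-K) ⊆ {0}) (he : e ∈ interior K) (h0ni : (0:Y) ∉ interior K)
    (v : Y) (c : ℝ) : phiFun K e v + c ≤ phiFun K e (v + c • e) := by
  apply le_csInf (phi_set_nonempty hKcone he _)
  intro s hs
  have h2 : (s - c) • e - v = s • e - (v + c • e) := by rw [sub_smul]; abel
  have h3 : s - c ∈ {t : ℝ | t • e - v ∈ interior K} := by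
    rw [Set.mem_setOf_eq, h2]; exact hs
  have h4 : phiFun K e v ≤ s - c := csInf_le (phi_bddBelow hKcl hKcone hKpointed he h0ni v) h3
  linarith

lemma phi_convex (hKcl : IsClosed K) (hKconv : Convex ℝ K)
    (hKcone : ∀ c : ℝ, 0 < c → c • K ⊆ K) (hKpointed : K ∩ (-K) ⊆ {0})
    (he : e ∈ interior K) (h0ni : (0:Y) ∉ interior K) {a b : Y} {θ₁ θ₂ : ℝ} (h1 : 0 ≤ θ₁) (h2 : 0 ≤ θ₂) (h3 : θ₁ + θ₂ = 1) :
    phiFun K e (θ₁ • a + θ₂ • b) ≤ θ₁ * phiFun K e a + θ₂ * phiFun K e b := by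
  apply le_of_forall_pos_le_add
  intro ε hε
  obtain ⟨t₁, ht₁, ht₁lt⟩ := exists_lt_of_csInf_lt (phi_set_nonempty hKcone he a)
    (lt_add_of_pos_right (phiFun K e a) hε)
  obtain ⟨t₂, ht₂, ht₂lt⟩ := exists_lt_of_csInf_lt (phi_set_nonempty hKcone he b)
    (lt_add_of_pos_right (phiFun K e b) hε)
  have hmem : (θ₁ * t₁ + θ₂ * t₂) • e - (θ₁ • a + θ₂ • b) ∈ interior K := by
    have h4 : (θ₁ * t₁ + θ₂ * t₂) • e - (θ₁ • a + θ₂ • b)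
        = θ₁ • (t₁ • e - a) + θ₂ • (t₂ • e - b) := by
      rw [add_smul, mul_smul, mul_smul, smul_sub, smul_sub]; abel
    rw [h4]
    exact hKconv.interior ht₁ ht₂ h1 h2 h3
  have h5 : phiFun K e (θ₁ • a + θ₂ • b) ≤ θ₁ * t₁ + θ₂ * t₂ :=
    csInf_le (phi_bddBelow hKcl hKcone hKpointed he h0ni _) hmem
  have h6 : θ₁ * t₁ ≤ θ₁ * (phiFun K e a + ε) := mul_le_mul_of_nonneg_left ht₁lt.le h1
  have h7 : θ₂ * t₂ ≤ θ₂ * (phiFun K e b + ε) := mul_le_mul_of_nonneg_left ht₂lt.le h2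
  nlinarith [h5, h6, h7]

end Phi

set_option maxHeartbeats 2000000 in
theorem stmt11 {X Y Z : Type*}
    [AddCommGroup X] [Module ℝ X] [TopologicalSpace X] [IsTopologicalAddGroup X]
    [ContinuousSMul ℝ X] [T2Space X] [LocallyConvexSpace ℝ X]
    [AddCommGroup Y] [Module ℝ Y] [TopologicalSpace Y] [IsTopologicalAddGroup Y]
    [ContinuousSMul ℝ Y] [T2Space Y] [LocallyConvexSpace ℝ Y]
    [AddCommGroup Z] [Module ℝ Z] [TopologicalSpace Z] [IsTopologicalAddGroup Z]
    [ContinuousSMul ℝ Z] [T2Space Z] [LocallyConvexSpace ℝ Z]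
    (K : Set Y) (hKcl : IsClosed K) (hKconv : Convex ℝ K)
    (hKcone : ∀ c : ℝ, 0 < c → c • K ⊆ K) (hK0 : (0:Y) ∈ K)
    (hKpointed : K ∩ (-K) ⊆ {0}) (hKint : (interior K).Nonempty)
    (S : Set Z) (hScl : IsClosed S) (hSconv : Convex ℝ S)
    (hScone : ∀ c : ℝ, 0 < c → c • S ⊆ S) (hS0 : (0:Z) ∈ S)
    (C : Set X) (hCne : C.Nonempty) (hCconv : Convex ℝ C)
    (F : X → Y) (domF : Set X) (hFprop : domF.Nonempty)
    (hFconv : Convex ℝ {p : X × Y | p.1 ∈ domF ∧ p.2 - F p.1 ∈ K})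
    (G : X → Z) (domG : Set X) (hGprop : domG.Nonempty)
    (hGconv : Convex ℝ {p : X × Z | p.1 ∈ domG ∧ p.2 - G p.1 ∈ S})
    (A : Set X) (hA : A = {x | x ∈ C ∧ x ∈ domG ∧ G x ∈ -S})
    (hAF : (A ∩ domF).Nonempty)
    (hslater : ∃ x' ∈ C ∩ domF, x' ∈ domG ∧ G x' ∈ -(interior S)) :
    epiConj K F (A ∩ domF) =
      ⋃ T ∈ {T : Z →L[ℝ] Y | ⇑T '' S ⊆ K},
        epiConj K (fun x => F x + T (G x)) (C ∩ domF ∩ domG) := by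
  have hdLne : (C ∩ domF ∩ domG).Nonempty := by
    obtain ⟨x', hx', hx'G, _⟩ := hslater
    exact ⟨x', ⟨hx', hx'G⟩⟩
  by_cases hdeg : (0:Y) ∈ interior K
  · -- degenerate case : interior K = univ, both sides empty
    have huniv : interior K = Set.univ := interior_eq_univ_of_zero_mem hKcone hdeg
    have hempty : ∀ (H : X → Y) (D : Set X), D.Nonempty →
        epiConj K H D = (∅ : Set ((X →L[ℝ] Y) × Y)) := by
      intro H D hD
      obtain ⟨x₀, hx₀⟩ := hD
      rw [Set.eq_empty_iff_forall_notMem]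
      rintro p ⟨w, ⟨hw1, _⟩, _⟩
      refine hw1 _ ⟨x₀, hx₀, rfl⟩ ?_
      rw [huniv, Set.neg_univ]
      trivial
    rw [hempty F _ hAF, eq_comm, Set.eq_empty_iff_forall_notMem]
    intro p hp
    simp only [Set.mem_iUnion] at hp
    obtain ⟨T, hT, hpT⟩ := hp
    rw [hempty _ _ hdLne] at hpT
    exact hpT
  · obtain ⟨e, he⟩ := hKint
    have heK : e ∈ K := interior_subset he
    obtain ⟨x', hx'CF, hx'G, hGx'⟩ := hslater
    have hx'dL : x' ∈ C ∩ domF ∩ domG := ⟨hx'CF, hx'G⟩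
    have hsbar : -G x' ∈ interior S := Set.mem_neg.1 hGx'
    ext p
    rw [epiConj_mem_iff hKconv hKcone hK0 he F (A ∩ domF) hAF p]
    simp only [Set.mem_iUnion]
    constructor
    · -- hard direction
      intro hLHS
      set f : X → ℝ := fun x => phiFun K e (p.2 + F x - p.1 x) with hf
      have hfnn : ∀ x ∈ A ∩ domF, 0 ≤ f x := by
        intro x hx
        apply phi_nonneg hKconv hKcone he
        intro hmem
        rw [Set.mem_neg] at hmem
        apply hLHS x hx
        have heq : -(p.2 + F x - p.1 x) = p.1 x - F x - p.2 := by abel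
        rwa [heq] at hmem
      have hFgap : ∀ {x₁ x₂ : X} {a b : ℝ}, x₁ ∈ domF → x₂ ∈ domF → 0 ≤ a → 0 ≤ b →
          a + b = 1 →
          a • x₁ + b • x₂ ∈ domF ∧ (a • F x₁ + b • F x₂) - F (a • x₁ + b • x₂) ∈ K := by
        intro x₁ x₂ a b h1 h2 ha hb hab
        have hp1 : ((x₁, F x₁) : X × Y) ∈ {p : X × Y | p.1 ∈ domF ∧ p.2 - F p.1 ∈ K} :=
          ⟨h1, by simpa using hK0⟩
        have hp2 : ((x₂, F x₂) : X × Y) ∈ {p : X × Y | p.1 ∈ domF ∧ p.2 - F p.1 ∈ K} :=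
          ⟨h2, by simpa using hK0⟩
        exact hFconv hp1 hp2 ha hb hab
      have hGgap : ∀ {x₁ x₂ : X} {a b : ℝ}, x₁ ∈ domG → x₂ ∈ domG → 0 ≤ a → 0 ≤ b →
          a + b = 1 →
          a • x₁ + b • x₂ ∈ domG ∧ (a • G x₁ + b • G x₂) - G (a • x₁ + b • x₂) ∈ S := by
        intro x₁ x₂ a b h1 h2 ha hb hab
        have hp1 : ((x₁, G x₁) : X × Z) ∈ {p : X × Z | p.1 ∈ domG ∧ p.2 - G p.1 ∈ S} :=
          ⟨h1, by simpa using hS0⟩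
        have hp2 : ((x₂, G x₂) : X × Z) ∈ {p : X × Z | p.1 ∈ domG ∧ p.2 - G p.1 ∈ S} :=
          ⟨h2, by simpa using hS0⟩
        exact hGconv hp1 hp2 ha hb hab
      have hfconv : ∀ {x₁ x₂ : X} {a b : ℝ}, x₁ ∈ domF → x₂ ∈ domF → 0 ≤ a → 0 ≤ b →
          a + b = 1 → f (a • x₁ + b • x₂) ≤ a * f x₁ + b * f x₂ := by
        intro x₁ x₂ a b h1 h2 ha hb hab
        have hgap := (hFgap h1 h2 ha hb hab).2
        have hkey : (a • (p.2 + F x₁ - p.1 x₁) + b • (p.2 + F x₂ - p.1 x₂))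
            - (p.2 + F (a • x₁ + b • x₂) - p.1 (a • x₁ + b • x₂)) ∈ K := by
          have hlin : p.1 (a • x₁ + b • x₂) = a • p.1 x₁ + b • p.1 x₂ := by
            simp [map_add, map_smul]
          have hexp : (a • (p.2 + F x₁ - p.1 x₁) + b • (p.2 + F x₂ - p.1 x₂))
              - (p.2 + F (a • x₁ + b • x₂) - p.1 (a • x₁ + b • x₂))
              = ((a • F x₁ + b • F x₂) - F (a • x₁ + b • x₂))
                + ((a + b) • p.2 - p.2) := by
            rw [hlin, add_smul]
            simp only [smul_add, smul_sub]
            abel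
          rw [hexp, hab, one_smul, sub_self, add_zero]
          exact hgap
        calc f (a • x₁ + b • x₂)
            ≤ phiFun K e (a • (p.2 + F x₁ - p.1 x₁) + b • (p.2 + F x₂ - p.1 x₂)) :=
              phi_mono hKcl hKconv hKcone hKpointed he hdeg hkey
          _ ≤ a * f x₁ + b * f x₂ :=
              phi_convex hKcl hKconv hKcone hKpointed he hdeg ha hb hab
      set D : Set (Z × ℝ) :=
        {q | ∃ x ∈ C ∩ domF ∩ domG, q.1 - G x ∈ interior S ∧ f x < q.2} with hD
      have hDopen : IsOpen D := by
        have hrw : D = ⋃ x ∈ C ∩ domF ∩ domG,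
            (((fun q : Z × ℝ => q.1 - G x) ⁻¹' interior S) ∩
              ((fun q : Z × ℝ => q.2) ⁻¹' Set.Ioi (f x))) := by
          ext q
          simp only [hD, Set.mem_setOf_eq, Set.mem_iUnion, Set.mem_inter_iff,
            Set.mem_preimage, Set.mem_Ioi]
          aesop
        rw [hrw]
        exact isOpen_biUnion fun x _ =>
          ((isOpen_interior.preimage (continuous_fst.sub continuous_const)).inter
            (isOpen_Ioi.preimage continuous_snd))
      have hDconv : Convex ℝ D := by
        rintro q₁ ⟨x₁, hx₁, hz₁, hr₁⟩ q₂ ⟨x₂, hx₂, hz₂, hr₂⟩ a b ha hb hab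
        have h1F := hFgap hx₁.1.2 hx₂.1.2 ha hb hab
        have h1G := hGgap hx₁.2 hx₂.2 ha hb hab
        have hxC : a • x₁ + b • x₂ ∈ C := hCconv hx₁.1.1 hx₂.1.1 ha hb hab
        refine ⟨a • x₁ + b • x₂, ⟨⟨hxC, h1F.1⟩, h1G.1⟩, ?_, ?_⟩
        · have hcomb : a • (q₁.1 - G x₁) + b • (q₂.1 - G x₂) ∈ interior S :=
            hSconv.interior hz₁ hz₂ ha hb hab
          have hmem : (a • (q₁.1 - G x₁) + b • (q₂.1 - G x₂)) +
              ((a • G x₁ + b • G x₂) - G (a • x₁ + b • x₂)) ∈ interior S :=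
            interior_add_cone_subset hSconv hScone (Set.add_mem_add hcomb h1G.2)
          have hexp2 : (a • (q₁.1 - G x₁) + b • (q₂.1 - G x₂)) +
              ((a • G x₁ + b • G x₂) - G (a • x₁ + b • x₂))
              = (a • q₁ + b • q₂).1 - G (a • x₁ + b • x₂) := by
            show _ = a • q₁.1 + b • q₂.1 - G (a • x₁ + b • x₂)
            rw [smul_sub, smul_sub]
            abel
          rwa [hexp2] at hmem
        · have h2 : f (a • x₁ + b • x₂) ≤ a * f x₁ + b * f x₂ :=
            hfconv hx₁.1.2 hx₂.1.2 ha hb hab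
          show f (a • x₁ + b • x₂) < (a • q₁ + b • q₂).2
          have h3 : (a • q₁ + b • q₂).2 = a * q₁.2 + b * q₂.2 := rfl
          rw [h3]
          have h4 : a * f x₁ + b * f x₂ < a * q₁.2 + b * q₂.2 := by
            rcases lt_or_ge 0 a with hapos | hale
            · have h5 : a * f x₁ < a * q₁.2 := mul_lt_mul_of_pos_left hr₁ hapos
              have h6 : b * f x₂ ≤ b * q₂.2 := mul_le_mul_of_nonneg_left hr₂.le hb
              linarith
            · have ha0 : a = 0 := le_antisymm hale ha
              have hbpos : 0 < b := by rw [ha0] at hab; linarith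
              have h6 : b * f x₂ < b * q₂.2 := mul_lt_mul_of_pos_left hr₂ hbpos
              rw [ha0]
              linarith
          linarith
      have h00 : ((0 : Z), (0 : ℝ)) ∉ D := by
        rintro ⟨x, hx, hz, hr⟩
        have h1 : -G x ∈ S := interior_subset (by simpa using hz)
        have hxA : x ∈ A := by
          rw [hA]
          exact ⟨hx.1.1, hx.2, Set.mem_neg.mpr h1⟩
        have h2 := hfnn x ⟨hxA, hx.1.2⟩
        have h3 : f x < 0 := hr
        linarith
      obtain ⟨ψ, hψ⟩ := geometric_hahn_banach_open_point hDconv hDopen h00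
      have hψ0 : ψ ((0:Z), (0:ℝ)) = 0 := map_zero ψ
      have hdec : ∀ (z : Z) (r : ℝ), ψ (z, r) = ψ (z, 0) + r * ψ ((0:Z), (1:ℝ)) := by
        intro z r
        have h1 : ((z, r) : Z × ℝ) = (z, 0) + r • ((0:Z), (1:ℝ)) := by
          simp [Prod.ext_iff]
        rw [h1, map_add, map_smul, smul_eq_mul]
      have hz_add : ∀ z z' : Z, ψ ((z + z' : Z), (0:ℝ)) = ψ (z, 0) + ψ (z', 0) := by
        intro z z'
        have h1 : ((z + z' : Z), (0:ℝ)) = ((z : Z), (0:ℝ)) + ((z' : Z), (0:ℝ)) := by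
          simp
        rw [h1, map_add]
      have hz_smul : ∀ (c : ℝ) (z : Z), ψ ((c • z : Z), (0:ℝ)) = c * ψ (z, 0) := by
        intro c z
        have h1 : ((c • z : Z), (0:ℝ)) = c • ((z : Z), (0:ℝ)) := by
          simp
        rw [h1, map_smul, smul_eq_mul]
      set α : ℝ := ψ ((0:Z), (1:ℝ)) with hα
      have hkey : ∀ x ∈ C ∩ domF ∩ domG, ∀ s ∈ interior S, ∀ t : ℝ, 0 < t →
          ψ ((G x + s : Z), (0:ℝ)) + (f x + t) * α < 0 := by
        intro x hx s hs t ht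
        have hmemD : ((G x + s, f x + t) : Z × ℝ) ∈ D := by
          refine ⟨x, hx, by simpa using hs, ?_⟩
          show f x < f x + t
          linarith
        have h1 := hψ _ hmemD
        rw [hψ0, hdec (G x + s) (f x + t)] at h1
        linarith
      have hαneg : α < 0 := by
        have h1 := hkey x' hx'dL (-G x') hsbar (|f x'| + 1) (by positivity)
        have h2 : G x' + -G x' = (0:Z) := by abel
        rw [h2, hψ0] at h1
        have hc : 0 < f x' + (|f x'| + 1) := by
          have := neg_abs_le (f x')
          linarith
        by_contra hge
        push_neg at hge
        have h3 : 0 ≤ (f x' + (|f x'| + 1)) * α := mul_nonneg hc.le hge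
        linarith
      have hlim : ∀ x ∈ C ∩ domF ∩ domG, ∀ s₀ ∈ S,
          ψ ((G x + s₀ : Z), (0:ℝ)) + f x * α ≤ 0 := by
        intro x hx s₀ hs₀
        set c : ℝ := ψ ((G x + s₀ : Z), (0:ℝ)) + f x * α with hc
        set d : ℝ := ψ ((-G x' : Z), (0:ℝ)) + α with hd
        have hδ : ∀ δ : ℝ, 0 < δ → c + δ * d < 0 := by
          intro δ hδp
          have hsmem : s₀ + δ • (-G x') ∈ interior S := by
            have h1 : δ • (-G x') ∈ interior S :=
              smul_interior_cone_subset hScone hδp (smul_mem_smul_set hsbar)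
            have h2 : δ • (-G x') + s₀ ∈ interior S :=
              interior_add_cone_subset hSconv hScone (Set.add_mem_add h1 hs₀)
            rwa [add_comm] at h2
          have h3 := hkey x hx _ hsmem δ hδp
          have harg : G x + (s₀ + δ • (-G x')) = (G x + s₀) + δ • (-G x') := by abel
          rw [harg, hz_add, hz_smul] at h3
          have hcd : c + δ * d
              = ψ ((G x + s₀ : Z), (0:ℝ)) + δ * ψ ((-G x' : Z), (0:ℝ)) + (f x + δ) * α := by
            rw [hc, hd]; ring
          rw [hcd]
          linarith
        by_contra hpos
        push_neg at hpos
        set δ : ℝ := min 1 (c / (2 * (|d| + 1))) with hδdef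
        have hδpos : 0 < δ := lt_min one_pos (by positivity)
        have h5 := hδ δ hδpos
        have h6 : δ * |d| ≤ c / 2 := by
          have h7 : δ ≤ c / (2 * (|d| + 1)) := min_le_right _ _
          have h8 : 0 ≤ |d| := abs_nonneg d
          calc δ * |d| ≤ (c / (2 * (|d| + 1))) * |d| := mul_le_mul_of_nonneg_right h7 h8
            _ ≤ c / 2 := by
              rw [div_mul_eq_mul_div, div_le_div_iff₀ (by positivity) (by norm_num)]
              nlinarith
        have h9 : -(δ * |d|) ≤ δ * d := by
          have := neg_abs_le d
          nlinarith
        linarith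
      have hzs : ∀ s₀ ∈ S, ψ ((s₀ : Z), (0:ℝ)) ≤ 0 := by
        intro s₀ hs₀
        by_contra hpos
        push_neg at hpos
        have hC₀ : ψ ((G x' + 0 : Z), (0:ℝ)) + f x' * α ≤ 0 := hlim x' hx'dL 0 hS0
        rw [add_zero] at hC₀
        set cc : ℝ := (1 - (ψ ((G x' : Z), (0:ℝ)) + f x' * α)) / ψ ((s₀ : Z), (0:ℝ)) with hcc
        have hccpos : 0 < cc := div_pos (by linarith) hpos
        have h1 := hlim x' hx'dL (cc • s₀) (hScone cc hccpos (smul_mem_smul_set hs₀))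
        rw [hz_add, hz_smul] at h1
        have h3 : cc * ψ ((s₀:Z), (0:ℝ)) = 1 - (ψ ((G x' : Z), (0:ℝ)) + f x' * α) := by
          rw [hcc]
          field_simp
        rw [h3] at h1
        linarith
      have hfeas : ∀ x ∈ C ∩ domF ∩ domG, 0 ≤ f x + α⁻¹ * ψ ((G x : Z), (0:ℝ)) := by
        intro x hx
        have h1 := hlim x hx 0 hS0
        rw [add_zero] at h1
        by_contra hneg
        push_neg at hneg
        have h2 : 0 < α * (f x + α⁻¹ * ψ ((G x : Z), (0:ℝ))) := mul_pos_of_neg_of_neg hαneg hneg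
        have h3 : α * (f x + α⁻¹ * ψ ((G x : Z), (0:ℝ)))
            = α * f x + ψ ((G x : Z), (0:ℝ)) := by
          rw [mul_add, ← mul_assoc, mul_inv_cancel₀ hαneg.ne, one_mul]
        rw [h3] at h2
        linarith
      set T : Z →L[ℝ] Y := (α⁻¹ • (ψ.comp (ContinuousLinearMap.inl ℝ Z ℝ))).smulRight e with hT
      have hTapp : ∀ z : Z, T z = (α⁻¹ * ψ ((z : Z), (0:ℝ))) • e := by
        intro z
        simp [hT, ContinuousLinearMap.smulRight_apply, ContinuousLinearMap.smul_apply,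
          ContinuousLinearMap.comp_apply, ContinuousLinearMap.inl_apply, smul_eq_mul]
      have hTS : ⇑T '' S ⊆ K := by
        rintro _ ⟨s₀, hs₀, rfl⟩
        rw [hTapp]
        have h1 : 0 ≤ α⁻¹ * ψ ((s₀:Z), (0:ℝ)) := by
          have h2 : α⁻¹ ≤ 0 := inv_nonpos.2 hαneg.le
          nlinarith [hzs s₀ hs₀]
        rcases eq_or_lt_of_le h1 with h2 | h2
        · rw [← h2, zero_smul]; exact hK0
        · exact hKcone _ h2 (smul_mem_smul_set heK)
      refine ⟨T, hTS, ?_⟩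
      rw [epiConj_mem_iff hKconv hKcone hK0 he _ (C ∩ domF ∩ domG) hdLne p]
      intro x hx hmem
      rw [hTapp (G x)] at hmem
      have hge := hfeas x hx
      have h1 : phiFun K e (p.2 + F x - p.1 x) + α⁻¹ * ψ ((G x : Z), (0:ℝ))
          ≤ phiFun K e ((p.2 + F x - p.1 x) + (α⁻¹ * ψ ((G x : Z), (0:ℝ))) • e) :=
        phi_add_smul_le hKcl hKcone hKpointed he hdeg _ _
      have h2 : 0 ≤ phiFun K e ((p.2 + F x - p.1 x) + (α⁻¹ * ψ ((G x : Z), (0:ℝ))) • e) := by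
        have h3 : f x = phiFun K e (p.2 + F x - p.1 x) := rfl
        rw [h3] at hge
        linarith
      have h3 : (p.2 + F x - p.1 x) + (α⁻¹ * ψ ((G x : Z), (0:ℝ))) • e ∉ -(interior K) := by
        intro hmem2
        have := phi_neg_of_mem hKcl hKcone hKpointed he hdeg hmem2
        linarith
      apply h3
      rw [Set.mem_neg]
      have h4 : -((p.2 + F x - p.1 x) + (α⁻¹ * ψ ((G x : Z), (0:ℝ))) • e)
          = p.1 x - (F x + (α⁻¹ * ψ ((G x : Z), (0:ℝ))) • e) - p.2 := by abel
      rw [h4]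
      exact hmem
    · -- easy direction
      rintro ⟨T, hT, hpT⟩
      rw [epiConj_mem_iff hKconv hKcone hK0 he _ (C ∩ domF ∩ domG) hdLne p] at hpT
      intro x hx hmem
      have hxA : x ∈ A := hx.1
      rw [hA] at hxA
      obtain ⟨hxC, hxG, hxGS⟩ := hxA
      have hxdL : x ∈ C ∩ domF ∩ domG := ⟨⟨hxC, hx.2⟩, hxG⟩
      apply hpT x hxdL
      have hTG : -(T (G x)) ∈ K := by
        have h1 : -(G x) ∈ S := Set.mem_neg.1 hxGS
        have h2 := hT ⟨-(G x), h1, rfl⟩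
        rwa [map_neg] at h2
      have heq : p.1 x - (F x + T (G x)) - p.2 = (p.1 x - F x - p.2) + -(T (G x)) := by abel
      show p.1 x - (F x + T (G x)) - p.2 ∈ interior K
      rw [heq]
      exact interior_add_cone_subset hKconv hKcone (Set.add_mem_add hmem hTG)
end

section
/- For any T ∈ L₊^w(S,K), one has epi_K(F + I_A)* ⊇ ⋂_{v ∈ I_{−S}*(T)} [ epi_K(F + I_C + T∘G)* + (0_L, v) ], where A = C ∩ G⁻¹(−S) and 0_L is the zero map in L(X,Y). -/
open Set Pointwise Topology

open Filter

section Helpers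
variable {Y : Type*} [AddCommGroup Y] [Module ℝ Y] [TopologicalSpace Y]
  [IsTopologicalAddGroup Y] [ContinuousSMul ℝ Y] {K : Set Y}

lemma intK_add_K (hKconv : Convex ℝ K) (hKcone : ∀ c : ℝ, 0 < c → c • K ⊆ K)
    {k c : Y} (hk : k ∈ interior K) (hc : c ∈ K) : k + c ∈ interior K := by
  have hKK : ∀ a ∈ K, ∀ b ∈ K, a + b ∈ K := by
    intro a ha b hb
    have hmid : (1/2 : ℝ) • a + (1/2 : ℝ) • b ∈ K :=
      hKconv ha hb (by norm_num) (by norm_num) (by norm_num)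
    have h2 : (2:ℝ) • ((1/2 : ℝ) • a + (1/2 : ℝ) • b) ∈ K :=
      hKcone 2 (by norm_num) (Set.smul_mem_smul_set hmid)
    have : (2:ℝ) • ((1/2 : ℝ) • a + (1/2 : ℝ) • b) = a + b := by module
    rwa [this] at h2
  have hopen : IsOpen (interior K + K) := isOpen_interior.add_right
  have hsub : interior K + K ⊆ K := by
    rintro z ⟨a, ha, b, hb, rfl⟩
    exact hKK a (interior_subset ha) b hb
  exact interior_maximal hsub hopen (Set.add_mem_add hk hc)

lemma smul_intK (hKcone : ∀ c : ℝ, 0 < c → c • K ⊆ K)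
    {c : ℝ} (hc : 0 < c) {k : Y} (hk : k ∈ interior K) : c • k ∈ interior K := by
  have hopen : IsOpen (c • interior K) := isOpen_interior.smul₀ (ne_of_gt hc)
  have hsub : c • interior K ⊆ K := fun z ⟨a, ha, haz⟩ =>
    hKcone c hc ⟨a, interior_subset ha, haz⟩
  exact interior_maximal hsub hopen (Set.smul_mem_smul_set hk)

lemma exists_smul_add_mem (hKcone : ∀ c : ℝ, 0 < c → c • K ⊆ K)
    {e : Y} (he : e ∈ interior K) (z : Y) : ∃ t : ℝ, z + t • e ∈ interior K := by
  have h0 : Tendsto (fun t : ℝ => t⁻¹ • z) atTop (𝓝 ((0:ℝ) • z)) :=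
    tendsto_inv_atTop_zero.smul_const z
  rw [zero_smul] at h0
  have h1 : Tendsto (fun t : ℝ => e + t⁻¹ • z) atTop (𝓝 e) := by
    simpa using (tendsto_const_nhds.add h0)
  have h2 : ∀ᶠ t : ℝ in atTop, e + t⁻¹ • z ∈ interior K :=
    h1.eventually_mem (isOpen_interior.mem_nhds he)
  obtain ⟨t, ht, htpos⟩ := (h2.and (eventually_gt_atTop 0)).exists
  refine ⟨t, ?_⟩
  have : z + t • e = t • (e + t⁻¹ • z) := by
    rw [smul_add, smul_smul, mul_inv_cancel₀ (ne_of_gt htpos), one_smul]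
    abel
  rw [this]
  exact smul_intK hKcone htpos ht

lemma key (hKconv : Convex ℝ K) (hKcone : ∀ c : ℝ, 0 < c → c • K ⊆ K)
    {M : Set Y} (hM : M.Nonempty) {e : Y} (he : e ∈ interior K)
    (y : Y) (hbdd : ∃ t : ℝ, ¬ ∃ m ∈ M, y - t • e - m ∈ -(interior K)) :
    ∃ t₀ : ℝ, (y - t₀ • e ∈ wSupElems K M) ∧
      ∀ t : ℝ, (∃ m ∈ M, y - t • e - m ∈ -(interior K)) ↔ t₀ < t := by
  set P : ℝ → Prop := fun t => ∃ m ∈ M, y - t • e - m ∈ -(interior K) with hP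
  have hmono : ∀ {t t' : ℝ}, t < t' → P t → P t' := by
    rintro t t' htt ⟨m, hm, hmem⟩
    refine ⟨m, hm, ?_⟩
    rw [Set.mem_neg] at hmem ⊢
    have heq : -(y - t' • e - m) = -(y - t • e - m) + (t' - t) • e := by module
    rw [heq]
    exact intK_add_K hKconv hKcone hmem
      (interior_subset (smul_intK hKcone (by linarith) he))
  have hne : ∃ t, P t := by
    obtain ⟨m, hm⟩ := hM
    obtain ⟨t, ht⟩ := exists_smul_add_mem hKcone he (m - y)
    refine ⟨t, m, hm, ?_⟩
    rw [Set.mem_neg]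
    have : -(y - t • e - m) = (m - y) + t • e := by module
    rwa [this]
  obtain ⟨t₁, ht₁⟩ := hbdd
  have hlb : t₁ ∈ lowerBounds {t | P t} := by
    intro t ht
    by_contra hlt
    push_neg at hlt
    exact ht₁ (hmono hlt ht)
  have hglb : IsGLB {t | P t} (sInf {t | P t}) := Real.isGLB_sInf hne ⟨t₁, hlb⟩
  set t₀ := sInf {t | P t} with ht₀
  have hPopen : IsOpen {t | P t} := by
    have hD : IsOpen {z : Y | ∃ m ∈ M, z - m ∈ -(interior K)} := by
      have : {z : Y | ∃ m ∈ M, z - m ∈ -(interior K)} =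
          ⋃ m ∈ M, (fun z => z - m) ⁻¹' (-(interior K)) := by
        ext z; simp
      rw [this]
      exact isOpen_biUnion fun m _ =>
        (isOpen_interior.neg).preimage (continuous_id.sub continuous_const)
    have : {t : ℝ | P t} = (fun t : ℝ => y - t • e) ⁻¹' {z | ∃ m ∈ M, z - m ∈ -(interior K)} := rfl
    rw [this]
    exact hD.preimage (continuous_const.sub (continuous_id.smul continuous_const))
  have hiff : ∀ t : ℝ, P t ↔ t₀ < t := by
    intro t
    constructor
    · intro ht
      have hle : t₀ ≤ t := hglb.1 ht
      rcases hle.lt_or_eq with h | h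
      · exact h
      · exfalso
        have hmem : {t | P t} ∈ 𝓝 t := hPopen.mem_nhds ht
        rcases Metric.mem_nhds_iff.1 hmem with ⟨ε, hε, hball⟩
        have h2 : P (t - ε/2) := by
          apply hball
          rw [Metric.mem_ball, Real.dist_eq, show t - ε/2 - t = -(ε/2) by ring,
            abs_neg, abs_of_pos (by linarith)]
          linarith
        have := hglb.1 h2
        linarith
    · intro h
      by_contra hPt
      have hlbt : t ∈ lowerBounds {t | P t} := by
        intro t' ht'
        by_contra hlt
        push_neg at hlt
        exact hPt (hmono hlt ht')
      exact absurd (hglb.2 hlbt) (not_le.2 h)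
  refine ⟨t₀, ⟨?_, ?_⟩, hiff⟩
  · intro v hv hmem
    have : P t₀ := ⟨v, hv, hmem⟩
    exact lt_irrefl t₀ ((hiff t₀).1 this)
  · intro u hu
    have hk : y - t₀ • e - u ∈ interior K := by
      rw [Set.mem_neg] at hu
      rwa [neg_sub] at hu
    have hcont : Tendsto (fun ε : ℝ => (y - t₀ • e - u) - ε • e) (𝓝[>] (0:ℝ))
        (𝓝 (y - t₀ • e - u)) := by
      have hc : Continuous (fun ε : ℝ => (y - t₀ • e - u) - ε • e) :=
        continuous_const.sub (continuous_id.smul continuous_const)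
      have := hc.tendsto 0
      simp only [zero_smul, sub_zero] at this
      exact this.mono_left nhdsWithin_le_nhds
    obtain ⟨ε, hεK, hεpos⟩ :=
      ((hcont.eventually_mem (isOpen_interior.mem_nhds hk)).and self_mem_nhdsWithin).exists
    have hεpos' : (0:ℝ) < ε := hεpos
    obtain ⟨m, hm, hmem'⟩ : P (t₀ + ε) := (hiff (t₀ + ε)).2 (by linarith)
    refine ⟨m, hm, ?_⟩
    rw [Set.mem_neg] at hmem' ⊢
    have heq : -(u - m) = -(y - (t₀ + ε) • e - m) + ((y - t₀ • e - u) - ε • e) := by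
      module
    rw [heq]
    exact intK_add_K hKconv hKcone hmem' (interior_subset hεK)

lemma epiConj_forward {X : Type*} [AddCommGroup X] [Module ℝ X] [TopologicalSpace X]
    (hKconv : Convex ℝ K) (hKcone : ∀ c : ℝ, 0 < c → c • K ⊆ K)
    {H : X → Y} {domH : Set X} {p : (X →L[ℝ] Y) × Y} (hp : p ∈ epiConj K H domH) :
    ∀ x ∈ domH, p.2 - (p.1 x - H x) ∉ -(interior K) := by
  obtain ⟨w, ⟨hub, _⟩, hwK⟩ := hp
  intro x hx hcon
  have hm : p.1 x - H x ∈ (fun x => p.1 x - H x) '' domH := ⟨x, hx, rfl⟩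
  apply hub _ hm
  rw [Set.mem_neg] at hcon ⊢
  have : -(w - (p.1 x - H x)) = -(p.2 - (p.1 x - H x)) + (p.2 - w) := by module
  rw [this]
  exact intK_add_K hKconv hKcone hcon hwK

end Helpers

theorem stmt12 {X Y Z : Type*}
    [AddCommGroup X] [Module ℝ X] [TopologicalSpace X] [IsTopologicalAddGroup X]
    [ContinuousSMul ℝ X] [T2Space X] [LocallyConvexSpace ℝ X]
    [AddCommGroup Y] [Module ℝ Y] [TopologicalSpace Y] [IsTopologicalAddGroup Y]
    [ContinuousSMul ℝ Y] [T2Space Y] [LocallyConvexSpace ℝ Y]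
    [AddCommGroup Z] [Module ℝ Z] [TopologicalSpace Z] [IsTopologicalAddGroup Z]
    [ContinuousSMul ℝ Z] [T2Space Z] [LocallyConvexSpace ℝ Z]
    (K : Set Y) (hKcl : IsClosed K) (hKconv : Convex ℝ K)
    (hKcone : ∀ c : ℝ, 0 < c → c • K ⊆ K) (hK0 : (0:Y) ∈ K)
    (hKpointed : K ∩ (-K) ⊆ {0}) (hKint : (interior K).Nonempty)
    (S : Set Z) (hScl : IsClosed S) (hSconv : Convex ℝ S)
    (hScone : ∀ c : ℝ, 0 < c → c • S ⊆ S) (hS0 : (0:Z) ∈ S)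
    (C : Set X) (hCne : C.Nonempty)
    (F : X → Y) (domF : Set X) (hFprop : domF.Nonempty)
    (G : X → Z) (domG : Set X) (hGprop : domG.Nonempty)
    (A : Set X) (hA : A = {x | x ∈ C ∧ x ∈ domG ∧ G x ∈ -S})
    (hAF : (A ∩ domF).Nonempty)
    (T : Z →L[ℝ] Y) (hT : (⇑T '' S) ∩ (-(interior K)) = ∅) :
    ⋂ v ∈ wSupElems K (⇑T '' (-S)),
        (epiConj K (fun x => F x + T (G x)) (C ∩ domF ∩ domG) +
          {((0 : X →L[ℝ] Y), v)}) ⊆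
      epiConj K F (A ∩ domF) := by
  obtain ⟨e, he⟩ := hKint
  intro p hp
  -- Step 1: the pointwise condition on A ∩ domF
  have step1 : ∀ x ∈ A ∩ domF, p.2 - (p.1 x - F x) ∉ -(interior K) := by
    rintro x ⟨hxA, hxF⟩ hcon
    rw [hA] at hxA
    obtain ⟨hxC, hxG, hGx⟩ := hxA
    set a := p.2 - (p.1 x - F x) with ha
    set y := T (G x) + a with hy
    have hM0 : (⇑T '' (-S)).Nonempty := by
      refine ⟨T 0, 0, ?_, rfl⟩
      rw [Set.mem_neg, neg_zero]; exact hS0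
    have hbdd : ∃ t : ℝ, ¬ ∃ m ∈ ⇑T '' (-S), y - t • e - m ∈ -(interior K) := by
      obtain ⟨s, hs⟩ := exists_smul_add_mem hKcone he y
      refine ⟨-s, ?_⟩
      rintro ⟨m, ⟨z, hz, rfl⟩, hmem⟩
      rw [Set.mem_neg] at hmem
      have hm : T z ∈ interior K := by
        have heq : T z = -(y - (-s) • e - T z) + (y + s • e) := by module
        rw [heq]
        exact intK_add_K hKconv hKcone hmem (interior_subset hs)
      have hz' : -z ∈ S := Set.mem_neg.1 hz
      have hcontra : T (-z) ∈ (⇑T '' S) ∩ (-(interior K)) := by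
        refine ⟨⟨-z, hz', rfl⟩, ?_⟩
        rw [map_neg]
        exact Set.neg_mem_neg.2 hm
      rw [hT] at hcontra
      exact hcontra
    obtain ⟨t₀, hw, hiff⟩ := key hKconv hKcone hM0 he y hbdd
    have hP0 : ∃ m ∈ ⇑T '' (-S), y - (0:ℝ) • e - m ∈ -(interior K) := by
      refine ⟨T (G x), ⟨G x, hGx, rfl⟩, ?_⟩
      have heq : y - (0:ℝ) • e - T (G x) = a := by rw [hy]; module
      rw [heq]
      exact hcon
    have ht0neg : t₀ < 0 := (hiff 0).1 hP0
    have hp' := Set.mem_iInter₂.1 hp (y - t₀ • e) hw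
    rw [Set.mem_add] at hp'
    obtain ⟨q, hq, r, hr, hqr⟩ := hp'
    rw [Set.mem_singleton_iff] at hr
    subst hr
    have hq1 : q.1 = p.1 := by
      have h1 := congrArg Prod.fst hqr
      simpa using h1
    have hq2 : q.2 = p.2 - (y - t₀ • e) := by
      have h2 := congrArg Prod.snd hqr
      simp only [Prod.snd_add] at h2
      rw [← h2]; abel
    have hforward := epiConj_forward hKconv hKcone hq x ⟨⟨hxC, hxF⟩, hxG⟩
    apply hforward
    have heq : q.2 - (q.1 x - (F x + T (G x))) = t₀ • e := by
      rw [hq1, hq2, hy, ha]; module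
    rw [heq, Set.mem_neg]
    have hneg : -(t₀ • e) = (-t₀) • e := by module
    rw [hneg]
    exact smul_intK hKcone (by linarith) he
  -- Step 2: construct the weak supremum element for the conclusion
  have hMA : ((fun x => p.1 x - F x) '' (A ∩ domF)).Nonempty := by
    obtain ⟨x₀, hx₀⟩ := hAF
    exact ⟨_, x₀, hx₀, rfl⟩
  have hnP0 : ¬ ∃ m ∈ (fun x => p.1 x - F x) '' (A ∩ domF),
      p.2 - (0:ℝ) • e - m ∈ -(interior K) := by
    rintro ⟨m, ⟨x, hx, rfl⟩, hmem⟩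
    apply step1 x hx
    have heq : p.2 - (0:ℝ) • e - (p.1 x - F x) = p.2 - (p.1 x - F x) := by module
    rwa [heq] at hmem
  obtain ⟨t₀, hw, hiff⟩ := key hKconv hKcone hMA he p.2 ⟨0, hnP0⟩
  have ht0 : 0 ≤ t₀ := not_lt.1 fun h => hnP0 ((hiff 0).2 h)
  refine ⟨p.2 - t₀ • e, hw, ?_⟩
  have heq : p.2 - (p.2 - t₀ • e) = t₀ • e := by module
  rw [heq]
  rcases ht0.eq_or_lt with h | h
  · rw [← h, zero_smul]; exact hK0
  · exact hKcone t₀ h (Set.smul_mem_smul_set (interior_subset he))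
end

section
/- (Farkas lemma under Slater condition) Assume C nonempty convex, F proper K-convex, G proper S-convex, A ∩ dom F ≠ ∅, and there exists x̄ ∈ C ∩ dom F with G(x̄) ∈ −int S. Then for every (L, y) ∈ L(X,Y) × Y: [x ∈ C, G(x) ∈ −S ⟹ F(x) − L(x) + y ∉ −int K] if and only if there exists T ∈ L₊(S,K) such that F(x) + (T∘G)(x) − L(x) + y ∉ −int K for all x ∈ C. -/
open Set Pointwise Topology

set_option linter.unusedSectionVars false
set_option maxHeartbeats 1000000

lemma auxEps {a b : ℝ} (h : ∀ ε : ℝ, 0 < ε → ε < 1 → 0 ≤ a + ε * b) : 0 ≤ a := by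
  by_contra hc
  push_neg at hc
  rcases le_or_gt b 0 with hb | hb
  · have := h (1/2) (by norm_num) (by norm_num); nlinarith
  · have hε : 0 < min (1/2) (-a / (2 * b)) := lt_min (by norm_num) (div_pos (by linarith) (by linarith))
    have hε1 : min (1/2) (-a / (2 * b)) < 1 :=
      lt_of_le_of_lt (min_le_left _ _) (by norm_num)
    have h1 := h _ hε hε1
    have h2 : min (1/2) (-a / (2 * b)) ≤ -a / (2 * b) := min_le_right _ _
    have h3 : min (1/2) (-a / (2 * b)) * b ≤ (-a / (2 * b)) * b :=
      mul_le_mul_of_nonneg_right h2 hb.le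
    have h4 : (-a / (2 * b)) * b = -a / 2 := by field_simp
    nlinarith

section aux
variable {E : Type*} [AddCommGroup E] [Module ℝ E] [TopologicalSpace E]
  [IsTopologicalAddGroup E] [ContinuousSMul ℝ E]

lemma auxConeAdd {W : Set E} (hconv : Convex ℝ W)
    (hcone : ∀ c : ℝ, 0 < c → c • W ⊆ W) {a b : E} (ha : a ∈ W) (hb : b ∈ W) :
    a + b ∈ W := by
  have h := hconv ha hb (by norm_num : (0:ℝ) ≤ 1/2) (by norm_num : (0:ℝ) ≤ 1/2) (by norm_num)
  have h2 := hcone 2 two_pos (smul_mem_smul_set h)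
  have : (2:ℝ) • ((1/2 : ℝ) • a + (1/2 : ℝ) • b) = a + b := by
    rw [smul_add, smul_smul, smul_smul]; norm_num
  rwa [this] at h2

lemma auxSmulInt {W : Set E} (hcone : ∀ c : ℝ, 0 < c → c • W ⊆ W) {t : ℝ} (ht : 0 < t)
    {w : E} (hw : w ∈ interior W) : t • w ∈ interior W := by
  have h : t • w ∈ t • interior W := smul_mem_smul_set hw
  rw [← interior_smul₀ ht.ne' W] at h
  exact interior_mono (hcone t ht) h

lemma auxAddInt {W : Set E} (hconv : Convex ℝ W)
    (hcone : ∀ c : ℝ, 0 < c → c • W ⊆ W) {a b : E} (ha : a ∈ W) (hb : b ∈ interior W) :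
    a + b ∈ interior W := by
  have h := hconv.combo_self_interior_mem_interior ha hb
    (by norm_num : (0:ℝ) ≤ 1/2) (by norm_num : (0:ℝ) < 1/2) (by norm_num)
  have h2 := auxSmulInt hcone two_pos h
  have : (2:ℝ) • ((1/2 : ℝ) • a + (1/2 : ℝ) • b) = a + b := by
    rw [smul_add, smul_smul, smul_smul]; norm_num
  rwa [this] at h2

lemma auxZero {W : Set E} (g : E →L[ℝ] ℝ) (hg : ∀ w ∈ W, 0 ≤ g w) {w₀ : E}
    (hw₀ : w₀ ∈ interior W) (h0 : g w₀ = 0) : ∀ v, g v = 0 := by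
  intro v
  have hcont : Continuous fun t : ℝ => w₀ + t • v :=
    continuous_const.add (continuous_id.smul continuous_const)
  have htend : Filter.Tendsto (fun t : ℝ => w₀ + t • v) (nhds 0) (nhds w₀) := by
    simpa using hcont.tendsto 0
  have hWn : W ∈ nhds w₀ := mem_interior_iff_mem_nhds.mp hw₀
  have hW1 : ∀ᶠ t : ℝ in nhds 0, w₀ + t • v ∈ W := htend.eventually_mem hWn
  have hneg : Filter.Tendsto (fun t : ℝ => -t) (nhds 0) (nhds (0:ℝ)) := by
    simpa using (continuous_neg.tendsto (0:ℝ))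
  have hW2 : ∀ᶠ t : ℝ in nhds 0, w₀ + (-t) • v ∈ W := hneg.eventually hW1
  have hcomb := ((hW1.and hW2).filter_mono (nhdsWithin_le_nhds (s := Ioi (0:ℝ)))).and
    eventually_mem_nhdsWithin
  obtain ⟨t, ⟨h1, h2⟩, ht⟩ := hcomb.exists
  have ht' : (0:ℝ) < t := ht
  have e1 : g (w₀ + t • v) = t * g v := by
    rw [map_add, map_smul, h0, zero_add, smul_eq_mul]
  have e2 : g (w₀ + (-t) • v) = -(t * g v) := by
    rw [map_add, map_smul, h0, zero_add, smul_eq_mul]; ring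
  have g1 := hg _ h1; have g2 := hg _ h2
  rw [e1] at g1; rw [e2] at g2
  have : t * g v = 0 := le_antisymm (by linarith) g1
  exact (mul_eq_zero.mp this).resolve_left ht'.ne'

/-- a nonneg functional on W positive on the interior, once positive somewhere on W -/
lemma auxIntPos {W : Set E} (g : E →L[ℝ] ℝ) (hg : ∀ w ∈ W, 0 ≤ g w) {w₁ : E}
    (hw₁ : 0 < g w₁) {w : E} (hw : w ∈ interior W) : 0 < g w := by
  rcases (hg w (interior_subset hw)).lt_or_eq with h | h
  · exact h
  · exact absurd (auxZero g hg hw h.symm w₁) hw₁.ne'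

end aux

theorem stmt15 {X Y Z : Type*}
    [AddCommGroup X] [Module ℝ X] [TopologicalSpace X] [IsTopologicalAddGroup X]
    [ContinuousSMul ℝ X] [T2Space X] [LocallyConvexSpace ℝ X]
    [AddCommGroup Y] [Module ℝ Y] [TopologicalSpace Y] [IsTopologicalAddGroup Y]
    [ContinuousSMul ℝ Y] [T2Space Y] [LocallyConvexSpace ℝ Y]
    [AddCommGroup Z] [Module ℝ Z] [TopologicalSpace Z] [IsTopologicalAddGroup Z]
    [ContinuousSMul ℝ Z] [T2Space Z] [LocallyConvexSpace ℝ Z]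
    (K : Set Y) (hKcl : IsClosed K) (hKconv : Convex ℝ K)
    (hKcone : ∀ c : ℝ, 0 < c → c • K ⊆ K) (hK0 : (0:Y) ∈ K)
    (hKpointed : K ∩ (-K) ⊆ {0}) (hKint : (interior K).Nonempty)
    (S : Set Z) (hScl : IsClosed S) (hSconv : Convex ℝ S)
    (hScone : ∀ c : ℝ, 0 < c → c • S ⊆ S) (hS0 : (0:Z) ∈ S)
    (C : Set X) (hCne : C.Nonempty) (hCconv : Convex ℝ C)
    (F : X → Y) (domF : Set X) (hFprop : domF.Nonempty)
    (hFconv : Convex ℝ {p : X × Y | p.1 ∈ domF ∧ p.2 - F p.1 ∈ K})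
    (G : X → Z) (domG : Set X) (hGprop : domG.Nonempty)
    (hGconv : Convex ℝ {p : X × Z | p.1 ∈ domG ∧ p.2 - G p.1 ∈ S})
    (A : Set X) (hA : A = {x | x ∈ C ∧ x ∈ domG ∧ G x ∈ -S})
    (hAF : (A ∩ domF).Nonempty)
    (hslater : ∃ x' ∈ C ∩ domF, x' ∈ domG ∧ G x' ∈ -(interior S)) :
    ∀ (L : X →L[ℝ] Y) (y : Y),
      ((∀ x, x ∈ C → x ∈ domG → G x ∈ -S → x ∈ domF →
          F x - L x + y ∉ -(interior K)) ↔
        ∃ T : Z →L[ℝ] Y, ⇑T '' S ⊆ K ∧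
          ∀ x ∈ C, x ∈ domF → x ∈ domG →
            F x + T (G x) - L x + y ∉ -(interior K)) := by
  intro L y
  obtain ⟨x', ⟨hx'C, hx'F⟩, hx'G, hx'S⟩ := hslater
  obtain ⟨k₀, hk₀⟩ := hKint
  have hs' : -G x' ∈ interior S := Set.mem_neg.mp hx'S
  constructor
  · -- hard direction
    intro h
    -- the convex set M
    set M : Set (Z × Y) := {p : Z × Y | ∃ x, x ∈ C ∧ x ∈ domF ∧ x ∈ domG ∧
      ∃ s ∈ S, ∃ k ∈ K, p = (G x + s, F x - L x + y + k)} with hM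
    have hMconv : Convex ℝ M := by
      rintro p₁ ⟨x₁, hx₁C, hx₁F, hx₁G, s₁, hs₁, k₁, hk₁, rfl⟩
        p₂ ⟨x₂, hx₂C, hx₂F, hx₂G, s₂, hs₂, k₂, hk₂, rfl⟩ a b ha hb hab
      rcases ha.eq_or_lt with rfl | ha'
      · have hb1 : b = 1 := by linarith
        subst hb1
        simp only [zero_smul, one_smul, zero_add]
        exact ⟨x₂, hx₂C, hx₂F, hx₂G, s₂, hs₂, k₂, hk₂, rfl⟩
      rcases hb.eq_or_lt with rfl | hb'
      · have ha1 : a = 1 := by linarith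
        subst ha1
        simp only [zero_smul, one_smul, add_zero]
        exact ⟨x₁, hx₁C, hx₁F, hx₁G, s₁, hs₁, k₁, hk₁, rfl⟩
      have hF := hFconv (x := (x₁, F x₁)) ⟨hx₁F, by simpa using hK0⟩
        (y := (x₂, F x₂)) ⟨hx₂F, by simpa using hK0⟩ ha hb hab
      have hG := hGconv (x := (x₁, G x₁)) ⟨hx₁G, by simpa using hS0⟩
        (y := (x₂, G x₂)) ⟨hx₂G, by simpa using hS0⟩ ha hb hab
      simp only [Prod.smul_mk, Prod.mk_add_mk, Set.mem_setOf_eq] at hF hG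
      refine ⟨a • x₁ + b • x₂, hCconv hx₁C hx₂C ha hb hab, hF.1, hG.1,
        (a • G x₁ + b • G x₂ - G (a • x₁ + b • x₂)) + (a • s₁ + b • s₂), ?_,
        (a • F x₁ + b • F x₂ - F (a • x₁ + b • x₂)) + (a • k₁ + b • k₂), ?_, ?_⟩
      · exact auxConeAdd hSconv hScone hG.2 (auxConeAdd hSconv hScone
          (hScone a ha' (smul_mem_smul_set hs₁)) (hScone b hb' (smul_mem_smul_set hs₂)))
      · exact auxConeAdd hKconv hKcone hF.2 (auxConeAdd hKconv hKcone
          (hKcone a ha' (smul_mem_smul_set hk₁)) (hKcone b hb' (smul_mem_smul_set hk₂)))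
      · have hL : L (a • x₁ + b • x₂) = a • L x₁ + b • L x₂ := by
          rw [map_add, map_smul, map_smul]
        have hy : a • y + b • y = y := by rw [← add_smul, hab, one_smul]
        simp only [Prod.smul_mk, Prod.mk_add_mk, Prod.mk.injEq]
        constructor
        · simp only [smul_add]; abel
        · rw [hL]
          have : a • (F x₁ - L x₁ + y + k₁) + b • (F x₂ - L x₂ + y + k₂)
              = (a • F x₁ + b • F x₂) - (a • L x₁ + b • L x₂) + (a • y + b • y)
                + (a • k₁ + b • k₂) := by
            simp only [smul_add, smul_sub]; abel
          rw [this, hy]; abel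
    -- the open convex set U
    set U : Set (Z × Y) := (-(interior S)) ×ˢ (-(interior K)) with hU
    have hUopen : IsOpen U := (isOpen_interior.neg).prod (isOpen_interior.neg)
    have hUconv : Convex ℝ U := (hSconv.interior.neg).prod (hKconv.interior.neg)
    have hp₀U : (G x', -k₀) ∈ U := by
      refine ⟨hx'S, ?_⟩
      simpa using hk₀
    have hdisj : Disjoint U M := by
      rw [Set.disjoint_left]
      rintro ⟨pz, py⟩ ⟨hpz, hpy⟩ ⟨x, hxC, hxF, hxG, s, hs, k, hk, hpe⟩
      rw [Prod.mk.injEq] at hpe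
      obtain ⟨hz, hyy⟩ := hpe
      have h1 : -(G x + s) ∈ interior S := Set.mem_neg.mp (hz ▸ hpz)
      have h2 : -(F x - L x + y + k) ∈ interior K := Set.mem_neg.mp (hyy ▸ hpy)
      have hGx : G x ∈ -S := by
        rw [Set.mem_neg]
        have := auxAddInt hSconv hScone hs h1
        have he : s + -(G x + s) = -G x := by abel
        rw [he] at this
        exact interior_subset this
      have hFx : F x - L x + y ∈ -(interior K) := by
        rw [Set.mem_neg]
        have := auxAddInt hKconv hKcone hk h2
        have he : k + -(F x - L x + y + k) = -(F x - L x + y) := by abel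
        rwa [he] at this
      exact h x hxC hxG hGx hxF hFx
    obtain ⟨φ, u, hsep1, hsep2⟩ := geometric_hahn_banach_open hUconv hUopen hMconv hdisj
    -- U is closed under positive scaling
    have hUcone : ∀ t : ℝ, 0 < t → ∀ p ∈ U, t • p ∈ U := by
      rintro t ht ⟨pz, py⟩ ⟨h1, h2⟩
      constructor
      · rw [Set.mem_neg] at h1 ⊢
        have := auxSmulInt hScone ht h1
        rwa [smul_neg] at this
      · rw [Set.mem_neg] at h2 ⊢
        have := auxSmulInt hKcone ht h2
        rwa [smul_neg] at this
    -- φ ≤ 0 on U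
    have hφU : ∀ p ∈ U, φ p ≤ 0 := by
      intro p hp
      by_contra hφ
      push_neg at hφ
      have ht : 0 < (|u| + 1) / φ p := div_pos (by positivity) hφ
      have := hsep1 _ (hUcone _ ht p hp)
      rw [map_smul, smul_eq_mul, div_mul_cancel₀ _ hφ.ne'] at this
      have := le_abs_self u
      linarith
    -- 0 ≤ u
    have hu : 0 ≤ u := by
      by_contra hu'
      push_neg at hu'
      have hφ0 : φ (G x', -k₀) ≤ 0 := hφU _ hp₀U
      rcases hφ0.lt_or_eq with hlt | heq
      · have ht : 0 < u / (2 * φ (G x', -k₀)) :=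
          div_pos_iff.mpr (Or.inr ⟨hu', by linarith⟩)
        have h2 := hsep1 _ (hUcone _ ht _ hp₀U)
        rw [map_smul, smul_eq_mul] at h2
        have hne : φ (G x', -k₀) ≠ 0 := hlt.ne
        have h3 : u / (2 * φ (G x', -k₀)) * φ (G x', -k₀) = u / 2 := by
          field_simp
        linarith
      · have h2 := hsep1 _ hp₀U
        rw [heq] at h2
        linarith
    -- decompose φ
    set f : Z →L[ℝ] ℝ := φ.comp (ContinuousLinearMap.inl ℝ Z Y) with hf
    set g : Y →L[ℝ] ℝ := φ.comp (ContinuousLinearMap.inr ℝ Z Y) with hg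
    have hφeq : ∀ z w, φ (z, w) = f z + g w := by
      intro z w
      rw [hf, hg]
      simp only [ContinuousLinearMap.comp_apply, ContinuousLinearMap.inl_apply,
        ContinuousLinearMap.inr_apply]
      rw [← map_add]
      norm_num
    have hfg : ∀ s' ∈ interior S, ∀ k' ∈ interior K, 0 ≤ f s' + g k' := by
      intro s' hs'' k' hk'
      have hmem : ((-s', -k') : Z × Y) ∈ U := by
        constructor
        · rw [Set.mem_neg, neg_neg]; exact hs''
        · rw [Set.mem_neg, neg_neg]; exact hk'
      have := hφU _ hmem
      rw [hφeq, map_neg, map_neg] at this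
      linarith
    have hfint : ∀ s ∈ interior S, 0 ≤ f s := by
      intro s hs
      refine auxEps (b := g k₀) fun ε hε hε1 => ?_
      have := hfg s hs (ε • k₀) (auxSmulInt hKcone hε hk₀)
      rw [map_smul, smul_eq_mul] at this
      linarith
    have hfS : ∀ s ∈ S, 0 ≤ f s := by
      intro s hs
      refine auxEps (b := f (-G x') - f s) fun ε hε hε1 => ?_
      have hmem := hSconv.combo_interior_self_mem_interior (a := ε) (b := 1 - ε) hs' hs hε
        (by linarith) (by ring)
      have h1 := hfint _ hmem
      rw [map_add, map_smul, map_smul, smul_eq_mul, smul_eq_mul] at h1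
      nlinarith
    have hgint : ∀ k ∈ interior K, 0 ≤ g k := by
      intro k hk
      refine auxEps (b := f (-G x')) fun ε hε hε1 => ?_
      have := hfg (ε • -G x') (auxSmulInt hScone hε hs') k hk
      rw [map_smul, smul_eq_mul] at this
      linarith
    have hgK : ∀ k ∈ K, 0 ≤ g k := by
      intro k hk
      refine auxEps (b := g k₀ - g k) fun ε hε hε1 => ?_
      have hmem := hKconv.combo_interior_self_mem_interior (a := ε) (b := 1 - ε) hk₀ hk hε
        (by linarith) (by ring)
      have h1 := hgint _ hmem
      rw [map_add, map_smul, map_smul, smul_eq_mul, smul_eq_mul] at h1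
      nlinarith
    -- the Slater point lies in M
    have hp'M : ((G x' + 0, F x' - L x' + y + 0) : Z × Y) ∈ M :=
      ⟨x', hx'C, hx'F, hx'G, 0, hS0, 0, hK0, rfl⟩
    have hp'M' : 0 ≤ f (G x') + g (F x' - L x' + y) := by
      have := le_trans hu (hsep2 _ hp'M)
      rw [hφeq] at this
      simpa using this
    -- g k₀ > 0
    have hgk₀ : 0 < g k₀ := by
      rcases (hgK k₀ (interior_subset hk₀)).lt_or_eq with h' | h'
      · exact h'
      · exfalso
        have hg0 : ∀ v, g v = 0 := auxZero g hgK hk₀ h'.symm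
        have hfGx' : 0 ≤ f (G x') := by
          have := hp'M'
          rw [hg0] at this
          linarith
        have hfs' : f (-G x') = 0 := by
          have h1 := hfS _ (interior_subset hs')
          rw [map_neg] at h1 ⊢
          linarith
        have hf0 : ∀ v, f v = 0 := auxZero f hfS hs' hfs'
        have h2 := hsep1 _ hp₀U
        rw [hφeq, hf0, hg0] at h2
        have h3 := hsep2 _ hp'M
        rw [hφeq, hf0, hg0] at h3
        linarith
    -- build T
    set c := g k₀ with hc
    refine ⟨f.smulRight (c⁻¹ • k₀), ?_, ?_⟩
    · rintro _ ⟨s, hs, rfl⟩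
      rw [ContinuousLinearMap.smulRight_apply, smul_smul]
      rcases (hfS s hs).lt_or_eq with h' | h'
      · exact hKcone _ (mul_pos h' (inv_pos.mpr hgk₀)) (smul_mem_smul_set (interior_subset hk₀))
      · rw [← h', zero_mul, zero_smul]; exact hK0
    · intro x hxC hxF hxG hbad
      have hw : -(F x + (f.smulRight (c⁻¹ • k₀)) (G x) - L x + y) ∈ interior K :=
        Set.mem_neg.mp hbad
      have hgw : 0 < g (-(F x + (f.smulRight (c⁻¹ • k₀)) (G x) - L x + y)) :=
        auxIntPos g hgK hgk₀ hw
      have hgT : g ((f.smulRight (c⁻¹ • k₀)) (G x)) = f (G x) := by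
        rw [ContinuousLinearMap.smulRight_apply, smul_smul, map_smul, smul_eq_mul]
        rw [← hc]
        have hcne : c ≠ 0 := hgk₀.ne'
        field_simp
      have hxM : ((G x + 0, F x - L x + y + 0) : Z × Y) ∈ M :=
        ⟨x, hxC, hxF, hxG, 0, hS0, 0, hK0, rfl⟩
      have h1 : 0 ≤ f (G x) + g (F x - L x + y) := by
        have := le_trans hu (hsep2 _ hxM)
        rw [hφeq] at this
        simpa using this
      rw [map_neg, map_add, map_sub, map_add, hgT] at hgw
      rw [map_add, map_sub] at h1
      linarith
  · -- easy direction
    rintro ⟨T, hTS, hT⟩ x hxC hxG hGx hxF hbad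
    have hTGx : -T (G x) ∈ K := by
      have : T (-G x) ∈ K := hTS ⟨-G x, Set.mem_neg.mp hGx, rfl⟩
      rwa [map_neg] at this
    have h1 : -(F x - L x + y) ∈ interior K := Set.mem_neg.mp hbad
    have h2 : -T (G x) + -(F x - L x + y) ∈ interior K := auxAddInt hKconv hKcone hTGx h1
    have he : -T (G x) + -(F x - L x + y) = -(F x + T (G x) - L x + y) := by abel
    rw [he] at h2
    exact hT x hxC hxF hxG (Set.mem_neg.mpr h2)
end

section
/- (Weak Farkas lemma) Under the assumptions of the Slater-condition Farkas lemma, for every (L, y) ∈ L(X,Y) × Y: [x ∈ C, G(x) ∈ −S ⟹ F(x) − L(x) + y ∉ −int K] if and only if there exists T ∈ L₊^w(S,K) (i.e., T(S) ∩ (−int K) = ∅) such that F(x) + (T∘G)(x) − L(x) + y ∉ T(−S) − int K for all x ∈ C. -/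
open Set Pointwise Topology
set_option linter.unusedSectionVars false


section aux
variable {E : Type*} [AddCommGroup E] [Module ℝ E] [TopologicalSpace E]
  [IsTopologicalAddGroup E] [ContinuousSMul ℝ E]

private lemma aux_smul_mem {W : Set E} (hcone : ∀ c : ℝ, 0 < c → c • W ⊆ W)
    (h0 : (0:E) ∈ W) {a : ℝ} (ha : 0 ≤ a) {w : E} (hw : w ∈ W) : a • w ∈ W := by
  rcases ha.lt_or_eq with h | h
  · exact hcone a h (Set.smul_mem_smul_set hw)
  · simpa [← h] using h0

private lemma aux_add_mem {W : Set E} (hconv : Convex ℝ W)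
    (hcone : ∀ c : ℝ, 0 < c → c • W ⊆ W) {w v : E} (hw : w ∈ W) (hv : v ∈ W) :
    w + v ∈ W := by
  have hmid : (1/2 : ℝ) • w + (1/2 : ℝ) • v ∈ W :=
    hconv hw hv (by norm_num) (by norm_num) (by norm_num)
  have h2 : (2:ℝ) • ((1/2 : ℝ) • w + (1/2 : ℝ) • v) ∈ W :=
    hcone 2 two_pos (Set.smul_mem_smul_set hmid)
  have he : (2:ℝ) • ((1/2 : ℝ) • w + (1/2 : ℝ) • v) = w + v := by module
  rwa [he] at h2

private lemma aux_smul_interior {W : Set E} (hcone : ∀ c : ℝ, 0 < c → c • W ⊆ W)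
    {c : ℝ} (hc : 0 < c) {w : E} (hw : w ∈ interior W) : c • w ∈ interior W := by
  have hsub : c • interior W ⊆ W := (Set.smul_set_mono interior_subset).trans (hcone c hc)
  exact interior_maximal hsub (isOpen_interior.smul₀ hc.ne') (Set.smul_mem_smul_set hw)

private lemma aux_interior_add {W : Set E} (hconv : Convex ℝ W)
    (hcone : ∀ c : ℝ, 0 < c → c • W ⊆ W) {w₀ w : E}
    (hw₀ : w₀ ∈ interior W) (hw : w ∈ W) : w₀ + w ∈ interior W := by
  have hsub : interior W + {w} ⊆ W := by
    rintro _ ⟨u', hu', v', hv', rfl⟩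
    rw [Set.mem_singleton_iff] at hv'; subst hv'
    exact aux_add_mem hconv hcone (interior_subset hu') hw
  exact interior_maximal hsub isOpen_interior.add_right
    (Set.add_mem_add hw₀ (Set.mem_singleton w))

private lemma aux_zero_of_interior {W : Set E} (hW : IsOpen W) {φ : E →L[ℝ] ℝ}
    (hφ : ∀ w ∈ W, 0 ≤ φ w) {w₀ : E} (h0 : w₀ ∈ W) (hv : φ w₀ = 0) : φ = 0 := by
  ext v
  simp only [ContinuousLinearMap.zero_apply]
  have hc : Continuous fun t : ℝ => w₀ + t • v :=
    continuous_const.add (continuous_id.smul continuous_const)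
  have h1 : ∀ᶠ t : ℝ in 𝓝 0, w₀ + t • v ∈ W := by
    have ht : Filter.Tendsto (fun t : ℝ => w₀ + t • v) (𝓝 0) (𝓝 w₀) := by
      simpa using hc.tendsto 0
    exact ht.eventually_mem (hW.mem_nhds h0)
  obtain ⟨ε, hε, hb⟩ := Metric.eventually_nhds_iff.mp h1
  have hp := hφ _ (hb (show dist (ε/2) (0:ℝ) < ε by
    rw [Real.dist_eq, sub_zero, abs_of_pos (by linarith)]; linarith))
  have hm := hφ _ (hb (show dist (-(ε/2)) (0:ℝ) < ε by
    rw [Real.dist_eq, sub_zero, abs_of_neg (by linarith)]; linarith))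
  rw [map_add, map_smul, smul_eq_mul, hv] at hp hm
  nlinarith

end aux

private lemma scalar_aux {a b : ℝ} (h : ∀ c : ℝ, 0 < c → -(c * a) ≤ b) : 0 ≤ a ∧ 0 ≤ b := by
  have h1 := h 1 one_pos
  have ha : 0 ≤ a := by
    by_contra ha; push_neg at ha
    have h2 := h ((-b - 1) / a) (div_pos_of_neg_of_neg (by nlinarith) ha)
    rw [div_mul_cancel₀ _ (ne_of_lt ha)] at h2
    linarith
  refine ⟨ha, ?_⟩
  by_contra hb; push_neg at hb
  rcases ha.eq_or_lt with h' | h'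
  · rw [← h'] at h1; simp at h1; linarith
  · have h2 := h (-b / (2 * a)) (div_pos (by linarith) (by linarith))
    have he : -b / (2 * a) * a = -b / 2 := by field_simp
    rw [he] at h2; linarith


theorem stmt16 {X Y Z : Type*}
    [AddCommGroup X] [Module ℝ X] [TopologicalSpace X] [IsTopologicalAddGroup X]
    [ContinuousSMul ℝ X] [T2Space X] [LocallyConvexSpace ℝ X]
    [AddCommGroup Y] [Module ℝ Y] [TopologicalSpace Y] [IsTopologicalAddGroup Y]
    [ContinuousSMul ℝ Y] [T2Space Y] [LocallyConvexSpace ℝ Y]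
    [AddCommGroup Z] [Module ℝ Z] [TopologicalSpace Z] [IsTopologicalAddGroup Z]
    [ContinuousSMul ℝ Z] [T2Space Z] [LocallyConvexSpace ℝ Z]
    (K : Set Y) (hKcl : IsClosed K) (hKconv : Convex ℝ K)
    (hKcone : ∀ c : ℝ, 0 < c → c • K ⊆ K) (hK0 : (0:Y) ∈ K)
    (hKpointed : K ∩ (-K) ⊆ {0}) (hKint : (interior K).Nonempty)
    (S : Set Z) (hScl : IsClosed S) (hSconv : Convex ℝ S)
    (hScone : ∀ c : ℝ, 0 < c → c • S ⊆ S) (hS0 : (0:Z) ∈ S)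
    (C : Set X) (hCne : C.Nonempty) (hCconv : Convex ℝ C)
    (F : X → Y) (domF : Set X) (hFprop : domF.Nonempty)
    (hFconv : Convex ℝ {p : X × Y | p.1 ∈ domF ∧ p.2 - F p.1 ∈ K})
    (G : X → Z) (domG : Set X) (hGprop : domG.Nonempty)
    (hGconv : Convex ℝ {p : X × Z | p.1 ∈ domG ∧ p.2 - G p.1 ∈ S})
    (A : Set X) (hA : A = {x | x ∈ C ∧ x ∈ domG ∧ G x ∈ -S})
    (hAF : (A ∩ domF).Nonempty)
    (hslater : ∃ x' ∈ C ∩ domF, x' ∈ domG ∧ G x' ∈ -(interior S)) :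
    ∀ (L : X →L[ℝ] Y) (y : Y),
      ((∀ x, x ∈ C → x ∈ domG → G x ∈ -S → x ∈ domF →
          F x - L x + y ∉ -(interior K)) ↔
        ∃ T : Z →L[ℝ] Y, (⇑T '' S) ∩ (-(interior K)) = ∅ ∧
          ∀ x ∈ C, x ∈ domF → x ∈ domG →
            F x + T (G x) - L x + y ∉ (⇑T '' (-S) - interior K)) := by
  intro L y
  constructor
  · intro hyp
    obtain ⟨k₀, hk₀⟩ := hKint
    obtain ⟨x', ⟨hx'C, hx'F⟩, hx'G, hGx'⟩ := hslater
    have hs₀ : -G x' ∈ interior S := Set.mem_neg.mp hGx'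
    set s₀ : Z := -G x' with hs₀def
    set EE : Set (Y × Z) :=
      {p | ∃ x, x ∈ C ∧ x ∈ domF ∧ x ∈ domG ∧ p.1 - (F x - L x + y) ∈ K ∧ p.2 - G x ∈ S}
      with hEEdef
    set O : Set (Y × Z) := (-interior K) ×ˢ (-interior S) with hOdef
    have hEEconv : Convex ℝ EE := by
      rintro p ⟨x₁, hx₁C, hx₁F, hx₁G, hp1, hp2⟩ q ⟨x₂, hx₂C, hx₂F, hx₂G, hq1, hq2⟩ a b ha hb hab
      have hb1 : b = 1 - a := by linarith
      subst hb1
      have hF : (a • x₁ + (1-a) • x₂ ∈ domF) ∧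
          ((a • F x₁ + (1-a) • F x₂) - F (a • x₁ + (1-a) • x₂) ∈ K) :=
        hFconv (show ((x₁, F x₁) : X × Y) ∈ _ from ⟨hx₁F, by simpa using hK0⟩)
          (show ((x₂, F x₂) : X × Y) ∈ _ from ⟨hx₂F, by simpa using hK0⟩) ha hb hab
      have hG : (a • x₁ + (1-a) • x₂ ∈ domG) ∧
          ((a • G x₁ + (1-a) • G x₂) - G (a • x₁ + (1-a) • x₂) ∈ S) :=
        hGconv (show ((x₁, G x₁) : X × Z) ∈ _ from ⟨hx₁G, by simpa using hS0⟩)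
          (show ((x₂, G x₂) : X × Z) ∈ _ from ⟨hx₂G, by simpa using hS0⟩) ha hb hab
      refine ⟨a • x₁ + (1-a) • x₂, hCconv hx₁C hx₂C ha hb hab, hF.1, hG.1, ?_, ?_⟩
      · have hL : L (a • x₁ + (1-a) • x₂) = a • L x₁ + (1-a) • L x₂ := by
          rw [map_add, map_smul, map_smul]
        have key : (a • p + (1-a) • q).1 - (F (a • x₁ + (1-a) • x₂)
              - L (a • x₁ + (1-a) • x₂) + y)
            = a • (p.1 - (F x₁ - L x₁ + y)) + ((1-a) • (q.1 - (F x₂ - L x₂ + y))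
              + ((a • F x₁ + (1-a) • F x₂) - F (a • x₁ + (1-a) • x₂))) := by
          simp only [Prod.fst_add, Prod.smul_fst]
          rw [hL]; module
        rw [key]
        exact aux_add_mem hKconv hKcone (aux_smul_mem hKcone hK0 ha hp1)
          (aux_add_mem hKconv hKcone (aux_smul_mem hKcone hK0 (by linarith) hq1) hF.2)
      · have key : (a • p + (1-a) • q).2 - G (a • x₁ + (1-a) • x₂)
            = a • (p.2 - G x₁) + ((1-a) • (q.2 - G x₂)
              + ((a • G x₁ + (1-a) • G x₂) - G (a • x₁ + (1-a) • x₂))) := by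
          simp only [Prod.snd_add, Prod.smul_snd]
          module
        rw [key]
        exact aux_add_mem hSconv hScone (aux_smul_mem hScone hS0 ha hp2)
          (aux_add_mem hSconv hScone (aux_smul_mem hScone hS0 (by linarith) hq2) hG.2)
    have hdisj : Disjoint O EE := by
      rw [Set.disjoint_left]
      rintro p hpO ⟨x, hxC, hxF, hxG, h1, h2⟩
      have hp1 : -p.1 ∈ interior K := Set.mem_neg.mp hpO.1
      have hp2 : -p.2 ∈ interior S := Set.mem_neg.mp hpO.2
      have hGx : G x ∈ -S := by
        refine Set.mem_neg.mpr (interior_subset ?_)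
        have h3 : -G x = -p.2 + (p.2 - G x) := by abel
        rw [h3]
        exact aux_interior_add hSconv hScone hp2 h2
      refine hyp x hxC hxG hGx hxF (Set.mem_neg.mpr ?_)
      have h3 : -(F x - L x + y) = -p.1 + (p.1 - (F x - L x + y)) := by abel
      rw [h3]
      exact aux_interior_add hKconv hKcone hp1 h1
    have hOconv : Convex ℝ O := (hKconv.interior.neg).prod (hSconv.interior.neg)
    have hOopen : IsOpen O := (isOpen_interior.neg).prod (isOpen_interior.neg)
    obtain ⟨f, u, hfO, hfE⟩ := geometric_hahn_banach_open hOconv hOopen hEEconv hdisj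
    set ys : Y →L[ℝ] ℝ := f.comp (ContinuousLinearMap.inl ℝ Y Z) with hysdef
    set zs : Z →L[ℝ] ℝ := f.comp (ContinuousLinearMap.inr ℝ Y Z) with hzsdef
    have hf : ∀ p : Y × Z, f p = ys p.1 + zs p.2 := by
      intro p
      have h : f ((p.1, (0:Z)) + ((0:Y), p.2)) = ys p.1 + zs p.2 := by
        rw [map_add]; rfl
      simpa using h
    have hO' : ∀ k ∈ interior K, ∀ s ∈ interior S, ∀ c d : ℝ, 0 < c → 0 < d →
        -(c * ys k) - d * zs s < u := by
      intro k hk s hs c d hc hd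
      have hmem : ((-(c • k), -(d • s)) : Y × Z) ∈ O := by
        refine Set.mem_prod.mpr ⟨Set.mem_neg.mpr ?_, Set.mem_neg.mpr ?_⟩
        · rw [neg_neg]; exact aux_smul_interior hKcone hc hk
        · rw [neg_neg]; exact aux_smul_interior hScone hd hs
      have h := hfO _ hmem
      rw [hf] at h
      simp only [map_neg, map_smul, smul_eq_mul] at h
      linarith
    have hu0 : 0 ≤ u :=
      (scalar_aux (a := ys k₀ + zs s₀) (fun c hc => by
        have := hO' k₀ hk₀ s₀ hs₀ c c hc hc; nlinarith)).2
    have hyint : ∀ k ∈ interior K, 0 ≤ ys k := fun k hk =>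
      (scalar_aux (b := u + zs s₀) (fun c hc => by
        have := hO' k hk s₀ hs₀ c 1 hc one_pos; linarith)).1
    have hzint : ∀ s ∈ interior S, 0 ≤ zs s := fun s hs =>
      (scalar_aux (b := u + ys k₀) (fun d hd => by
        have := hO' k₀ hk₀ s hs 1 d one_pos hd; linarith)).1
    have hzS : ∀ s ∈ S, 0 ≤ zs s := by
      intro s hs
      by_contra hneg; push_neg at hneg
      have h1 : 0 ≤ zs s₀ := hzint s₀ hs₀
      have htpos : 0 < (zs s₀ + 1) / (-(zs s)) :=
        div_pos (by linarith) (by linarith)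
      have hmem : s₀ + ((zs s₀ + 1) / (-(zs s))) • s ∈ interior S :=
        aux_interior_add hSconv hScone hs₀ (aux_smul_mem hScone hS0 htpos.le hs)
      have h2 := hzint _ hmem
      rw [map_add, map_smul, smul_eq_mul] at h2
      have he : (zs s₀ + 1) / (-(zs s)) * zs s = -(zs s₀ + 1) := by
        rw [div_neg, neg_mul, div_mul_cancel₀ _ (ne_of_lt hneg)]
      rw [he] at h2; linarith
    have hEu : ∀ x, x ∈ C → x ∈ domF → x ∈ domG →
        u ≤ ys (F x - L x + y) + zs (G x) := by
      intro x h1 h2 h3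
      have hm : ((F x - L x + y, G x) : Y × Z) ∈ EE :=
        ⟨x, h1, h2, h3, by simpa using hK0, by simpa using hS0⟩
      have h := hfE _ hm
      rwa [hf] at h
    have hyne : ys ≠ 0 := by
      intro h0
      have h1 := hEu x' hx'C hx'F hx'G
      rw [h0] at h1
      simp only [ContinuousLinearMap.zero_apply, zero_add] at h1
      have h2 : zs (G x') = -zs s₀ := by rw [hs₀def, map_neg, neg_neg]
      have h3 : 0 ≤ zs s₀ := hzint s₀ hs₀
      have hz0 : zs s₀ = 0 := by linarith
      have hzz : zs = 0 := aux_zero_of_interior isOpen_interior hzint hs₀ hz0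
      have hm : ((-k₀, -s₀) : Y × Z) ∈ O :=
        Set.mem_prod.mpr ⟨Set.mem_neg.mpr (by rwa [neg_neg]),
          Set.mem_neg.mpr (by rwa [neg_neg])⟩
      have h4 := hfO _ hm
      rw [hf, h0, hzz] at h4
      simp only [ContinuousLinearMap.zero_apply, add_zero] at h4
      linarith
    have hypos : ∀ k ∈ interior K, 0 < ys k := by
      intro k hk
      rcases (hyint k hk).lt_or_eq with h | h
      · exact h
      · exact absurd (aux_zero_of_interior isOpen_interior hyint hk h.symm) hyne
    have hk₀pos : 0 < ys k₀ := hypos k₀ hk₀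
    set T : Z →L[ℝ] Y := zs.smulRight ((ys k₀)⁻¹ • k₀) with hTdef
    have hTapp : ∀ z, ys (T z) = zs z := by
      intro z
      rw [hTdef]
      simp only [ContinuousLinearMap.smulRight_apply, map_smul, smul_eq_mul]
      field_simp
    refine ⟨T, ?_, ?_⟩
    · rw [Set.eq_empty_iff_forall_notMem]
      rintro w ⟨⟨s, hsS, rfl⟩, hw⟩
      have h1 : -(T s) ∈ interior K := Set.mem_neg.mp hw
      have h2 := hypos _ h1
      rw [map_neg, hTapp] at h2
      have := hzS s hsS
      linarith
    · intro x hxC hxF hxG hmem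
      rw [Set.mem_sub] at hmem
      obtain ⟨w, ⟨z, hz, rfl⟩, k, hk, heq⟩ := hmem
      have hzS' : -z ∈ S := Set.mem_neg.mp hz
      have happ : ys (T z - k) = ys (F x + T (G x) - L x + y) := by rw [heq]
      rw [map_sub, hTapp] at happ
      have hr : ys (F x + T (G x) - L x + y) = ys (F x - L x + y) + zs (G x) := by
        rw [show F x + T (G x) - L x + y = (F x - L x + y) + T (G x) by abel,
          map_add, hTapp]
      rw [hr] at happ
      have h1 := hEu x hxC hxF hxG
      have h2 := hzS _ hzS'
      rw [map_neg] at h2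
      have h3 := hypos k hk
      linarith
  · rintro ⟨T, hT1, hT2⟩ x hxC hxG hGx hxF hbad
    refine hT2 x hxC hxF hxG (Set.mem_sub.mpr ?_)
    exact ⟨T (G x), ⟨G x, hGx, rfl⟩, -(F x - L x + y), Set.mem_neg.mp hbad, by abel⟩
end

section
/- (Optimality condition) Let x̄ ∈ A ∩ dom F, where A = C ∩ G⁻¹(−S). Assume C nonempty convex, F proper K-convex, G proper S-convex, and the Slater condition: ∃ x̂ ∈ C ∩ dom F with G(x̂) ∈ −int S. Then x̄ is a weakly minimal solution of WMin{F(x) : x ∈ C, G(x) ∈ −S} (i.e., there is no x ∈ A with F(x) − F(x̄) ∈ −int K) if and only if there exists T ∈ L₊(S,K) such that F(x) + (T∘G)(x) − F(x̄) ∉ −int K for all x ∈ C. -/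
open Set Pointwise Topology

lemma cone_add' {E : Type*} [AddCommGroup E] [Module ℝ E] {K : Set E}
    (hconv : Convex ℝ K) (hcone : ∀ c : ℝ, 0 < c → c • K ⊆ K)
    {a b : E} (ha : a ∈ K) (hb : b ∈ K) : a + b ∈ K := by
  have h := hconv ha hb (by norm_num : (0:ℝ) ≤ 1/2) (by norm_num : (0:ℝ) ≤ 1/2) (by norm_num)
  have h2 := hcone 2 two_pos ⟨_, h, rfl⟩
  have : (2:ℝ) • ((1/2:ℝ) • a + (1/2:ℝ) • b) = a + b := by
    rw [smul_add, smul_smul, smul_smul]; norm_num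
  simpa [this] using h2

lemma cone_int_add' {E : Type*} [AddCommGroup E] [Module ℝ E] [TopologicalSpace E]
    [IsTopologicalAddGroup E] {K : Set E}
    (hconv : Convex ℝ K) (hcone : ∀ c : ℝ, 0 < c → c • K ⊆ K)
    {a b : E} (ha : a ∈ interior K) (hb : b ∈ K) : a + b ∈ interior K := by
  have hopen : IsOpen ((fun y => y + b) '' interior K) :=
    (isOpenMap_add_right b) _ isOpen_interior
  have hsub : ((fun y => y + b) '' interior K) ⊆ K := by
    rintro _ ⟨y, hy, rfl⟩
    exact cone_add' hconv hcone (interior_subset hy) hb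
  exact interior_maximal hsub hopen ⟨a, ha, rfl⟩

lemma cone_int_smul' {E : Type*} [AddCommGroup E] [Module ℝ E] [TopologicalSpace E]
    [IsTopologicalAddGroup E] [ContinuousConstSMul ℝ E] {K : Set E}
    (hcone : ∀ c : ℝ, 0 < c → c • K ⊆ K)
    {t : ℝ} (ht : 0 < t) {a : E} (ha : a ∈ interior K) : t • a ∈ interior K := by
  have hopen : IsOpen ((fun y => t • y) '' interior K) :=
    (isOpenMap_smul₀ (G₀ := ℝ) ht.ne') _ isOpen_interior
  have hsub : ((fun y => t • y) '' interior K) ⊆ K := by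
    rintro _ ⟨y, hy, rfl⟩
    exact hcone t ht ⟨y, interior_subset hy, rfl⟩
  exact interior_maximal hsub hopen ⟨a, ha, rfl⟩


private lemma rkey3 {c a : ℝ} (hc : c < 0) : ∃ t : ℝ, 0 < t ∧ c ≤ -(t * a) := by
  rcases le_or_gt a 0 with h | h
  · exact ⟨1, one_pos, by nlinarith⟩
  · refine ⟨-c / (2 * a), div_pos (by linarith) (by linarith), ?_⟩
    have h1 : -c / (2 * a) * a = -c / 2 := by field_simp
    rw [h1]; linarith

private lemma rkey2 {x b : ℝ} (hx : x < 0) (hb : 0 ≤ b) :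
    ∃ t : ℝ, 0 < t ∧ x + t * b < 0 := by
  refine ⟨-x / (2 * (b + 1)), div_pos (by linarith) (by linarith), ?_⟩
  have h1 : -x / (2 * (b + 1)) * b ≤ -x / 2 := by
    rw [div_mul_eq_mul_div, div_le_div_iff₀ (by linarith) (by norm_num)]
    nlinarith
  linarith

private lemma rkey1 {x a : ℝ} (hx : x < 0) (ha : 0 ≤ a) :
    ∃ t : ℝ, 0 < t ∧ t ≤ 1/2 ∧ t * (a - x) = -x / 2 := by
  have hd : 0 < a - x := by linarith
  refine ⟨-x / (2 * (a - x)), div_pos (by linarith) (by linarith), ?_, ?_⟩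
  · rw [div_le_div_iff₀ (by linarith) (by norm_num)]; nlinarith
  · rw [div_mul_eq_mul_div]
    rw [mul_comm (2:ℝ) (a - x), mul_comm (-x) (a - x), mul_div_mul_left _ _ (ne_of_gt hd)]

private lemma rkey4 {x a : ℝ} (ha : a ≠ 0) : a⁻¹ * x * a = x := by
  field_simp

theorem stmt17 {X Y Z : Type*}
    [AddCommGroup X] [Module ℝ X] [TopologicalSpace X] [IsTopologicalAddGroup X]
    [ContinuousSMul ℝ X] [T2Space X] [LocallyConvexSpace ℝ X]
    [AddCommGroup Y] [Module ℝ Y] [TopologicalSpace Y] [IsTopologicalAddGroup Y]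
    [ContinuousSMul ℝ Y] [T2Space Y] [LocallyConvexSpace ℝ Y]
    [AddCommGroup Z] [Module ℝ Z] [TopologicalSpace Z] [IsTopologicalAddGroup Z]
    [ContinuousSMul ℝ Z] [T2Space Z] [LocallyConvexSpace ℝ Z]
    (K : Set Y) (hKcl : IsClosed K) (hKconv : Convex ℝ K)
    (hKcone : ∀ c : ℝ, 0 < c → c • K ⊆ K) (hK0 : (0:Y) ∈ K)
    (hKpointed : K ∩ (-K) ⊆ {0}) (hKint : (interior K).Nonempty)
    (S : Set Z) (hScl : IsClosed S) (hSconv : Convex ℝ S)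
    (hScone : ∀ c : ℝ, 0 < c → c • S ⊆ S) (hS0 : (0:Z) ∈ S)
    (C : Set X) (hCne : C.Nonempty) (hCconv : Convex ℝ C)
    (F : X → Y) (domF : Set X) (hFprop : domF.Nonempty)
    (hFconv : Convex ℝ {p : X × Y | p.1 ∈ domF ∧ p.2 - F p.1 ∈ K})
    (G : X → Z) (domG : Set X) (hGprop : domG.Nonempty)
    (hGconv : Convex ℝ {p : X × Z | p.1 ∈ domG ∧ p.2 - G p.1 ∈ S})
    (A : Set X) (hA : A = {x | x ∈ C ∧ x ∈ domG ∧ G x ∈ -S})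
    (hAF : (A ∩ domF).Nonempty)
    (hslater : ∃ x' ∈ C ∩ domF, x' ∈ domG ∧ G x' ∈ -(interior S))
    (xbar : X) (hxbar : xbar ∈ A ∩ domF) :
    (¬ ∃ x, x ∈ C ∧ x ∈ domG ∧ G x ∈ -S ∧ x ∈ domF ∧
        F x - F xbar ∈ -(interior K)) ↔
      ∃ T : Z →L[ℝ] Y, ⇑T '' S ⊆ K ∧
        ∀ x ∈ C, x ∈ domF → x ∈ domG →
          F x + T (G x) - F xbar ∉ -(interior K) := by
  obtain ⟨hxbarA, hxbarF⟩ := hxbar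
  rw [hA] at hxbarA
  obtain ⟨hxbC, hxbG, hxbS⟩ := hxbarA
  obtain ⟨xh, ⟨hxhC, hxhF⟩, hxhG, hxhS⟩ := hslater
  have hxhS' : -(G xh) ∈ interior S := by rwa [Set.mem_neg] at hxhS
  constructor
  · -- hard direction
    intro hmin
    set B : Set (Z × Y) :=
      {p | ∃ x, x ∈ C ∧ x ∈ domF ∧ x ∈ domG ∧ p.1 - G x ∈ S ∧ p.2 - (F x - F xbar) ∈ K}
      with hBdef
    set U : Set (Z × Y) := (-(interior S)) ×ˢ (-(interior K)) with hUdef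
    have hUopen : IsOpen U := (isOpen_interior.neg).prod (isOpen_interior.neg)
    have hUconv : Convex ℝ U :=
      ((hSconv.interior).neg).prod ((hKconv.interior).neg)
    have hBconv : Convex ℝ B := by
      rintro ⟨p1, p2⟩ ⟨xp, hxpC, hxpF, hxpG, hpS, hpK⟩
        ⟨q1, q2⟩ ⟨xq, hxqC, hxqF, hxqG, hqS, hqK⟩ a b ha hb hab
      refine ⟨a • xp + b • xq, hCconv hxpC hxqC ha hb hab, ?_⟩
      have hpK' : ((xp, p2 + F xbar) : X × Y) ∈ {p : X × Y | p.1 ∈ domF ∧ p.2 - F p.1 ∈ K} := by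
        refine ⟨hxpF, ?_⟩
        show p2 + F xbar - F xp ∈ K
        have he : p2 + F xbar - F xp = p2 - (F xp - F xbar) := by abel
        rw [he]; exact hpK
      have hqK' : ((xq, q2 + F xbar) : X × Y) ∈ {p : X × Y | p.1 ∈ domF ∧ p.2 - F p.1 ∈ K} := by
        refine ⟨hxqF, ?_⟩
        show q2 + F xbar - F xq ∈ K
        have he : q2 + F xbar - F xq = q2 - (F xq - F xbar) := by abel
        rw [he]; exact hqK
      have hpG' : ((xp, p1) : X × Z) ∈ {p : X × Z | p.1 ∈ domG ∧ p.2 - G p.1 ∈ S} := ⟨hxpG, hpS⟩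
      have hqG' : ((xq, q1) : X × Z) ∈ {p : X × Z | p.1 ∈ domG ∧ p.2 - G p.1 ∈ S} := ⟨hxqG, hqS⟩
      have hF := hFconv hpK' hqK' ha hb hab
      have hG := hGconv hpG' hqG' ha hb hab
      simp only [Prod.smul_mk, Prod.mk_add_mk, Set.mem_setOf_eq] at hF hG
      refine ⟨hF.1, hG.1, ?_, ?_⟩
      · simp only [Prod.smul_mk, Prod.mk_add_mk]
        exact hG.2
      · simp only [Prod.smul_mk, Prod.mk_add_mk]
        have h2 := hF.2
        have hFxb : a • F xbar + b • F xbar = F xbar := by rw [← add_smul, hab, one_smul]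
        have heq : a • (p2 + F xbar) + b • (q2 + F xbar) - F (a • xp + b • xq)
            = a • p2 + b • q2 - (F (a • xp + b • xq) - F xbar) := by
          rw [smul_add, smul_add]
          rw [show a • p2 + a • F xbar + (b • q2 + b • F xbar)
              = a • p2 + b • q2 + (a • F xbar + b • F xbar) by abel, hFxb]
          abel
        rw [heq] at h2
        exact h2
    have hdisj : Disjoint U B := by
      rw [Set.disjoint_left]
      rintro p ⟨hp1, hp2⟩ ⟨x, hxC, hxF, hxG, hS', hK'⟩
      apply hmin
      refine ⟨x, hxC, hxG, ?_, hxF, ?_⟩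
      · rw [Set.mem_neg]
        have hp1' : -p.1 ∈ interior S := Set.mem_neg.mp hp1
        have h5 : -p.1 + (p.1 - G x) ∈ interior S := cone_int_add' hSconv hScone hp1' hS'
        have he : -p.1 + (p.1 - G x) = -(G x) := by abel
        rw [he] at h5
        exact interior_subset h5
      · rw [Set.mem_neg]
        have hp2' : -p.2 ∈ interior K := Set.mem_neg.mp hp2
        have h5 : -p.2 + (p.2 - (F x - F xbar)) ∈ interior K :=
          cone_int_add' hKconv hKcone hp2' hK'
        have he : -p.2 + (p.2 - (F x - F xbar)) = -(F x - F xbar) := by abel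
        rw [he] at h5
        exact h5
    obtain ⟨f, c, hfU, hfB⟩ := geometric_hahn_banach_open hUconv hUopen hBconv hdisj
    set g : Z →L[ℝ] ℝ := f.comp (ContinuousLinearMap.inl ℝ Z Y) with hgdef
    set h : Y →L[ℝ] ℝ := f.comp (ContinuousLinearMap.inr ℝ Z Y) with hhdef
    have hf : ∀ p : Z × Y, f p = g p.1 + h p.2 := by
      intro p
      have h1 : g p.1 + h p.2 = f ((p.1, (0:Y)) + ((0:Z), p.2)) := (map_add f _ _).symm
      rw [h1]
      congr 1
      simp
    have hB0k : ∀ k ∈ K, ((0 : Z), k) ∈ B := by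
      intro k hk
      refine ⟨xbar, hxbC, hxbarF, hxbG, ?_, by simpa using hk⟩
      simpa using (Set.mem_neg.mp hxbS)
    have hck : ∀ k ∈ K, c ≤ h k := by
      intro k hk
      have h1 := hfB _ (hB0k k hk)
      rwa [hf, map_zero, zero_add] at h1
    have hc0 : c ≤ 0 := by simpa using hck 0 hK0
    have hstr : ∀ s ∈ interior S, ∀ k ∈ interior K, -(g s) - h k < c := by
      intro s hs k hk
      have hmem : ((-s, -k) : Z × Y) ∈ U := by
        rw [hUdef, Set.mem_prod]
        constructor
        · rw [Set.mem_neg, neg_neg]; exact hs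
        · rw [Set.mem_neg, neg_neg]; exact hk
      have h1 := hfU _ hmem
      rwa [hf, map_neg, map_neg] at h1
    obtain ⟨k₁, hk₁⟩ := hKint
    have hc0' : 0 ≤ c := by
      by_contra hcneg
      push_neg at hcneg
      have ht : ∀ t : ℝ, 0 < t → -(t * (g (-(G xh)) + h k₁)) < c := by
        intro t htpos
        have hs := cone_int_smul' hScone htpos hxhS'
        have hk := cone_int_smul' hKcone htpos hk₁
        have h5 := hstr _ hs _ hk
        rw [map_smul, map_smul] at h5
        simp only [smul_eq_mul] at h5
        have h6 : t * (g (-(G xh)) + h k₁) = t * g (-(G xh)) + t * h k₁ := mul_add _ _ _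
        linarith
      obtain ⟨t, htpos, hct⟩ := rkey3 (a := g (-(G xh)) + h k₁) hcneg
      have h7 := ht t htpos
      linarith
    have hc : c = 0 := le_antisymm hc0 hc0'
    have hpos : ∀ s ∈ interior S, ∀ k ∈ interior K, 0 < g s + h k := by
      intro s hs k hk
      have h1 := hstr s hs k hk
      rw [hc] at h1
      linarith
    have hhK : ∀ k ∈ K, 0 ≤ h k := fun k hk => hc ▸ hck k hk
    have hgintS : ∀ s ∈ interior S, 0 ≤ g s := by
      intro s hs
      by_contra hneg
      push_neg at hneg
      have hb0 : 0 ≤ h k₁ := hhK _ (interior_subset hk₁)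
      obtain ⟨t, htpos, hlt⟩ := rkey2 (b := h k₁) hneg hb0
      have h5 := hpos s hs _ (cone_int_smul' hKcone htpos hk₁)
      rw [map_smul] at h5
      simp only [smul_eq_mul] at h5
      linarith
    have hgS : ∀ s ∈ S, 0 ≤ g s := by
      intro s hs
      by_contra hneg
      push_neg at hneg
      have hgs₀ : 0 ≤ g (-(G xh)) := hgintS _ hxhS'
      obtain ⟨t, htpos, ht1, htd⟩ := rkey1 (a := g (-(G xh))) hneg hgs₀
      have hmem := hSconv.combo_interior_self_mem_interior hxhS' hs htpos
        (by linarith : (0:ℝ) ≤ 1 - t) (by ring)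
      have h5 := hgintS _ hmem
      rw [map_add, map_smul, map_smul] at h5
      simp only [smul_eq_mul] at h5
      have htd' : t * g (-(G xh)) - t * g s = -(g s) / 2 := by rw [← mul_sub]; exact htd
      nlinarith
    by_cases hdeg : ∃ k₀ ∈ interior K, h k₀ = 0
    · exfalso
      obtain ⟨k₀, hk₀, hk₀z⟩ := hdeg
      have hzero : ∀ y : Y, h y = 0 := by
        intro y
        have htend : Filter.Tendsto (fun ε : ℝ => k₀ + ε • y) (𝓝 0) (𝓝 k₀) := by
          have hcont : Continuous fun ε : ℝ => k₀ + ε • y :=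
            continuous_const.add (continuous_id.smul continuous_const)
          simpa using hcont.tendsto 0
        have h1 : ∀ᶠ ε : ℝ in 𝓝 0, k₀ + ε • y ∈ interior K :=
          htend (isOpen_interior.mem_nhds hk₀)
        have h2 : ∀ᶠ ε : ℝ in 𝓝 0, k₀ + (-ε) • y ∈ interior K := by
          have htend' : Filter.Tendsto (fun ε : ℝ => k₀ + (-ε) • y) (𝓝 0) (𝓝 k₀) := by
            have hcont' : Continuous fun ε : ℝ => k₀ + (-ε) • y :=
              continuous_const.add ((continuous_id.neg).smul continuous_const)
            simpa using hcont'.tendsto 0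
          exact htend' (isOpen_interior.mem_nhds hk₀)
        have h3 : ∀ᶠ ε : ℝ in 𝓝[>] (0:ℝ),
            (k₀ + ε • y ∈ interior K ∧ k₀ + (-ε) • y ∈ interior K) ∧ 0 < ε :=
          (((h1.and h2).filter_mono nhdsWithin_le_nhds).and self_mem_nhdsWithin)
        obtain ⟨ε, ⟨hεp, hεm⟩, hεpos⟩ := h3.exists
        have e1 := hhK _ (interior_subset hεp)
        have e2 := hhK _ (interior_subset hεm)
        rw [map_add, map_smul] at e1 e2
        simp only [smul_eq_mul, hk₀z, zero_add, neg_mul] at e1 e2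
        have h8 : ε * h y = 0 := le_antisymm (by linarith) (by linarith)
        rcases mul_eq_zero.mp h8 with h9 | h9
        · exact absurd h9 hεpos.ne'
        · exact h9
      have hmemB : ((G xh, F xh - F xbar) : Z × Y) ∈ B :=
        ⟨xh, hxhC, hxhF, hxhG, by simpa using hS0, by simpa using hK0⟩
      have hge := hfB _ hmemB
      rw [hf, hc] at hge
      simp only [hzero, add_zero] at hge
      have hlt : 0 < g (-(G xh)) + h k₀ := hpos _ hxhS' _ hk₀
      rw [hk₀z, add_zero, map_neg] at hlt
      linarith
    · push_neg at hdeg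
      have hintpos : ∀ k ∈ interior K, 0 < h k := fun k hk =>
        lt_of_le_of_ne (hhK k (interior_subset hk)) (Ne.symm (hdeg k hk))
      have hk₀ := hk₁
      set k₀ := k₁ with hk₀def
      have hk₀pos : 0 < h k₀ := hintpos _ hk₀
      set T : Z →L[ℝ] Y := (h k₀)⁻¹ • (g.smulRight k₀) with hTdef
      have hTapp : ∀ z, T z = ((h k₀)⁻¹ * g z) • k₀ := by
        intro z
        simp [hTdef, ContinuousLinearMap.smul_apply, ContinuousLinearMap.smulRight_apply,
          smul_smul]
      refine ⟨T, ?_, ?_⟩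
      · rintro _ ⟨s, hs, rfl⟩
        rw [hTapp]
        rcases eq_or_lt_of_le (hgS s hs) with heq | hlt
        · rw [← heq]; simpa using hK0
        · exact hKcone _ (mul_pos (inv_pos.mpr hk₀pos) hlt)
            ⟨k₀, interior_subset hk₀, rfl⟩
      · intro x hxC hxF hxG hcontra
        rw [Set.mem_neg] at hcontra
        have h1 : 0 < h (-(F x + T (G x) - F xbar)) := hintpos _ hcontra
        have hmemB : ((G x, F x - F xbar) : Z × Y) ∈ B :=
          ⟨x, hxC, hxF, hxG, by simpa using hS0, by simpa using hK0⟩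
        have h2 := hfB _ hmemB
        rw [hf, hc] at h2
        rw [map_neg, map_sub, map_add, hTapp, map_smul] at h1
        simp only [smul_eq_mul] at h1
        rw [map_sub] at h2
        have heq : (h k₀)⁻¹ * g (G x) * h k₀ = g (G x) := rkey4 (ne_of_gt hk₀pos)
        rw [heq] at h1
        linarith
  · -- easy direction
    rintro ⟨T, hTS, hT⟩ ⟨x, hxC, hxG, hxS, hxF, hxK⟩
    have hTGx : -(T (G x)) ∈ K := by
      have h1 : -(G x) ∈ S := Set.mem_neg.mp hxS
      have h2 := hTS ⟨_, h1, rfl⟩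
      simpa using h2
    have hxK' : -(F x - F xbar) ∈ interior K := Set.mem_neg.mp hxK
    have hsum : -(F x - F xbar) + -(T (G x)) ∈ interior K :=
      cone_int_add' hKconv hKcone hxK' hTGx
    apply hT x hxC hxF hxG
    rw [Set.mem_neg]
    have he : -(F x + T (G x) - F xbar) = -(F x - F xbar) + -(T (G x)) := by abel
    rw [he]
    exact hsum
end
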